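/- arXiv:math/0212166 — 4 statements merged into one kernel-verified Lean document; each statement's English description precedes it below -/
import Mathlib

section
/- Every Rosenthal basis {e_i} is subsymmetric, i.e., {e_i} is equivalent to every subsequence of itself. -/
open Finset

section Defs

variable {X Y : Type*} [NormedAddCommGroup X] [NormedSpace ℝ X]
  [NormedAddCommGroup Y] [NormedSpace ℝ Y]

/-- `e` is a (Schauder) basic sequence: all terms are nonzero and the
partial-sum projections are uniformly bounded. -/
def IsBasicSeq (e : ℕ → X) : Prop :=
  (∀ i, e i ≠ 0) ∧ ∃ K : ℝ, 1 ≤ K ∧ ∀ (a : ℕ → ℝ) (m n : ℕ), m ≤ n →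
    ‖∑ i ∈ Finset.range m, a i • e i‖ ≤ K * ‖∑ i ∈ Finset.range n, a i • e i‖

/-- `x` `C`-dominates `y` : `‖∑ aᵢ yᵢ‖ ≤ C • ‖∑ aᵢ xᵢ‖` for all finitely
supported scalar sequences. -/
def Dominates (C : ℝ) (x : ℕ → X) (y : ℕ → Y) : Prop :=
  ∀ (n : ℕ) (a : ℕ → ℝ),
    ‖∑ i ∈ Finset.range n, a i • y i‖ ≤ C * ‖∑ i ∈ Finset.range n, a i • x i‖

/-- `x` and `y` are `C`-equivalent basic sequences. -/
def SeqEquiv (C : ℝ) (x : ℕ → X) (y : ℕ → Y) : Prop :=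
  Dominates C x y ∧ Dominates C y x

/-- `x` and `y` are equivalent: `C`-equivalent for some `C ≥ 1`. -/
def EquivSeq (x : ℕ → X) (y : ℕ → Y) : Prop :=
  ∃ C : ℝ, 1 ≤ C ∧ SeqEquiv C x y

/-- `x` is a block sequence of `e`. -/
def IsBlockSeq (e x : ℕ → X) : Prop :=
  ∃ (A B : ℕ → ℕ) (c : ℕ → ℝ), (∀ n, A n < B n) ∧ (∀ n, B n ≤ A (n + 1)) ∧
    ∀ n, x n = ∑ i ∈ Finset.Ico (A n) (B n), c i • e i

/-- `x` is a normalized block basis of `e`. -/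
def IsNormalizedBlockSeq (e x : ℕ → X) : Prop :=
  IsBlockSeq e x ∧ ∀ n, ‖x n‖ = 1

/-- `x` is an identically distributed block sequence over `e`. -/
def IsIdentDistBlock (e x : ℕ → X) : Prop :=
  ∃ (k : ℕ) (r : ℕ → ℝ) (m : ℕ → ℕ), (∀ i, m i + k < m (i + 1)) ∧
    ∀ i, x i = ∑ j ∈ Finset.range (k + 1), r j • e (m i + j)

/-- Rosenthal's property: every normalized block basis has a subsequence
equivalent to `e`. -/
def HasRosenthalProperty (e : ℕ → X) : Prop :=
  ∀ x : ℕ → X, IsNormalizedBlockSeq e x →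
    ∃ f : ℕ → ℕ, StrictMono f ∧ EquivSeq (x ∘ f) e

/-- `e` is a Rosenthal basis of the space `X`. -/
def IsRosenthalBasis (e : ℕ → X) : Prop :=
  IsBasicSeq e ∧ (∀ i, ‖e i‖ = 1) ∧
    Dense (Submodule.span ℝ (Set.range e) : Set X) ∧
    HasRosenthalProperty e

/-- sup-norm of the first `n` coordinates (the `c₀`-norm). -/
noncomputable def supNorm (n : ℕ) (a : ℕ → ℝ) : ℝ :=
  ((Finset.range n).sup fun i => ‖a i‖₊ : NNReal)

/-- `ℓ_p`-norm of the first `n` coordinates. -/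
noncomputable def lpSumNorm (p : ℝ) (n : ℕ) (a : ℕ → ℝ) : ℝ :=
  (∑ i ∈ Finset.range n, |a i| ^ p) ^ (1 / p)

/-- `e` is equivalent to the unit vector basis of `c₀`. -/
def EquivToC0Basis (e : ℕ → X) : Prop :=
  ∃ C : ℝ, 1 ≤ C ∧ ∀ (n : ℕ) (a : ℕ → ℝ),
    supNorm n a ≤ C * ‖∑ i ∈ Finset.range n, a i • e i‖ ∧
    ‖∑ i ∈ Finset.range n, a i • e i‖ ≤ C * supNorm n a

/-- `e` is equivalent to the unit vector basis of `ℓ_p`. -/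
def EquivToLpBasis (p : ℝ) (e : ℕ → X) : Prop :=
  ∃ C : ℝ, 1 ≤ C ∧ ∀ (n : ℕ) (a : ℕ → ℝ),
    lpSumNorm p n a ≤ C * ‖∑ i ∈ Finset.range n, a i • e i‖ ∧
    ‖∑ i ∈ Finset.range n, a i • e i‖ ≤ C * lpSumNorm p n a

/-- `e` is invariant under spreading (1-equivalent to all its subsequences). -/
def InvariantUnderSpreading (e : ℕ → X) : Prop :=
  ∀ f : ℕ → ℕ, StrictMono f → ∀ (n : ℕ) (a : ℕ → ℝ),
    ‖∑ i ∈ Finset.range n, a i • e (f i)‖ = ‖∑ i ∈ Finset.range n, a i • e i‖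

/-- `e` is suppression unconditional. -/
def SuppressionUnconditional (e : ℕ → X) : Prop :=
  ∀ (s t : Finset ℕ), s ⊆ t → ∀ a : ℕ → ℝ,
    ‖∑ i ∈ s, a i • e i‖ ≤ ‖∑ i ∈ t, a i • e i‖

/-- `e` is 1-unconditional. -/
def OneUnconditional (e : ℕ → X) : Prop :=
  ∀ ε : ℕ → ℝ, (∀ i, ε i = 1 ∨ ε i = -1) → ∀ (n : ℕ) (a : ℕ → ℝ),
    ‖∑ i ∈ Finset.range n, (ε i * a i) • e i‖ = ‖∑ i ∈ Finset.range n, a i • e i‖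

/-- `x` is seminormalized. -/
def Seminormalized (x : ℕ → X) : Prop :=
  ∃ c C : ℝ, 0 < c ∧ c < C ∧ ∀ i, c < ‖x i‖ ∧ ‖x i‖ < C

/-- `x` generates the spreading model `xt`. -/
def GeneratesSpreadingModel (x : ℕ → X) (xt : ℕ → Y) : Prop :=
  ∀ (k : ℕ) (r : ℕ → ℝ) (ε : ℝ), 0 < ε → ∃ N : ℕ, ∀ l : ℕ → ℕ,
    StrictMono l → N < l 0 →
    |‖∑ i ∈ Finset.range (k + 1), r i • x (l i)‖ -
      ‖∑ i ∈ Finset.range (k + 1), r i • xt i‖| < ε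

/-- `x` generates a spreading model. -/
def GeneratesASpreadingModel (x : ℕ → X) : Prop :=
  ∀ (k : ℕ) (r : ℕ → ℝ), ∃ t : ℝ, ∀ ε : ℝ, 0 < ε → ∃ N : ℕ, ∀ l : ℕ → ℕ,
    StrictMono l → N < l 0 →
    |‖∑ i ∈ Finset.range (k + 1), r i • x (l i)‖ - t| < ε

/-- the spreading models generated by `x` and `y` are equivalent. -/
def SpreadingModelsEquiv (x y : ℕ → X) : Prop :=
  ∃ C : ℝ, 1 ≤ C ∧ ∀ k : ℕ, ∃ N : ℕ, ∀ l : ℕ → ℕ, StrictMono l → N < l 0 →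
    ∀ a : ℕ → ℝ,
      ‖∑ i ∈ Finset.range (k + 1), a i • y (l i)‖ ≤
          C * ‖∑ i ∈ Finset.range (k + 1), a i • x (l i)‖ ∧
      ‖∑ i ∈ Finset.range (k + 1), a i • x (l i)‖ ≤
          C * ‖∑ i ∈ Finset.range (k + 1), a i • y (l i)‖

/-- `x` is weakly null. -/
def WeaklyNull (x : ℕ → X) : Prop :=
  ∀ φ : StrongDual ℝ X, Filter.Tendsto (fun i => φ (x i)) Filter.atTop (nhds 0)

/-- `x` is subsymmetric: equivalent to all of its subsequences. -/
def Subsymmetric (x : ℕ → X) : Prop :=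
  ∀ f : ℕ → ℕ, StrictMono f → EquivSeq (x ∘ f) x

/-- concatenation of the first `m` terms of `a` with `x`. -/
def concatSeq (m : ℕ) (a x : ℕ → X) : ℕ → X :=
  fun i => if i < m then a i else x (i - m)

end Defs



namespace S2

noncomputable def pad (a : ℕ → ℝ) (k : ℕ → ℕ) (n : ℕ) : ℕ → ℝ :=
  fun j => ∑ i ∈ (Finset.range n).filter (fun i => k i = j), a i

lemma sum_pad {X : Type*} [AddCommMonoid X] [Module ℝ X] (u : ℕ → X) (a : ℕ → ℝ)
    {k : ℕ → ℕ} (hk : StrictMono k) (n : ℕ) :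
    ∑ j ∈ Finset.range (k n), pad a k n j • u j = ∑ i ∈ Finset.range n, a i • u (k i) := by
  unfold pad
  have h1 : ∀ j ∈ Finset.range (k n),
      (∑ i ∈ (Finset.range n).filter (fun i => k i = j), a i) • u j
        = ∑ i ∈ Finset.range n, (if k i = j then a i • u j else 0) := by
    intro j _
    rw [Finset.sum_smul, Finset.sum_filter]
  rw [Finset.sum_congr rfl h1, Finset.sum_comm]
  refine Finset.sum_congr rfl ?_
  intro i hi
  have hmem : k i ∈ Finset.range (k n) := by
    simp only [Finset.mem_range] at hi ⊢; exact hk hi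
  rw [Finset.sum_ite_eq (Finset.range (k n)) (k i) (fun j => a i • u j), if_pos hmem]

lemma pad_apply (a : ℕ → ℝ) {k : ℕ → ℕ} (hk : StrictMono k) {n m : ℕ} (hm : m < n) :
    pad a k n (k m) = a m := by
  unfold pad
  have h2 : (Finset.range n).filter (fun i => k i = k m) = {m} := by
    ext i
    simp only [Finset.mem_filter, Finset.mem_range, Finset.mem_singleton]
    constructor
    · rintro ⟨_, h⟩; exact hk.injective h
    · rintro rfl; exact ⟨hm, rfl⟩
  rw [h2, Finset.sum_singleton]

variable {X : Type*} [NormedAddCommGroup X] [NormedSpace ℝ X]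

/-- finite-dimensional two-sided equivalence predicate -/
def GoodF (e : ℕ → X) (C : ℝ) (h : ℕ → ℕ) (n : ℕ) : Prop :=
  ∀ a : ℕ → ℝ,
    ‖∑ i ∈ Finset.range n, a i • e (h i)‖ ≤ C * ‖∑ i ∈ Finset.range n, a i • e i‖ ∧
    ‖∑ i ∈ Finset.range n, a i • e i‖ ≤ C * ‖∑ i ∈ Finset.range n, a i • e (h i)‖

def Good (e : ℕ → X) (C : ℝ) (h : ℕ → ℕ) : Prop := ∀ n, GoodF e C h n

lemma GoodF.monoC {e : ℕ → X} {C C' : ℝ} {h n} (hg : GoodF e C h n) (hCC : C ≤ C') :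
    GoodF e C' h n := by
  intro a
  obtain ⟨h1, h2⟩ := hg a
  constructor
  · exact h1.trans (mul_le_mul_of_nonneg_right hCC (norm_nonneg _))
  · exact h2.trans (mul_le_mul_of_nonneg_right hCC (norm_nonneg _))

lemma GoodF.congr {e : ℕ → X} {C : ℝ} {h h' : ℕ → ℕ} {n : ℕ}
    (hg : GoodF e C h n) (hhh : ∀ i < n, h i = h' i) : GoodF e C h' n := by
  intro a
  have : ∑ i ∈ Finset.range n, a i • e (h' i) = ∑ i ∈ Finset.range n, a i • e (h i) := by
    refine Finset.sum_congr rfl fun i hi => ?_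
    rw [hhh i (Finset.mem_range.1 hi)]
  rw [this]; exact hg a

lemma GoodF.trunc {e : ℕ → X} {C : ℝ} {h : ℕ → ℕ} {n m : ℕ}
    (hg : GoodF e C h n) (hmn : m ≤ n) : GoodF e C h m := by
  intro a
  classical
  set a' : ℕ → ℝ := fun i => if i < m then a i else 0 with ha'
  have key : ∀ u : ℕ → X, ∑ i ∈ Finset.range n, a' i • u i = ∑ i ∈ Finset.range m, a i • u i := by
    intro u
    rw [← Finset.sum_subset (Finset.range_subset_range.2 hmn)]
    · refine Finset.sum_congr rfl fun i hi => ?_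
      simp only [ha', if_pos (Finset.mem_range.1 hi)]
    · intro i _ hi
      simp only [ha', if_neg (fun h' => hi (Finset.mem_range.2 h')), zero_smul]
  have := hg a'
  rw [key (fun i => e (h i)), key e] at this
  exact this
lemma coeff_bound {e : ℕ → X} {K : ℝ} (hnorm : ∀ i, ‖e i‖ = 1)
    (hKb : ∀ (a : ℕ → ℝ) (m n : ℕ), m ≤ n →
      ‖∑ i ∈ Finset.range m, a i • e i‖ ≤ K * ‖∑ i ∈ Finset.range n, a i • e i‖)
    (a : ℕ → ℝ) {m n : ℕ} (hm : m < n) :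
    |a m| ≤ 2 * K * ‖∑ i ∈ Finset.range n, a i • e i‖ := by
  have h1 : ‖∑ i ∈ Finset.range (m+1), a i • e i‖ ≤ K * ‖∑ i ∈ Finset.range n, a i • e i‖ :=
    hKb a (m+1) n hm
  have h2 : ‖∑ i ∈ Finset.range m, a i • e i‖ ≤ K * ‖∑ i ∈ Finset.range n, a i • e i‖ :=
    hKb a m n hm.le
  have h3 : a m • e m = ∑ i ∈ Finset.range (m+1), a i • e i - ∑ i ∈ Finset.range m, a i • e i := by
    rw [Finset.sum_range_succ]; abel
  have h4 : |a m| = ‖a m • e m‖ := by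
    rw [norm_smul, hnorm m, mul_one, Real.norm_eq_abs]
  rw [h4, h3]
  calc ‖_ - _‖ ≤ ‖∑ i ∈ Finset.range (m+1), a i • e i‖ + ‖∑ i ∈ Finset.range m, a i • e i‖ :=
        norm_sub_le _ _
    _ ≤ K * ‖∑ i ∈ Finset.range n, a i • e i‖ + K * ‖∑ i ∈ Finset.range n, a i • e i‖ :=
        add_le_add h1 h2
    _ = 2 * K * ‖∑ i ∈ Finset.range n, a i • e i‖ := by ring


lemma coeff_bound_sub {e : ℕ → X} {K : ℝ} (hnorm : ∀ i, ‖e i‖ = 1)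
    (hKb : ∀ (a : ℕ → ℝ) (m n : ℕ), m ≤ n →
      ‖∑ i ∈ Finset.range m, a i • e i‖ ≤ K * ‖∑ i ∈ Finset.range n, a i • e i‖)
    {h : ℕ → ℕ} (hh : StrictMono h) (a : ℕ → ℝ) (m n : ℕ) (hm : m < n) :
    |a m| ≤ 2 * K * ‖∑ i ∈ Finset.range n, a i • e (h i)‖ := by
  rw [← sum_pad e a hh n]
  have hb := coeff_bound hnorm hKb (pad a h n) (hh hm)
  rwa [pad_apply a hh hm] at hb



lemma good_subst {e : ℕ → X} {C : ℝ} {h : ℕ → ℕ} (hg : Good e C h)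
    {k : ℕ → ℕ} (hk : StrictMono k) (n : ℕ) (a : ℕ → ℝ) :
    ‖∑ i ∈ Finset.range n, a i • e (h (k i))‖ ≤ C * ‖∑ i ∈ Finset.range n, a i • e (k i)‖ ∧
    ‖∑ i ∈ Finset.range n, a i • e (k i)‖ ≤ C * ‖∑ i ∈ Finset.range n, a i • e (h (k i))‖ := by
  have h1 := sum_pad (fun j => e (h j)) a hk n
  have h2 := sum_pad e a hk n
  have h3 := hg (k n) (pad a k n)
  rw [h1, h2] at h3
  exact h3


lemma good_finite_change {e : ℕ → X} {K : ℝ} (hK1 : 1 ≤ K)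
    (hcb : ∀ (h : ℕ → ℕ), StrictMono h → ∀ (a : ℕ → ℝ) (m n : ℕ), m < n →
      |a m| ≤ 2 * K * ‖∑ i ∈ Finset.range n, a i • e (h i)‖)
    {h h' : ℕ → ℕ} (hh : StrictMono h) (hh' : StrictMono h')
    {t : ℕ} (hag : ∀ i, t ≤ i → h i = h' i)
    (hnorm : ∀ i, ‖e i‖ = 1)
    {C : ℝ} (hC : 0 ≤ C) (hg : Good e C h) :
    Good e (C * (1 + 4 * K * t)) h' := by
  intro n a
  classical
  set S := ∑ i ∈ Finset.range n, a i • e (h i) with hS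
  set S' := ∑ i ∈ Finset.range n, a i • e (h' i) with hS'
  set E := ∑ i ∈ Finset.range n, a i • e i with hE
  have hKpos : (0:ℝ) < K := lt_of_lt_of_le one_pos hK1
  have ht0 : (0:ℝ) ≤ (t:ℝ) := Nat.cast_nonneg t
  have hdiff : ∀ B : ℝ, 0 ≤ B → (∀ m < n, |a m| ≤ 2 * K * B) → ‖S' - S‖ ≤ 4 * K * t * B := by
    intro B hB0 hB
    have h0 : S' - S = ∑ i ∈ (Finset.range n).filter (fun i => i < t),
        (a i • e (h' i) - a i • e (h i)) := by
      rw [hS, hS', ← Finset.sum_sub_distrib]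
      rw [Finset.sum_filter_of_ne]
      intro i _ hne
      by_contra hit
      push_neg at hit
      rw [hag i hit, sub_self] at hne
      exact hne rfl
    rw [h0]
    have hcard : ((Finset.range n).filter (fun i => i < t)).card ≤ t := by
      calc ((Finset.range n).filter (fun i => i < t)).card
          ≤ (Finset.range t).card := by
            apply Finset.card_le_card
            intro i hi
            simp only [Finset.mem_filter] at hi
            exact Finset.mem_range.2 hi.2
        _ = t := Finset.card_range t
    calc ‖∑ i ∈ (Finset.range n).filter (fun i => i < t), (a i • e (h' i) - a i • e (h i))‖
        ≤ ∑ i ∈ (Finset.range n).filter (fun i => i < t), ‖a i • e (h' i) - a i • e (h i)‖ :=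
          norm_sum_le _ _
      _ ≤ ∑ _i ∈ (Finset.range n).filter (fun i => i < t), (4 * K * B) := by
          apply Finset.sum_le_sum
          intro i hi
          simp only [Finset.mem_filter, Finset.mem_range] at hi
          have h1 : ‖a i • e (h' i) - a i • e (h i)‖ ≤ |a i| + |a i| := by
            calc ‖a i • e (h' i) - a i • e (h i)‖
                ≤ ‖a i • e (h' i)‖ + ‖a i • e (h i)‖ := norm_sub_le _ _
              _ = |a i| + |a i| := by
                  simp [norm_smul, hnorm, Real.norm_eq_abs]
          have h2 := hB i hi.1
          calc ‖a i • e (h' i) - a i • e (h i)‖ ≤ |a i| + |a i| := h1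
            _ ≤ 2 * K * B + 2 * K * B := add_le_add h2 h2
            _ = 4 * K * B := by ring
      _ = ((Finset.range n).filter (fun i => i < t)).card * (4 * K * B) := by
          rw [Finset.sum_const, nsmul_eq_mul]
      _ ≤ t * (4 * K * B) := by
          apply mul_le_mul_of_nonneg_right
          · exact_mod_cast hcard
          · positivity
      _ = 4 * K * t * B := by ring
  have hB_S : ∀ m < n, |a m| ≤ 2 * K * ‖S‖ := fun m hm => hcb h hh a m n hm
  have hB_S' : ∀ m < n, |a m| ≤ 2 * K * ‖S'‖ := fun m hm => hcb h' hh' a m n hm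
  have d1 : ‖S' - S‖ ≤ 4 * K * t * ‖S‖ := hdiff ‖S‖ (norm_nonneg _) hB_S
  have d2 : ‖S' - S‖ ≤ 4 * K * t * ‖S'‖ := hdiff ‖S'‖ (norm_nonneg _) hB_S'
  have g1 : ‖S‖ ≤ C * ‖E‖ := (hg n a).1
  have g2 : ‖E‖ ≤ C * ‖S‖ := (hg n a).2
  have habs := abs_le.mp (abs_norm_sub_norm_le S' S)
  have hpos : (0:ℝ) ≤ 1 + 4 * K * t := by positivity
  constructor
  · have e1 : ‖S'‖ ≤ (1 + 4 * K * t) * ‖S‖ := by nlinarith [habs.2]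
    calc ‖S'‖ ≤ (1 + 4 * K * t) * ‖S‖ := e1
      _ ≤ (1 + 4 * K * t) * (C * ‖E‖) := mul_le_mul_of_nonneg_left g1 hpos
      _ = C * (1 + 4 * K * t) * ‖E‖ := by ring
  · have e2 : ‖S‖ ≤ (1 + 4 * K * t) * ‖S'‖ := by nlinarith [habs.1]
    calc ‖E‖ ≤ C * ‖S‖ := g2
      _ ≤ C * ((1 + 4 * K * t) * ‖S'‖) := mul_le_mul_of_nonneg_left e2 hC
      _ = C * (1 + 4 * K * t) * ‖S'‖ := by ring



noncomputable def enumOf (u : Finset ℕ) : ℕ → ℕ :=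
  fun i => if h : i < u.card then u.orderEmbOfFin rfl ⟨i, h⟩ else 0

lemma enumOf_mem {u : Finset ℕ} {i : ℕ} (hi : i < u.card) : enumOf u i ∈ u := by
  rw [enumOf, dif_pos hi]
  exact Finset.orderEmbOfFin_mem u rfl _

lemma enumOf_lt {u : Finset ℕ} {i j : ℕ} (hij : i < j) (hj : j < u.card) :
    enumOf u i < enumOf u j := by
  rw [enumOf, enumOf, dif_pos (hij.trans hj), dif_pos hj]
  exact (u.orderEmbOfFin rfl).strictMono (by exact hij)

lemma card_image_strictMono {N : ℕ → ℕ} (hN : StrictMono N) (n : ℕ) :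
    (Finset.image N (Finset.range n)).card = n := by
  rw [Finset.card_image_of_injective _ hN.injective, Finset.card_range]

lemma enumOf_image {N : ℕ → ℕ} (hN : StrictMono N) {n i : ℕ} (hi : i < n) :
    enumOf (Finset.image N (Finset.range n)) i = N i := by
  set u := Finset.image N (Finset.range n) with hu
  have hcard : u.card = n := card_image_strictMono hN n
  have hfs : ∀ x : Fin u.card, N x.val ∈ u := by
    intro x
    exact Finset.mem_image.2 ⟨x.val, Finset.mem_range.2 (hcard ▸ x.isLt), rfl⟩
  have hmono : StrictMono (fun x : Fin u.card => N x.val) := by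
    intro x y hxy; exact hN hxy
  have huniq := Finset.orderEmbOfFin_unique (rfl : u.card = u.card) hfs hmono
  have hi' : i < u.card := hcard ▸ hi
  rw [enumOf, dif_pos hi', ← congrFun huniq ⟨i, hi'⟩]

lemma image_enumOf (u : Finset ℕ) :
    Finset.image (enumOf u) (Finset.range u.card) = u := by
  apply Finset.eq_of_subset_of_card_le
  · intro x hx
    obtain ⟨i, hi, rfl⟩ := Finset.mem_image.1 hx
    exact enumOf_mem (Finset.mem_range.1 hi)
  · have hinj : Set.InjOn (enumOf u) ↑(Finset.range u.card) := by
      intro i hi j hj hij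
      by_contra hne
      rcases lt_trichotomy i j with h | h | h
      · exact absurd hij (enumOf_lt h (Finset.mem_range.1 (Finset.mem_coe.1 hj))).ne
      · exact hne h
      · exact absurd hij.symm (enumOf_lt h (Finset.mem_range.1 (Finset.mem_coe.1 hi))).ne
    rw [Finset.card_image_of_injOn hinj, Finset.card_range]

lemma initseg_eq_image {N : ℕ → ℕ} (hN : StrictMono N) {u : Finset ℕ}
    (h1 : ↑u ⊆ Set.range N) (h2 : ∀ x ∈ Set.range N, x ∉ u → ∀ y ∈ u, y < x) :
    u = Finset.image N (Finset.range u.card) := by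
  have hsub : u ⊆ Finset.image N (Finset.range u.card) := by
    intro x hx
    obtain ⟨j, rfl⟩ := h1 hx
    have himg : Finset.image N (Finset.range (j+1)) ⊆ u := by
      intro y hy
      obtain ⟨i, hi, rfl⟩ := Finset.mem_image.1 hy
      by_contra hyu
      have hlt := h2 (N i) ⟨i, rfl⟩ hyu (N j) hx
      have hle : N i ≤ N j := hN.monotone (Nat.lt_succ_iff.1 (Finset.mem_range.1 hi))
      exact absurd hlt (not_lt.2 hle)
    have hcard : j + 1 ≤ u.card := by
      calc j + 1 = (Finset.image N (Finset.range (j+1))).card :=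
            (card_image_strictMono hN (j+1)).symm
        _ ≤ u.card := Finset.card_le_card himg
    exact Finset.mem_image.2 ⟨j, Finset.mem_range.2 hcard, rfl⟩
  exact Finset.eq_of_subset_of_card_le hsub
    (le_of_eq (card_image_strictMono hN u.card))



end S2


namespace S2C

def InitSegOf (w : Finset ℕ) (L : Set ℕ) : Prop :=
  ↑w ⊆ L ∧ ∀ x ∈ L, x ∉ w → ∀ y ∈ w, y < x

def Accepts (F : Finset ℕ → Prop) (M : Set ℕ) (v : Finset ℕ) : Prop :=
  ∀ L : Set ℕ, L.Infinite → ↑v ⊆ L →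
    (∀ x ∈ L, x ∉ v → x ∈ M ∧ ∀ y ∈ v, y < x) →
    ∃ w : Finset ℕ, InitSegOf w L ∧ F w

def Rejects (F : Finset ℕ → Prop) (M : Set ℕ) (v : Finset ℕ) : Prop :=
  ∀ M' ⊆ M, M'.Infinite → ¬ Accepts F M' v

lemma accepts_mono {F : Finset ℕ → Prop} {M M' : Set ℕ} {v : Finset ℕ}
    (h : M' ⊆ M) (ha : Accepts F M v) : Accepts F M' v :=
  fun L hL hv hup => ha L hL hv (fun x hx hnx => ⟨h (hup x hx hnx).1, (hup x hx hnx).2⟩)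

lemma rejects_mono {F : Finset ℕ → Prop} {M M' : Set ℕ} {v : Finset ℕ}
    (h : M' ⊆ M) (hr : Rejects F M v) : Rejects F M' v :=
  fun M'' h'' hinf => hr M'' (h''.trans h) hinf

lemma accepts_of_F {F : Finset ℕ → Prop} {M : Set ℕ} {v : Finset ℕ} (hF : F v) :
    Accepts F M v :=
  fun _L _ hv hup => ⟨v, ⟨hv, fun x hx hnx y hy => (hup x hx hnx).2 y hy⟩, hF⟩

lemma infinite_above {M : Set ℕ} (hM : M.Infinite) (m : ℕ) : {x ∈ M | m < x}.Infinite := by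
  have h : {x ∈ M | m < x} = M \ {x | x ≤ m} := by
    ext x; simp [Set.mem_diff, not_le]
  rw [h]
  exact hM.diff (Set.finite_le_nat m)

lemma dstep_exists (F : Finset ℕ → Prop) (v : Finset ℕ) {N : Set ℕ} (hN : N.Infinite) :
    ∃ (m : ℕ) (N' : Set ℕ) (flag : Bool), m ∈ N ∧ N' ⊆ N ∧ (∀ x ∈ N', m < x) ∧ N'.Infinite ∧
      (if flag then Rejects F N' (insert m v) else Accepts F N' (insert m v)) := by
  classical
  set m := sInf N with hmdef
  have hm : m ∈ N := Nat.sInf_mem hN.nonempty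
  have hNp : {x ∈ N | m < x}.Infinite := infinite_above hN m
  by_cases hc : ∃ R, R ⊆ {x ∈ N | m < x} ∧ R.Infinite ∧ Rejects F R (insert m v)
  · obtain ⟨R, hR1, hR2, hR3⟩ := hc
    exact ⟨m, R, true, hm, fun x hx => (hR1 hx).1, fun x hx => (hR1 hx).2, hR2, by simpa using hR3⟩
  · have hnr : ¬ Rejects F {x ∈ N | m < x} (insert m v) :=
      fun hrej => hc ⟨{x ∈ N | m < x}, subset_rfl, hNp, hrej⟩
    rw [Rejects] at hnr
    push_neg at hnr
    obtain ⟨A, hA1, hA2, hA3⟩ := hnr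
    exact ⟨m, A, false, hm, fun x hx => (hA1 hx).1, fun x hx => (hA1 hx).2, hA2, by simpa using hA3⟩

lemma exists_reject_ext (F : Finset ℕ → Prop) {M : Set ℕ} {v : Finset ℕ}
    (hM : M.Infinite) (hrej : Rejects F M v) :
    ∃ M', M' ⊆ M ∧ M'.Infinite ∧ ∀ m ∈ M', Rejects F M' (insert m v) := by
  classical
  have hstep := fun (N : Set ℕ) (hN : N.Infinite) => dstep_exists F v hN
  choose mS NS flagS hmem hsub habove hinf hflag using hstep
  let seq : ℕ → {N : Set ℕ // N.Infinite ∧ N ⊆ M} := fun k =>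
    Nat.rec ⟨M, hM, subset_rfl⟩
      (fun _ p => ⟨NS p.1 p.2.1, hinf p.1 p.2.1, (hsub p.1 p.2.1).trans p.2.2⟩) k
  let mm : ℕ → ℕ := fun k => mS (seq k).1 (seq k).2.1
  let fl : ℕ → Bool := fun k => flagS (seq k).1 (seq k).2.1
  have hseq_succ : ∀ k, (seq (k+1)).1 = NS (seq k).1 (seq k).2.1 := fun k => rfl
  have habove' : ∀ k, ∀ x ∈ (seq (k+1)).1, mm k < x := fun k => by
    rw [hseq_succ]; exact habove _ _
  have hmm_mem : ∀ k, mm k ∈ (seq k).1 := fun k => hmem _ _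
  have hseq_mono : ∀ j k, j ≤ k → (seq k).1 ⊆ (seq j).1 := by
    intro j k hjk
    induction k with
    | zero => cases Nat.le_zero.1 hjk; exact subset_rfl
    | succ n ih =>
      rcases Nat.lt_or_ge j (n+1) with h | h
      · have h1 : (seq (n+1)).1 ⊆ (seq n).1 := by
          rw [hseq_succ]; exact hsub _ _
        exact h1.trans (ih (Nat.lt_succ_iff.1 h))
      · have : j = n + 1 := le_antisymm hjk h
        subst this; exact subset_rfl
  have hmm_lt : ∀ j k, j < k → mm j < mm k := by
    intro j k hjk
    exact habove' j (mm k) (hseq_mono (j+1) k hjk (hmm_mem k))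
  have hmm_sm : StrictMono mm := fun j k h => hmm_lt j k h
  have hmm_M : ∀ k, mm k ∈ M := fun k => (seq k).2.2 (hmm_mem k)
  have hflag' : ∀ k, if fl k then Rejects F (seq (k+1)).1 (insert (mm k) v)
      else Accepts F (seq (k+1)).1 (insert (mm k) v) := by
    intro k
    have := hflag (seq k).1 (seq k).2.1
    rw [hseq_succ]
    exact this
  by_cases hinfacc : {k | fl k = false}.Infinite
  · exfalso
    refine hrej (mm '' {k | fl k = false}) ?_ ?_ ?_
    · rintro x ⟨k, _, rfl⟩; exact hmm_M k
    · exact hinfacc.image (Set.injOn_of_injective hmm_sm.injective)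
    · intro L hL hvL hup
      have hdiff_inf : (L \ ↑v).Infinite := hL.diff v.finite_toSet
      have hx₀ : sInf (L \ ↑v) ∈ L \ ↑v := Nat.sInf_mem hdiff_inf.nonempty
      obtain ⟨k₀, hk₀f, hk₀e⟩ := (hup _ hx₀.1 hx₀.2).1
      have hacc : Accepts F (seq (k₀+1)).1 (insert (mm k₀) v) := by
        have h := hflag' k₀
        rw [hk₀f] at h
        simpa using h
      apply hacc L hL
      · rw [Finset.coe_insert]
        exact Set.insert_subset (hk₀e ▸ hx₀.1) hvL
      · intro x hx hnx
        have hxv : x ∉ v := fun hxv => hnx (Finset.mem_insert_of_mem hxv)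
        have hxm : x ≠ mm k₀ := fun hxm => hnx (hxm ▸ Finset.mem_insert_self _ _)
        obtain ⟨j, hjf, hje⟩ := (hup x hx hxv).1
        have hge : mm k₀ ≤ x := hk₀e ▸ Nat.sInf_le ⟨hx, hxv⟩
        have hgt : mm k₀ < x := lt_of_le_of_ne hge (fun h => hxm h.symm)
        have hjk : k₀ < j := by
          rw [← hje] at hgt
          exact hmm_sm.lt_iff_lt.1 hgt
        constructor
        · exact hje ▸ hseq_mono (k₀+1) j hjk (hmm_mem j)
        · intro y hy
          rcases Finset.mem_insert.1 hy with rfl | hyv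
          · exact hgt
          · exact (hup x hx hxv).2 y hyv
  · -- finitely many accepting stages
    have hfin : {k | fl k = false}.Finite := Set.not_infinite.1 hinfacc
    obtain ⟨b, hb⟩ := hfin.bddAbove
    set k₀ := b + 1 with hk₀def
    have htrue : ∀ k, k₀ ≤ k → fl k = true := by
      intro k hk
      by_contra hfk
      have : k ∈ {k | fl k = false} := by
        simp only [Set.mem_setOf_eq]
        simpa using hfk
      have := hb this
      omega
    refine ⟨mm '' {k | k₀ ≤ k}, ?_, ?_, ?_⟩
    · rintro x ⟨k, _, rfl⟩; exact hmm_M k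
    · apply Set.infinite_of_not_bddAbove
      rintro ⟨c, hc⟩
      have h1 := hc ⟨max k₀ (c+1), le_max_left k₀ (c+1), rfl⟩
      have h2 : max k₀ (c+1) ≤ mm (max k₀ (c+1)) := hmm_sm.le_apply
      change mm (max k₀ (c+1)) ≤ c at h1
      omega
    · rintro x ⟨k, hk, rfl⟩
      intro A hA_sub hA_inf hA_acc
      have hA'_inf : {y ∈ A | mm k < y}.Infinite := infinite_above hA_inf (mm k)
      have hA'_acc : Accepts F {y ∈ A | mm k < y} (insert (mm k) v) :=
        accepts_mono (fun y hy => hy.1) hA_acc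
      have hA'_sub : {y ∈ A | mm k < y} ⊆ (seq (k+1)).1 := by
        rintro y ⟨hyA, hygt⟩
        obtain ⟨j, hj, hje⟩ := hA_sub hyA
        have hjk : k < j := by
          rw [← hje] at hygt
          exact hmm_sm.lt_iff_lt.1 hygt
        exact hje ▸ hseq_mono (k+1) j hjk (hmm_mem j)
      have hrej' : Rejects F (seq (k+1)).1 (insert (mm k) v) := by
        have h := hflag' k
        rw [htrue k hk] at h
        simpa using h
      exact hrej' _ hA'_sub hA'_inf hA'_acc

end S2C

namespace S2C

lemma rejects_ext_list (F : Finset ℕ → Prop) :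
    ∀ (vs : List (Finset ℕ)) {M : Set ℕ}, M.Infinite → (∀ v ∈ vs, Rejects F M v) →
    ∃ M', M' ⊆ M ∧ M'.Infinite ∧ ∀ v ∈ vs, ∀ m ∈ M', Rejects F M' (insert m v) := by
  intro vs
  induction vs with
  | nil =>
    intro M hM _
    exact ⟨M, subset_rfl, hM, by simp⟩
  | cons v vs ih =>
    intro M hM hr
    obtain ⟨M₁, h1, h2, h3⟩ := exists_reject_ext F hM (hr v (by simp))
    obtain ⟨M', h4, h5, h6⟩ := ih h2 (fun w hw => rejects_mono h1 (hr w (by simp [hw])))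
    refine ⟨M', h4.trans h1, h5, ?_⟩
    intro w hw m hm
    rcases List.mem_cons.1 hw with rfl | hw'
    · exact rejects_mono h4 (h3 m (h4 hm))
    · exact h6 w hw' m hm

theorem nashWilliams (F : Finset ℕ → Prop) {M : Set ℕ} (hM : M.Infinite) :
    (∃ M', M' ⊆ M ∧ M'.Infinite ∧ ∀ L ⊆ M', L.Infinite → ∃ w, InitSegOf w L ∧ F w) ∨
    (∃ M', M' ⊆ M ∧ M'.Infinite ∧ ∀ v : Finset ℕ, ↑v ⊆ M' → ¬ F v) := by
  classical
  by_cases hacc : ∃ M', M' ⊆ M ∧ M'.Infinite ∧ Accepts F M' ∅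
  · left
    obtain ⟨M', h1, h2, h3⟩ := hacc
    refine ⟨M', h1, h2, ?_⟩
    intro L hLsub hLinf
    exact h3 L hLinf (by simp) (fun x hx _ => ⟨hLsub hx, by simp⟩)
  · right
    have hrej : Rejects F M ∅ := by
      intro M' h1 h2 h3
      exact hacc ⟨M', h1, h2, h3⟩
    have step : ∀ (P : Finset ℕ) (N : Set ℕ), N.Infinite → (∀ v ∈ P.powerset, Rejects F N v) →
        ∃ (m : ℕ) (N' : Set ℕ), m ∈ N ∧ N' ⊆ N ∧ N'.Infinite ∧ (∀ x ∈ N', m < x) ∧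
          (∀ v ∈ (insert m P).powerset, Rejects F N' v) := by
      intro P N hN hrejP
      obtain ⟨N₁, hs1, hs2, hs3⟩ := rejects_ext_list F P.powerset.toList hN
        (fun v hv => hrejP v (by simpa using hv))
      have hmN₁ : sInf N₁ ∈ N₁ := Nat.sInf_mem hs2.nonempty
      refine ⟨sInf N₁, {x ∈ N₁ | sInf N₁ < x}, hs1 hmN₁, fun x hx => hs1 hx.1,
        infinite_above hs2 _, fun x hx => hx.2, ?_⟩
      intro v hv
      rw [Finset.mem_powerset] at hv
      by_cases hmv : sInf N₁ ∈ v
      · have hvP : v.erase (sInf N₁) ⊆ P := by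
          intro y hy
          have h := hv (Finset.mem_of_mem_erase hy)
          rcases Finset.mem_insert.1 h with h' | h'
          · exact absurd h' (Finset.ne_of_mem_erase hy)
          · exact h'
        have h := hs3 (v.erase (sInf N₁))
          (by simpa using Finset.mem_powerset.2 hvP) (sInf N₁) hmN₁
        rw [Finset.insert_erase hmv] at h
        exact rejects_mono (fun x hx => hx.1) h
      · have hvP : v ⊆ P := by
          intro y hy
          rcases Finset.mem_insert.1 (hv hy) with h' | h'
          · exact absurd (h' ▸ hy) hmv
          · exact h'
        exact rejects_mono (fun x hx => hs1 hx.1) (hrejP v (Finset.mem_powerset.2 hvP))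
    choose mS NS hmem hsub hinf habove hrejS using step
    -- fusion orbit
    let St := {q : Finset ℕ × Set ℕ // q.2.Infinite ∧ (∀ v ∈ q.1.powerset, Rejects F q.2 v)
      ∧ q.2 ⊆ M}
    have hbase : ((∅, M) : Finset ℕ × Set ℕ).2.Infinite ∧
        (∀ v ∈ (∅ : Finset ℕ).powerset, Rejects F M v) ∧ M ⊆ M := by
      refine ⟨hM, ?_, subset_rfl⟩
      intro v hv
      have : v = ∅ := Finset.mem_powerset.1 hv |> Finset.subset_empty.1
      rw [this]; exact hrej
    let seq : ℕ → St := fun k =>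
      Nat.rec ⟨(∅, M), hbase⟩
        (fun _ p =>
          ⟨(insert (mS p.1.1 p.1.2 p.2.1 p.2.2.1) p.1.1, NS p.1.1 p.1.2 p.2.1 p.2.2.1),
            hinf p.1.1 p.1.2 p.2.1 p.2.2.1,
            hrejS p.1.1 p.1.2 p.2.1 p.2.2.1,
            (hsub p.1.1 p.1.2 p.2.1 p.2.2.1).trans p.2.2.2⟩) k
    let mm : ℕ → ℕ := fun k => mS (seq k).1.1 (seq k).1.2 (seq k).2.1 (seq k).2.2.1
    have hseq_succ : ∀ k, (seq (k+1)).1 =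
        (insert (mm k) (seq k).1.1, NS (seq k).1.1 (seq k).1.2 (seq k).2.1 (seq k).2.2.1) :=
      fun k => rfl
    have hP : ∀ k, (seq k).1.1 = Finset.image mm (Finset.range k) := by
      intro k
      induction k with
      | zero => simp [seq]
      | succ n ih =>
        rw [hseq_succ]
        simp only
        rw [ih, Finset.range_add_one, Finset.image_insert]
    have hmm_memN : ∀ k, mm k ∈ (seq k).1.2 := fun k => hmem _ _ _ _
    have hN_sub : ∀ k, (seq (k+1)).1.2 ⊆ (seq k).1.2 := fun k => hsub _ _ _ _
    have hN_above : ∀ k, ∀ x ∈ (seq (k+1)).1.2, mm k < x := fun k => habove _ _ _ _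
    have hN_mono : ∀ j k, j ≤ k → (seq k).1.2 ⊆ (seq j).1.2 := by
      intro j k hjk
      induction k with
      | zero => cases Nat.le_zero.1 hjk; exact subset_rfl
      | succ n ih =>
        rcases Nat.lt_or_ge j (n+1) with h | h
        · exact (hN_sub n).trans (ih (Nat.lt_succ_iff.1 h))
        · have : j = n + 1 := le_antisymm hjk h
          subst this; exact subset_rfl
    have hmm_sm : StrictMono mm := by
      intro j k hjk
      exact hN_above j (mm k) (hN_mono (j+1) k hjk (hmm_memN k))
    have hmm_M : ∀ k, mm k ∈ M := fun k => (seq k).2.2.2 (hmm_memN k)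
    refine ⟨Set.range mm, ?_, ?_, ?_⟩
    · rintro x ⟨k, rfl⟩; exact hmm_M k
    · exact Set.infinite_range_of_injective hmm_sm.injective
    · intro v hv
      -- v is contained in some P_k
      have hvP : ∃ k, v ⊆ (seq k).1.1 := by
        induction v using Finset.induction_on with
        | empty => exact ⟨0, by simp⟩
        | @insert x w hx ih =>
          obtain ⟨k, hk⟩ := ih (fun y hy => hv (by simp [hy]))
          have hxmem : x ∈ Set.range mm := hv (by simp)
          obtain ⟨j, hj⟩ := hxmem
          refine ⟨max (j+1) k, ?_⟩
          have hPmono : ∀ k₁ k₂, k₁ ≤ k₂ → (seq k₁).1.1 ⊆ (seq k₂).1.1 := by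
            intro k₁ k₂ h12
            rw [hP k₁, hP k₂]
            apply Finset.image_subset_image
            exact Finset.range_subset_range.2 h12
          intro y hy
          rcases Finset.mem_insert.1 hy with rfl | hyw
          · apply hPmono (j+1) _ (le_max_left _ _)
            rw [hP (j+1)]
            exact Finset.mem_image.2 ⟨j, Finset.mem_range.2 (Nat.lt_succ_self j), hj⟩
          · exact hPmono k _ (le_max_right _ _) (hk hyw)
      obtain ⟨k, hk⟩ := hvP
      intro hF
      exact (seq k).2.2.1 v (Finset.mem_powerset.2 hk) (seq k).1.2 subset_rfl (seq k).2.1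
        (accepts_of_F hF)

end S2C

namespace S2C

def Horn1 (T : ℕ → Finset ℕ → Prop) (s : Finset ℕ) (C : ℕ) (A : Set ℕ) : Prop :=
  ∀ L ⊆ A, L.Infinite → ∃ w : Finset ℕ, InitSegOf w L ∧ ¬ T C (s ∪ w)

def Goalish (T : ℕ → Finset ℕ → Prop) : Prop :=
  ∃ (s : Finset ℕ) (C : ℕ) (M' : Set ℕ), M'.Infinite ∧ (∀ x ∈ M', ∀ y ∈ s, y < x) ∧
    ∀ v : Finset ℕ, ↑v ⊆ M' → T C (s ∪ v)

lemma horn1_mono {T : ℕ → Finset ℕ → Prop} {s : Finset ℕ} {C : ℕ} {A A' : Set ℕ}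
    (h : A' ⊆ A) (hh : Horn1 T s C A) : Horn1 T s C A' :=
  fun L hL hLi => hh L (hL.trans h) hLi

lemma horn1_of_not_goalish {T : ℕ → Finset ℕ → Prop} (hng : ¬ Goalish T)
    (s : Finset ℕ) (C : ℕ) {N : Set ℕ} (hN : N.Infinite) :
    ∃ N', N' ⊆ N ∧ N'.Infinite ∧ Horn1 T s C N' := by
  rcases nashWilliams (fun v => ¬ T C (s ∪ v)) hN with ⟨N', h1, h2, h3⟩ | ⟨N', h1, h2, h3⟩
  · exact ⟨N', h1, h2, fun L hL hLi => h3 L hL hLi⟩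
  · exfalso
    apply hng
    refine ⟨s, C, {x ∈ N' | s.sup id < x}, infinite_above h2 _, ?_, ?_⟩
    · intro x hx y hy
      exact lt_of_le_of_lt (Finset.le_sup (f := id) hy) hx.2
    · intro v hv
      exact not_not.1 (h3 v (fun y hy => (hv hy).1))

lemma horn1_list {T : ℕ → Finset ℕ → Prop} (hng : ¬ Goalish T) :
    ∀ (ps : List (Finset ℕ × ℕ)) {N : Set ℕ}, N.Infinite →
    ∃ N', N' ⊆ N ∧ N'.Infinite ∧ ∀ p ∈ ps, Horn1 T p.1 p.2 N' := by
  intro ps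
  induction ps with
  | nil => intro N hN; exact ⟨N, subset_rfl, hN, by simp⟩
  | cons p ps ih =>
    intro N hN
    obtain ⟨N₁, h1, h2, h3⟩ := horn1_of_not_goalish hng p.1 p.2 hN
    obtain ⟨N', h4, h5, h6⟩ := ih h2
    refine ⟨N', h4.trans h1, h5, ?_⟩
    intro q hq
    rcases List.mem_cons.1 hq with rfl | hq'
    · exact horn1_mono h4 h3
    · exact h6 q hq'

theorem main_comb {T : ℕ → Finset ℕ → Prop}
    (hros : ∀ N : ℕ → ℕ, StrictMono N → ∃ (C : ℕ) (g : ℕ → ℕ), StrictMono g ∧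
      ∀ u : Finset ℕ, InitSegOf u (Set.range (N ∘ g)) → T C u) :
    Goalish T := by
  classical
  by_contra hng
  have step : ∀ (P : Finset ℕ) (N : Set ℕ), N.Infinite →
      ∃ (m : ℕ) (Nmid N' : Set ℕ), Nmid ⊆ N ∧ m ∈ Nmid ∧ N' ⊆ Nmid ∧ N'.Infinite ∧
        (∀ x ∈ N', m < x) ∧
        (∀ s ∈ P.powerset, ∀ C ≤ P.card, Horn1 T s C Nmid) := by
    intro P N hN
    obtain ⟨N₁, h1, h2, h3⟩ :=
      horn1_list hng ((P.powerset ×ˢ Finset.range (P.card+1)).toList) hN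
    have hm : sInf N₁ ∈ N₁ := Nat.sInf_mem h2.nonempty
    refine ⟨sInf N₁, N₁, {x ∈ N₁ | sInf N₁ < x}, h1, hm, fun x hx => hx.1,
      infinite_above h2 _, fun x hx => hx.2, ?_⟩
    intro s hs C hC
    refine h3 (s, C) ?_
    rw [Finset.mem_toList, Finset.mem_product]
    exact ⟨hs, Finset.mem_range.2 (Nat.lt_succ_iff.2 hC)⟩
  choose mS NmidS NS hmid hmem hsub hinf habove hhorn using step
  let St := {q : Finset ℕ × Set ℕ // q.2.Infinite ∧ ∀ x ∈ q.2, ∀ y ∈ q.1, y < x}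
  have hbase : (Set.univ : Set ℕ).Infinite ∧ ∀ x ∈ (Set.univ : Set ℕ),
      ∀ y ∈ (∅ : Finset ℕ), y < x := ⟨Set.infinite_univ, by simp⟩
  let seq : ℕ → St := fun k =>
    Nat.rec ⟨((∅ : Finset ℕ), Set.univ), hbase⟩
      (fun _ p =>
        ⟨(insert (mS p.1.1 p.1.2 p.2.1) p.1.1, NS p.1.1 p.1.2 p.2.1),
          hinf p.1.1 p.1.2 p.2.1, by
            intro x hx y hy
            rcases Finset.mem_insert.1 hy with rfl | hyP
            · exact habove p.1.1 p.1.2 p.2.1 x hx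
            · exact p.2.2 x (hmid p.1.1 p.1.2 p.2.1 (hsub p.1.1 p.1.2 p.2.1 hx)) y hyP⟩) k
  let mm : ℕ → ℕ := fun k => mS (seq k).1.1 (seq k).1.2 (seq k).2.1
  let midN : ℕ → Set ℕ := fun k => NmidS (seq k).1.1 (seq k).1.2 (seq k).2.1
  have hseq_succ : ∀ k, (seq (k+1)).1 =
      (insert (mm k) (seq k).1.1, NS (seq k).1.1 (seq k).1.2 (seq k).2.1) := fun k => rfl
  have hP : ∀ k, (seq k).1.1 = Finset.image mm (Finset.range k) := by
    intro k
    induction k with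
    | zero => simp [seq]
    | succ n ih =>
      rw [hseq_succ]
      simp only
      rw [ih, Finset.range_add_one, Finset.image_insert]
  have hmm_mid : ∀ k, mm k ∈ midN k := fun k => hmem _ _ _
  have hmid_sub : ∀ k, midN k ⊆ (seq k).1.2 := fun k => hmid _ _ _
  have hN_sub : ∀ k, (seq (k+1)).1.2 ⊆ midN k := fun k => hsub _ _ _
  have hN_above : ∀ k, ∀ x ∈ (seq (k+1)).1.2, mm k < x := fun k => habove _ _ _
  have hN_mono : ∀ j k, j ≤ k → (seq k).1.2 ⊆ (seq j).1.2 := by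
    intro j k hjk
    induction k with
    | zero => cases Nat.le_zero.1 hjk; exact subset_rfl
    | succ n ih =>
      rcases Nat.lt_or_ge j (n+1) with h | h
      · exact ((hN_sub n).trans (hmid_sub n)).trans (ih (Nat.lt_succ_iff.1 h))
      · have : j = n + 1 := le_antisymm hjk h
        subst this; exact subset_rfl
  have hmm_sm : StrictMono mm := by
    intro j k hjk
    exact hN_above j (mm k)
      (hN_mono (j+1) k hjk (hmid_sub k (hmm_mid k)))
  have hmm_mid' : ∀ j k, k ≤ j → mm j ∈ midN k := by
    intro j k hjk
    rcases eq_or_lt_of_le hjk with rfl | h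
    · exact hmm_mid k
    · exact hN_sub k (hN_mono (k+1) j h (hmid_sub j (hmm_mid j)))
  have hcard : ∀ k, (seq k).1.1.card = k := by
    intro k
    rw [hP k, Finset.card_image_of_injective _ hmm_sm.injective, Finset.card_range]
  obtain ⟨C, g, hg, hTC⟩ := hros mm hmm_sm
  set s := (seq C).1.1.filter (fun y => y ∈ Set.range (mm ∘ g)) with hs_def
  have hs_pow : s ∈ (seq C).1.1.powerset := Finset.mem_powerset.2 (Finset.filter_subset _ _)
  have hhornC : Horn1 T s C (midN C) := hhorn _ _ _ s hs_pow C (le_of_eq (hcard C).symm)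
  have hin_s : ∀ i, g i < C → mm (g i) ∈ s := by
    intro i hi
    refine Finset.mem_filter.2 ⟨?_, ⟨i, rfl⟩⟩
    rw [hP C]
    exact Finset.mem_image.2 ⟨g i, Finset.mem_range.2 hi, rfl⟩
  have hnotin_s : ∀ i, C ≤ g i → mm (g i) ∉ s := by
    intro i hi hmem'
    have h1 := Finset.mem_filter.1 hmem' |>.1
    rw [hP C] at h1
    obtain ⟨j, hj, hje⟩ := Finset.mem_image.1 h1
    have h2 : j = g i := hmm_sm.injective hje
    have h3 := Finset.mem_range.1 hj
    omega
  set L := Set.range (mm ∘ g) \ ↑s with hL_def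
  have hL_sub : L ⊆ midN C := by
    rintro x ⟨⟨i, rfl⟩, hxs⟩
    rcases Nat.lt_or_ge (g i) C with h | h
    · exact absurd (hin_s i h) hxs
    · exact hmm_mid' (g i) C h
  have hL_inf : L.Infinite := by
    have himg : (mm ∘ g) '' (Set.Ici C) ⊆ L := by
      rintro x ⟨i, hi, rfl⟩
      have hgi : C ≤ g i := le_trans hi hg.le_apply
      exact ⟨⟨i, rfl⟩, hnotin_s i hgi⟩
    exact Set.Infinite.mono himg
      ((Set.Ici_infinite C).image (Set.injOn_of_injective (hmm_sm.comp hg).injective))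
  obtain ⟨w, hw_init, hnT⟩ := hhornC L hL_sub hL_inf
  apply hnT
  apply hTC
  constructor
  · rw [Finset.coe_union]
    rintro x (hx | hx)
    · exact (Finset.mem_filter.1 hx).2
    · exact (hw_init.1 hx).1
  · intro x hx hnx y hy
    obtain ⟨i, rfl⟩ := hx
    have hxs : mm (g i) ∉ s := fun h => hnx (Finset.mem_union_left _ h)
    have hxw : mm (g i) ∉ w := fun h => hnx (Finset.mem_union_right _ h)
    have hgi : C ≤ g i := by
      by_contra hc
      exact hxs (hin_s i (not_le.1 hc))
    have hxL : mm (g i) ∈ L := ⟨⟨i, rfl⟩, hxs⟩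
    rcases Finset.mem_union.1 hy with hys | hyw
    · exact (seq C).2.2 (mm (g i)) (hmid_sub C (hL_sub hxL)) y (Finset.filter_subset _ _ hys)
    · exact hw_init.2 (mm (g i)) hxL hxw y hyw

end S2C



/-- Every Rosenthal basis is subsymmetric, i.e. equivalent to every
subsequence of itself. -/
theorem statement2 {X : Type*} [NormedAddCommGroup X] [NormedSpace ℝ X] [CompleteSpace X]
    (e : ℕ → X) (he : IsRosenthalBasis e) :
    ∀ f : ℕ → ℕ, StrictMono f → EquivSeq (e ∘ f) e := by
  classical
  obtain ⟨⟨hne, K, hK1, hKb⟩, hnorm, _hdense, hros⟩ := he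
  -- Step 1: Rosenthal's property, reformulated for subsequences
  have hreform : ∀ h : ℕ → ℕ, StrictMono h →
      ∃ g : ℕ → ℕ, StrictMono g ∧ ∃ C : ℝ, 1 ≤ C ∧ S2.Good e C (h ∘ g) := by
    intro h hh
    have hblock : IsNormalizedBlockSeq e (fun n => e (h n)) := by
      refine ⟨⟨h, fun n => h n + 1, fun _ => 1, fun n => Nat.lt_succ_self _,
        fun n => hh (Nat.lt_succ_self n), fun n => ?_⟩, fun n => hnorm (h n)⟩
      rw [Nat.Ico_succ_singleton, Finset.sum_singleton, one_smul]
    obtain ⟨g, hg, C, hC1, hse⟩ := hros _ hblock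
    exact ⟨g, hg, C, hC1, fun n a => ⟨hse.2 n a, hse.1 n a⟩⟩
  -- Step 2: the finitary predicate on finsets, and the combinatorial stabilization
  set T : ℕ → Finset ℕ → Prop := fun C u => S2.GoodF e (C : ℝ) (S2.enumOf u) u.card with hT
  have hmain : S2C.Goalish T := by
    apply S2C.main_comb
    intro N hN
    obtain ⟨g, hg, Cr, hCr1, hGood⟩ := hreform N hN
    refine ⟨⌈Cr⌉₊, g, hg, ?_⟩
    intro u hu
    have hNg : StrictMono (N ∘ g) := hN.comp hg
    have hueq := S2.initseg_eq_image hNg hu.1 hu.2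
    have h1 : S2.GoodF e Cr (N ∘ g) u.card := hGood u.card
    have h2 : S2.GoodF e ((⌈Cr⌉₊ : ℕ) : ℝ) (N ∘ g) u.card := h1.monoC (Nat.le_ceil Cr)
    refine h2.congr ?_
    intro i hi
    rw [hueq]
    exact (S2.enumOf_image hNg hi).symm
  obtain ⟨s, C, M', hM'inf, horder, hgoal⟩ := hmain
  -- Step 3: build the stabilized subsequence H = s ⌢ (enumeration of M')
  set t := s.card with ht
  set σ : ℕ → ℕ := S2.enumOf s with hσ
  have hM'inf' : (setOf (fun x => x ∈ M')).Infinite := hM'inf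
  set μ : ℕ → ℕ := Nat.nth (fun x => x ∈ M') with hμ
  have hμm : StrictMono μ := Nat.nth_strictMono hM'inf'
  have hμmem : ∀ i, μ i ∈ M' := fun i => Nat.nth_mem_of_infinite hM'inf' i
  set H : ℕ → ℕ := fun i => if i < t then σ i else μ (i - t) with hH
  have hσs : ∀ i, i < t → σ i ∈ s := fun i hi => S2.enumOf_mem hi
  have hHsm : StrictMono H := by
    intro i j hij
    simp only [hH]
    by_cases hjt : j < t
    · rw [if_pos (hij.trans hjt), if_pos hjt]
      exact S2.enumOf_lt hij hjt
    · rw [if_neg hjt]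
      by_cases hit : i < t
      · rw [if_pos hit]
        exact horder _ (hμmem _) _ (hσs i hit)
      · rw [if_neg hit]
        exact hμm (by omega)
  -- Step 4: every subsequence of H is uniformly good
  have hKey : ∀ k : ℕ → ℕ, StrictMono k →
      S2.Good e ((C:ℝ) * (1 + 4*K*t)) (fun i => H (k i)) := by
    intro k hk
    set Nk : ℕ → ℕ := fun i => if i < t then σ i else H (k i) with hNk
    have hkt : ∀ i, t ≤ i → t ≤ k i := fun i hi => hi.trans hk.le_apply
    have hNkH : ∀ i, t ≤ i → Nk i = H (k i) := fun i hi => if_neg (not_lt.2 hi)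
    have hHM' : ∀ i, t ≤ i → H (k i) ∈ M' := by
      intro i hi
      have h2 := hkt i hi
      simp only [hH]
      rw [if_neg (not_lt.2 h2)]
      exact hμmem _
    have hNksm : StrictMono Nk := by
      intro i j hij
      simp only [hNk]
      by_cases hjt : j < t
      · rw [if_pos (hij.trans hjt), if_pos hjt]
        exact S2.enumOf_lt hij hjt
      · rw [if_neg hjt]
        by_cases hit : i < t
        · rw [if_pos hit]
          exact horder _ (hHM' j (not_lt.1 hjt)) _ (hσs i hit)
        · rw [if_neg hit]
          exact hHsm (hk hij)
    have hGoodNk : S2.Good e (C:ℝ) Nk := by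
      intro n
      refine S2.GoodF.trunc ?_ (le_max_left n t)
      set n' := max n t with hn'def
      have htn' : t ≤ n' := le_max_right _ _
      set v : Finset ℕ := Finset.image Nk (Finset.Ico t n') with hv
      have hvM' : ↑v ⊆ M' := by
        intro x hx
        obtain ⟨i, hi, rfl⟩ := Finset.mem_image.1 (Finset.mem_coe.1 hx)
        have hti := (Finset.mem_Ico.1 hi).1
        rw [hNkH i hti]
        exact hHM' i hti
      have himg_s : Finset.image Nk (Finset.range t) = s := by
        have h1 : Finset.image Nk (Finset.range t) = Finset.image σ (Finset.range t) := by
          apply Finset.image_congr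
          intro i hi
          simp only [hNk]
          rw [if_pos (Finset.mem_range.1 (Finset.mem_coe.1 hi))]
        rw [h1, hσ, ht]
        exact S2.image_enumOf s
      have hsv : s ∪ v = Finset.image Nk (Finset.range n') := by
        rw [← himg_s, hv, ← Finset.image_union]
        congr 1
        rw [Finset.range_eq_Ico, Finset.range_eq_Ico]
        exact Finset.Ico_union_Ico_eq_Ico (Nat.zero_le t) htn'
      have hTgood : S2.GoodF e (C:ℝ) (S2.enumOf (s ∪ v)) (s ∪ v).card := hgoal v hvM'
      have hcardeq : (s ∪ v).card = n' := by
        rw [hsv, Finset.card_image_of_injective _ hNksm.injective, Finset.card_range]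
      rw [hcardeq] at hTgood
      refine hTgood.congr ?_
      intro i hi
      rw [hsv]
      exact S2.enumOf_image hNksm hi
    have hfc := S2.good_finite_change hK1
      (fun h hh a m n hm => S2.coeff_bound_sub hnorm hKb hh a m n hm)
      hNksm (hHsm.comp hk) (fun i hi => hNkH i hi) hnorm
      (by positivity) hGoodNk
    exact hfc
  -- Step 5: conclude for an arbitrary subsequence f
  intro f hf
  set C' : ℝ := (C:ℝ) * (1 + 4*K*t) with hC'
  have hK0 : (0:ℝ) < K := lt_of_lt_of_le one_pos hK1
  have hC'0 : 0 ≤ C' := by positivity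
  have hGoodH : S2.Good e C' H := by
    have h := hKey id strictMono_id
    exact h
  have hGoodHf : S2.Good e C' (fun i => H (f i)) := hKey f hf
  refine ⟨max 1 (C' * C'), le_max_left _ _, ?_, ?_⟩
  · intro n a
    simp only [Function.comp_apply]
    have h1 := (hGoodHf n a).2
    have h2 := (S2.good_subst hGoodH hf n a).1
    calc ‖∑ i ∈ Finset.range n, a i • e i‖
        ≤ C' * ‖∑ i ∈ Finset.range n, a i • e (H (f i))‖ := h1
      _ ≤ C' * (C' * ‖∑ i ∈ Finset.range n, a i • e (f i)‖) :=
          mul_le_mul_of_nonneg_left h2 hC'0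
      _ = (C' * C') * ‖∑ i ∈ Finset.range n, a i • e (f i)‖ := by ring
      _ ≤ max 1 (C' * C') * ‖∑ i ∈ Finset.range n, a i • e (f i)‖ :=
          mul_le_mul_of_nonneg_right (le_max_right _ _) (norm_nonneg _)
  · intro n a
    simp only [Function.comp_apply]
    have h1 := (S2.good_subst hGoodH hf n a).2
    have h2 := (hGoodHf n a).1
    calc ‖∑ i ∈ Finset.range n, a i • e (f i)‖
        ≤ C' * ‖∑ i ∈ Finset.range n, a i • e (H (f i))‖ := h1
      _ ≤ C' * (C' * ‖∑ i ∈ Finset.range n, a i • e i‖) :=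
          mul_le_mul_of_nonneg_left h2 hC'0
      _ = (C' * C') * ‖∑ i ∈ Finset.range n, a i • e i‖ := by ring
      _ ≤ max 1 (C' * C') * ‖∑ i ∈ Finset.range n, a i • e i‖ :=
          mul_le_mul_of_nonneg_right (le_max_right _ _) (norm_nonneg _)
end

section
/- Let {t_i} be a normalized basic sequence invariant under spreading in a Banach space. Then the difference sequence {t_{2i+1} − t_{2i}} is suppression unconditional, i.e., its norm decreases when the support of a linear combination is diminished. -/
open Finset

section Aux

variable {X : Type*} [NormedAddCommGroup X] [NormedSpace ℝ X]

private lemma sum_range_two_mul' {M : Type*} [AddCommMonoid M] (n : ℕ) (g : ℕ → M) :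
    ∑ m ∈ Finset.range (2 * n), g m
      = ∑ i ∈ Finset.range n, (g (2 * i) + g (2 * i + 1)) := by
  induction n with
  | zero => simp
  | succ n ih =>
    have h2 : 2 * (n + 1) = (2 * n + 1) + 1 := by ring
    rw [h2, Finset.sum_range_succ, Finset.sum_range_succ, ih, Finset.sum_range_succ]
    abel

private lemma spread_sum (t : ℕ → X) (v : Finset ℕ) (c : ℕ → ℝ) (g : ℕ → ℕ)
    {n : ℕ} (hv : v ⊆ Finset.range n) :
    ∑ m ∈ Finset.range (2 * n),
        (if m / 2 ∈ v then (if m % 2 = 0 then -(c (m / 2)) else c (m / 2)) else 0) • t (g m)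
      = ∑ i ∈ v, c i • (t (g (2 * i + 1)) - t (g (2 * i))) := by
  rw [sum_range_two_mul']
  have key : ∀ i : ℕ,
      (if (2 * i) / 2 ∈ v then (if (2 * i) % 2 = 0 then -(c ((2 * i) / 2)) else c ((2 * i) / 2)) else 0) • t (g (2 * i))
        + (if (2 * i + 1) / 2 ∈ v then (if (2 * i + 1) % 2 = 0 then -(c ((2 * i + 1) / 2)) else c ((2 * i + 1) / 2)) else 0) • t (g (2 * i + 1))
      = if i ∈ v then c i • (t (g (2 * i + 1)) - t (g (2 * i))) else 0 := by
    intro i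
    have h1 : (2 * i) / 2 = i := by omega
    have h2 : (2 * i + 1) / 2 = i := by omega
    have h3 : (2 * i) % 2 = 0 := by omega
    have h4 : (2 * i + 1) % 2 = 1 := by omega
    rw [h1, h2, h3, h4]
    by_cases hiv : i ∈ v
    · simp only [hiv, if_true, if_pos rfl]
      norm_num [smul_sub]
      abel
    · simp [hiv]
  calc ∑ i ∈ Finset.range n,
        ((if (2 * i) / 2 ∈ v then (if (2 * i) % 2 = 0 then -(c ((2 * i) / 2)) else c ((2 * i) / 2)) else 0) • t (g (2 * i))
          + (if (2 * i + 1) / 2 ∈ v then (if (2 * i + 1) % 2 = 0 then -(c ((2 * i + 1) / 2)) else c ((2 * i + 1) / 2)) else 0) • t (g (2 * i + 1)))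
      = ∑ i ∈ Finset.range n, (if i ∈ v then c i • (t (g (2 * i + 1)) - t (g (2 * i))) else 0) :=
        Finset.sum_congr rfl fun i _ => key i
    _ = ∑ i ∈ Finset.range n ∩ v, c i • (t (g (2 * i + 1)) - t (g (2 * i))) := by
        rw [Finset.sum_ite_mem]
    _ = ∑ i ∈ v, c i • (t (g (2 * i + 1)) - t (g (2 * i))) := by
        rw [Finset.inter_eq_right.mpr hv]

private lemma spread_norm (t : ℕ → X) (hspread : InvariantUnderSpreading t)
    (v : Finset ℕ) (c : ℕ → ℝ) (f : ℕ → ℕ) (hf : StrictMono f) :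
    ‖∑ i ∈ v, c i • (t (f (2 * i + 1)) - t (f (2 * i)))‖
      = ‖∑ i ∈ v, c i • (t (2 * i + 1) - t (2 * i))‖ := by
  set n := (v.sup id) + 1 with hn
  have hv : v ⊆ Finset.range n := fun i hi =>
    Finset.mem_range.mpr (Nat.lt_succ_of_le (Finset.le_sup (f := id) hi))
  have h1 := spread_sum t v c f hv
  have h2 := spread_sum t v c (fun m => m) hv
  rw [← h1, ← h2]
  exact hspread f hf (2 * n) _

end Aux
section Aux2

variable {X : Type*} [NormedAddCommGroup X] [NormedSpace ℝ X]

private lemma erase_le (t : ℕ → X) (hspread : InvariantUnderSpreading t)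
    (hnorm : ∀ i, ‖t i‖ = 1) (u : Finset ℕ) (a : ℕ → ℝ) (j : ℕ) :
    ‖∑ i ∈ u.erase j, a i • (t (2 * i + 1) - t (2 * i))‖
      ≤ ‖∑ i ∈ u, a i • (t (2 * i + 1) - t (2 * i))‖ := by
  by_cases hj : j ∈ u
  swap
  · rw [Finset.erase_eq_of_notMem hj]
  set a' : ℕ → ℝ := Function.update a j 0 with ha'
  have hE : ∑ i ∈ u, a' i • (t (2 * i + 1) - t (2 * i))
      = ∑ i ∈ u.erase j, a i • (t (2 * i + 1) - t (2 * i)) := by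
    rw [← Finset.add_sum_erase u _ hj]
    simp only [ha', Function.update_self, zero_smul, zero_add]
    exact Finset.sum_congr rfl fun i hi => by
      rw [Function.update_of_ne (Finset.mem_erase.mp hi).1]
  have step : ∀ N : ℕ, 1 ≤ N →
      (N : ℝ) * ‖∑ i ∈ u, a' i • (t (2 * i + 1) - t (2 * i))‖
        ≤ (N : ℝ) * ‖∑ i ∈ u, a i • (t (2 * i + 1) - t (2 * i))‖ + 2 * |a j| := by
    intro N hN
    set fk : ℕ → ℕ → ℕ :=
      fun k m => if m < 2 * j then m else if m < 2 * j + 2 then m + k else m + 2 * N with hfk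
    have hfmono : ∀ k, k ≤ N → StrictMono (fk k) := by
      intro k hk
      apply strictMono_nat_of_lt_succ
      intro m
      simp only [hfk]
      split_ifs <;> omega
    set W : ℕ → X := fun k => ∑ i ∈ u, a i • (t (fk k (2 * i + 1)) - t (fk k (2 * i))) with hW
    set U : X := ∑ i ∈ u, a' i • (t (fk 0 (2 * i + 1)) - t (fk 0 (2 * i))) with hU
    have hWnorm : ∀ k, k ≤ N → ‖W k‖ = ‖∑ i ∈ u, a i • (t (2 * i + 1) - t (2 * i))‖ :=
      fun k hk => spread_norm t hspread u a (fk k) (hfmono k hk)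
    have hUnorm : ‖U‖ = ‖∑ i ∈ u, a' i • (t (2 * i + 1) - t (2 * i))‖ :=
      spread_norm t hspread u a' (fk 0) (hfmono 0 (Nat.zero_le N))
    have hdiff : ∀ k, k ≤ N → W k - U = a j • (t (2 * j + (k + 1)) - t (2 * j + k)) := by
      intro k hk
      have hUk : U = ∑ i ∈ u, a' i • (t (fk k (2 * i + 1)) - t (fk k (2 * i))) := by
        rw [hU]
        refine Finset.sum_congr rfl fun i _ => ?_
        by_cases hij : i = j
        · subst hij; simp [ha', Function.update_self]
        · have h1 : fk 0 (2 * i + 1) = fk k (2 * i + 1) := by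
            simp only [hfk]; split_ifs <;> omega
          have h2 : fk 0 (2 * i) = fk k (2 * i) := by
            simp only [hfk]; split_ifs <;> omega
          rw [h1, h2]
      have e1 : fk k (2 * j + 1) = 2 * j + (k + 1) := by
        simp only [hfk]; split_ifs <;> omega
      have e2 : fk k (2 * j) = 2 * j + k := by
        simp only [hfk]; split_ifs <;> omega
      rw [hUk, hW, ← Finset.sum_sub_distrib]
      have hterm : ∀ i ∈ u,
          a i • (t (fk k (2 * i + 1)) - t (fk k (2 * i)))
            - a' i • (t (fk k (2 * i + 1)) - t (fk k (2 * i)))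
          = if i = j then a j • (t (2 * j + (k + 1)) - t (2 * j + k)) else 0 := by
        intro i _
        by_cases hij : i = j
        · subst hij
          rw [e1, e2]
          simp [ha', Function.update_self]
        · simp [hij, ha', Function.update_of_ne hij]
      rw [Finset.sum_congr rfl hterm]
      simp [Finset.sum_ite_eq' u j, hj]
    have htel : ∑ k ∈ Finset.range N, (W k - U) = a j • (t (2 * j + N) - t (2 * j)) := by
      have h1 : ∀ k ∈ Finset.range N, W k - U
          = a j • (t (2 * j + (k + 1)) - t (2 * j + k)) := fun k hk =>
        hdiff k (le_of_lt (Finset.mem_range.mp hk))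
      rw [Finset.sum_congr rfl h1, ← Finset.smul_sum,
        Finset.sum_range_sub (fun k => t (2 * j + k))]
      simp
    have hNsmul : (N : ℝ) • U
        = ∑ k ∈ Finset.range N, W k - a j • (t (2 * j + N) - t (2 * j)) := by
      rw [← htel, Finset.sum_sub_distrib, Finset.sum_const, Finset.card_range]
      rw [Nat.cast_smul_eq_nsmul]
      abel
    have hz : ‖a j • (t (2 * j + N) - t (2 * j))‖ ≤ |a j| * 2 := by
      rw [norm_smul, Real.norm_eq_abs]
      have : ‖t (2 * j + N) - t (2 * j)‖ ≤ 2 := by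
        calc ‖t (2 * j + N) - t (2 * j)‖ ≤ ‖t (2 * j + N)‖ + ‖t (2 * j)‖ := norm_sub_le _ _
          _ = 2 := by rw [hnorm, hnorm]; norm_num
      exact mul_le_mul_of_nonneg_left this (abs_nonneg _)
    have hWsum : ‖∑ k ∈ Finset.range N, W k‖
        ≤ (N : ℝ) * ‖∑ i ∈ u, a i • (t (2 * i + 1) - t (2 * i))‖ := by
      calc ‖∑ k ∈ Finset.range N, W k‖ ≤ ∑ k ∈ Finset.range N, ‖W k‖ :=
            norm_sum_le _ _
        _ = ∑ k ∈ Finset.range N, ‖∑ i ∈ u, a i • (t (2 * i + 1) - t (2 * i))‖ :=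
            Finset.sum_congr rfl fun k hk => hWnorm k (le_of_lt (Finset.mem_range.mp hk))
        _ = (N : ℝ) * ‖∑ i ∈ u, a i • (t (2 * i + 1) - t (2 * i))‖ := by
            rw [Finset.sum_const, Finset.card_range, nsmul_eq_mul]
    calc (N : ℝ) * ‖∑ i ∈ u, a' i • (t (2 * i + 1) - t (2 * i))‖
        = (N : ℝ) * ‖U‖ := by rw [hUnorm]
      _ = ‖(N : ℝ) • U‖ := by
          rw [norm_smul, Real.norm_natCast]
      _ = ‖∑ k ∈ Finset.range N, W k - a j • (t (2 * j + N) - t (2 * j))‖ := by rw [hNsmul]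
      _ ≤ ‖∑ k ∈ Finset.range N, W k‖ + ‖a j • (t (2 * j + N) - t (2 * j))‖ := norm_sub_le _ _
      _ ≤ (N : ℝ) * ‖∑ i ∈ u, a i • (t (2 * i + 1) - t (2 * i))‖ + 2 * |a j| := by
          have := hz
          linarith [hWsum]
  rw [← hE]
  by_contra hcon
  push_neg at hcon
  set E := ‖∑ i ∈ u, a' i • (t (2 * i + 1) - t (2 * i))‖ with hEdef
  set V := ‖∑ i ∈ u, a i • (t (2 * i + 1) - t (2 * i))‖ with hVdef
  have hd : 0 < E - V := by linarith
  obtain ⟨N, hNgt⟩ := exists_nat_gt (2 * |a j| / (E - V))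
  have hN1 : 1 ≤ N := by
    by_contra hN0
    push_neg at hN0
    interval_cases N
    have : (0 : ℝ) ≤ 2 * |a j| / (E - V) := by positivity
    simp at hNgt
    linarith
  have hstep := step N hN1
  have h2 : 2 * |a j| < (N : ℝ) * (E - V) := (div_lt_iff₀ hd).mp hNgt
  nlinarith

end Aux2
/-- If `{t_i}` is a normalized basic sequence invariant under
spreading, then the difference sequence `{t_{2i+1} - t_{2i}}` is suppression
unconditional. -/
theorem statement3 {X : Type*} [NormedAddCommGroup X] [NormedSpace ℝ X] [CompleteSpace X]
    (t : ℕ → X) (ht : IsBasicSeq t) (hnorm : ∀ i, ‖t i‖ = 1)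
    (hspread : InvariantUnderSpreading t) :
    SuppressionUnconditional (fun i => t (2 * i + 1) - t (2 * i)) := by
  intro s u hsu a
  have main : ∀ (n : ℕ) (v : Finset ℕ), v.card ≤ n → ∀ s' ⊆ v,
      ‖∑ i ∈ s', a i • (t (2 * i + 1) - t (2 * i))‖
        ≤ ‖∑ i ∈ v, a i • (t (2 * i + 1) - t (2 * i))‖ := by
    intro n
    induction n with
    | zero =>
      intro v hv s' hs'
      have hvE : v = ∅ := Finset.card_eq_zero.mp (Nat.le_antisymm hv (Nat.zero_le _))
      subst hvE
      rw [Finset.subset_empty.mp hs']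
    | succ n ih =>
      intro v hv s' hs'
      by_cases h : s' = v
      · subst h; exact le_refl _
      · obtain ⟨j, hjv, hjs⟩ := Finset.exists_of_ssubset (hs'.ssubset_of_ne h)
        have h1 : s' ⊆ v.erase j := Finset.subset_erase.mpr ⟨hs', hjs⟩
        have h2 : (v.erase j).card ≤ n := by
          rw [Finset.card_erase_of_mem hjv]
          omega
        calc ‖∑ i ∈ s', a i • (t (2 * i + 1) - t (2 * i))‖
            ≤ ‖∑ i ∈ v.erase j, a i • (t (2 * i + 1) - t (2 * i))‖ := ih _ h2 s' h1
          _ ≤ ‖∑ i ∈ v, a i • (t (2 * i + 1) - t (2 * i))‖ :=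
              erase_le t hspread hnorm v a j
  exact main u.card u le_rfl s hsu
end

section
/- Let {e_i} be a normalized suppression unconditional basis of a Banach space X, invariant under spreading, with biorthogonal functionals {e_i*} in X*. Let {x_n} be a normalized block basis of {e_i}, and let {x_n*} be a normalized block sequence of {e_i*} in X* with x_n*(x_n) = 1 and the support of x_n* contained in the support of x_n for each n. If {e_n*} K-dominates {x_n*}, then K‖Σ a_i x_i‖ ≥ ‖Σ a_i e_i‖ for every finitely supported scalar sequence (a_i), i.e., {x_n} (1/K)-dominates {e_n}. -/
open Finset

section Aux

variable {X : Type*} [NormedAddCommGroup X] [NormedSpace ℝ X]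

/-- the finite-coordinate projection has norm at most 1 for a suppression
unconditional basis with dense span. -/
lemma proj_norm_le (e : ℕ → X) (es : ℕ → StrongDual ℝ X)
    (hsupp : SuppressionUnconditional e)
    (hdense : Dense (Submodule.span ℝ (Set.range e) : Set X))
    (hbiorth : ∀ i j, es i (e j) = if i = j then 1 else 0)
    (n : ℕ) (y : X) : ‖∑ i ∈ Finset.range n, (es i y) • e i‖ ≤ ‖y‖ := by
  set Q : X →L[ℝ] X := ∑ i ∈ Finset.range n, (es i).smulRight (e i) with hQ
  have hQapp : ∀ z : X, Q z = ∑ i ∈ Finset.range n, (es i z) • e i := by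
    intro z
    simp [hQ, ContinuousLinearMap.sum_apply]
  have hclosed : IsClosed {z : X | ‖Q z‖ ≤ ‖z‖} :=
    isClosed_le (continuous_norm.comp Q.continuous) continuous_norm
  have hspan : (Submodule.span ℝ (Set.range e) : Set X) ⊆ {z : X | ‖Q z‖ ≤ ‖z‖} := by
    intro z hz
    rw [Set.mem_setOf_eq]
    obtain ⟨l, hl⟩ := (Finsupp.mem_span_range_iff_exists_finsupp).1 hz
    have hes : ∀ i, es i z = l i := by
      intro i
      rw [← hl, Finsupp.sum, map_sum]
      simp only [map_smul, hbiorth, smul_eq_mul]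
      rw [Finset.sum_eq_single i]
      · by_cases hi : i ∈ l.support
        · simp
        · simp [Finsupp.notMem_support_iff.1 hi]
      · intro b _ hb; simp [Ne.symm hb]
      · intro hi; simp [Finsupp.notMem_support_iff.1 hi]
    have hzeq : z = ∑ i ∈ l.support, l i • e i := by
      rw [← hl]; rfl
    have h1 : ∑ i ∈ Finset.range n, (es i z) • e i
        = ∑ i ∈ Finset.range n ∩ l.support, l i • e i := by
      rw [Finset.sum_congr rfl (fun i _ => by rw [hes i])]
      refine (Finset.sum_subset (Finset.inter_subset_left) ?_).symm
      intro i hi hni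
      have : i ∉ l.support := fun h => hni (Finset.mem_inter.2 ⟨hi, h⟩)
      simp [Finsupp.notMem_support_iff.1 this]
    rw [hQapp, h1, hzeq]
    exact hsupp _ _ (Finset.inter_subset_right) l
  have huniv : ∀ z : X, ‖Q z‖ ≤ ‖z‖ := by
    intro z
    have : (Set.univ : Set X) ⊆ {z : X | ‖Q z‖ ≤ ‖z‖} := by
      calc (Set.univ : Set X) = closure (Submodule.span ℝ (Set.range e) : Set X) :=
            (hdense.closure_eq).symm
        _ ⊆ closure {z : X | ‖Q z‖ ≤ ‖z‖} := closure_mono hspan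
        _ = {z : X | ‖Q z‖ ≤ ‖z‖} := hclosed.closure_eq
    exact this (Set.mem_univ z)
  have := huniv y
  rwa [hQapp] at this

end Aux

/-- Let `{e_i}` be a normalized suppression unconditional basis of a
Banach space `X`, invariant under spreading, with biorthogonal functionals `{e_i*}`.
Let `{x_n}` be a normalized block basis of `{e_i}` and `{x_n*}` a normalized block
sequence of `{e_i*}` with `x_n*(x_n) = 1` and `supp x_n* ⊆ supp x_n`. If `{e_n*}`
`K`-dominates `{x_n*}`, then `K‖Σ a_i x_i‖ ≥ ‖Σ a_i e_i‖` for all finitely supported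
`(a_i)`, i.e. `{x_n}` `(1/K)`-dominates `{e_n}`. -/
theorem statement9 {X : Type*} [NormedAddCommGroup X] [NormedSpace ℝ X] [CompleteSpace X]
    (e : ℕ → X) (es : ℕ → StrongDual ℝ X)
    (he : IsBasicSeq e) (hnorm : ∀ i, ‖e i‖ = 1)
    (hsupp : SuppressionUnconditional e) (hspread : InvariantUnderSpreading e)
    (hdense : Dense (Submodule.span ℝ (Set.range e) : Set X))
    (hbiorth : ∀ i j, es i (e j) = if i = j then 1 else 0)
    (A B : ℕ → ℕ) (c d : ℕ → ℝ)
    (hAB : ∀ n, A n < B n) (hBA : ∀ n, B n ≤ A (n + 1))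
    (x : ℕ → X) (xs : ℕ → StrongDual ℝ X)
    (hx : ∀ n, x n = ∑ i ∈ Finset.Ico (A n) (B n), c i • e i)
    (hxs : ∀ n, xs n = ∑ i ∈ Finset.Ico (A n) (B n), d i • es i)
    (hxnorm : ∀ n, ‖x n‖ = 1) (hxsnorm : ∀ n, ‖xs n‖ = 1)
    (hsupport : ∀ i, d i ≠ 0 → c i ≠ 0)
    (heval : ∀ n, xs n (x n) = 1)
    (K : ℝ) (hK : 0 < K) (hdom : Dominates K es xs) :
    ∀ (n : ℕ) (a : ℕ → ℝ),
      ‖∑ i ∈ Finset.range n, a i • e i‖ ≤ K * ‖∑ i ∈ Finset.range n, a i • x i‖ := by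
  -- monotonicity of the blocks
  have hmono : ∀ i j : ℕ, i < j → B i ≤ A j := by
    intro i j hij
    induction j with
    | zero => omega
    | succ j ih =>
      rcases Nat.lt_succ_iff_lt_or_eq.1 hij with h | h
      · exact le_trans (ih h) (le_of_lt (lt_of_lt_of_le (hAB j) (hBA j)))
      · subst h; exact hBA i
  have hdisj : ∀ i j : ℕ, i ≠ j →
      Disjoint (Finset.Ico (A i) (B i)) (Finset.Ico (A j) (B j)) := by
    intro i j hij
    rw [Finset.disjoint_left]
    intro k hk1 hk2
    simp only [Finset.mem_Ico] at hk1 hk2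
    rcases hij.lt_or_gt with h | h
    · have := hmono i j h; omega
    · have := hmono j i h; omega
  -- evaluation of the block functionals on the blocks
  have hxsx : ∀ i j : ℕ, xs i (x j) = if i = j then 1 else 0 := by
    intro i j
    by_cases h : i = j
    · subst h; simp [heval i]
    · simp only [h, if_false]
      rw [hxs i, hx j]
      rw [ContinuousLinearMap.sum_apply]
      apply Finset.sum_eq_zero
      intro k hk
      rw [ContinuousLinearMap.smul_apply, map_sum]
      have hk' : k ∉ Finset.Ico (A j) (B j) :=
        Finset.disjoint_left.1 (hdisj i j h) hk
      have : ∀ l ∈ Finset.Ico (A j) (B j), es k (c l • e l) = 0 := by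
        intro l hl
        have hkl : k ≠ l := fun hkl => hk' (hkl ▸ hl)
        rw [map_smul, hbiorth k l, if_neg hkl]
        simp
      rw [Finset.sum_congr rfl this]
      simp
  intro n a
  by_cases hz : ∑ i ∈ Finset.range n, a i • e i = 0
  · rw [hz, norm_zero]
    positivity
  obtain ⟨g, hg1, hg2⟩ := exists_dual_vector ℝ _ (norm_ne_zero_iff.2 hz)
  set b : ℕ → ℝ := fun i => g (e i) with hb
  set φ : StrongDual ℝ X := ∑ i ∈ Finset.range n, b i • xs i with hφ
  have hφx : φ (∑ j ∈ Finset.range n, a j • x j) = ∑ i ∈ Finset.range n, a i * b i := by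
    rw [hφ, ContinuousLinearMap.sum_apply]
    refine Finset.sum_congr rfl (fun i hi => ?_)
    rw [ContinuousLinearMap.smul_apply, map_sum]
    have h2 : ∀ j ∈ Finset.range n, xs i (a j • x j) = if i = j then a j else 0 := by
      intro j _
      rw [map_smul, hxsx i j]
      by_cases h : i = j <;> simp [h]
    rw [Finset.sum_congr rfl h2, Finset.sum_ite_eq _ i]
    simp [hi, smul_eq_mul, mul_comm]
  have hgsum : g (∑ i ∈ Finset.range n, a i • e i) = ∑ i ∈ Finset.range n, a i * b i := by
    rw [map_sum]
    exact Finset.sum_congr rfl (fun i _ => by rw [map_smul]; rfl)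
  -- norm of φ
  have hesnorm : ‖∑ i ∈ Finset.range n, b i • es i‖ ≤ 1 := by
    apply ContinuousLinearMap.opNorm_le_bound _ zero_le_one
    intro y
    rw [ContinuousLinearMap.sum_apply]
    have h1 : ∑ i ∈ Finset.range n, (b i • es i) y
        = g (∑ i ∈ Finset.range n, (es i y) • e i) := by
      rw [map_sum]
      exact Finset.sum_congr rfl (fun i _ => by
        rw [ContinuousLinearMap.smul_apply, map_smul, smul_eq_mul, smul_eq_mul, mul_comm])
    rw [h1, one_mul]
    calc ‖g (∑ i ∈ Finset.range n, (es i y) • e i)‖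
        ≤ ‖g‖ * ‖∑ i ∈ Finset.range n, (es i y) • e i‖ := g.le_opNorm _
      _ ≤ 1 * ‖y‖ := by
          rw [hg1]
          exact mul_le_mul_of_nonneg_left
            (proj_norm_le e es hsupp hdense hbiorth n y) zero_le_one
      _ = ‖y‖ := one_mul _
  have hφnorm : ‖φ‖ ≤ K := by
    calc ‖φ‖ ≤ K * ‖∑ i ∈ Finset.range n, b i • es i‖ := hdom n b
      _ ≤ K * 1 := mul_le_mul_of_nonneg_left hesnorm hK.le
      _ = K := mul_one K
  calc ‖∑ i ∈ Finset.range n, a i • e i‖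
      = g (∑ i ∈ Finset.range n, a i • e i) := hg2.symm
    _ = φ (∑ j ∈ Finset.range n, a j • x j) := by rw [hgsum, hφx]
    _ ≤ ‖φ (∑ j ∈ Finset.range n, a j • x j)‖ := by
        rw [Real.norm_eq_abs]; exact le_abs_self _
    _ ≤ ‖φ‖ * ‖∑ j ∈ Finset.range n, a j • x j‖ := φ.le_opNorm _
    _ ≤ K * ‖∑ j ∈ Finset.range n, a j • x j‖ :=
        mul_le_mul_of_nonneg_right hφnorm (norm_nonneg _)
end

section
/- Let X be a separable Banach space. If X* is separable, then either X contains continuum many pairwise non-equivalent spreading models generated by weakly null seminormalized basic sequences, or at most countably many such non-equivalent spreading models. Similarly, if X has a Schauder basis, then either X contains continuum many pairwise non-equivalent spreading models generated by block basic sequences of the basis, or at most countably many such non-equivalent spreading models. -/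
open Finset

namespace St13

open Metric TopologicalSpace Filter

/-- dependent choice along ℕ. -/
lemma dchoice {α : Type*} (P : ℕ → α → Prop) (R : ℕ → α → α → Prop)
    (h0 : ∃ a, P 0 a) (hstep : ∀ n a, P n a → ∃ b, P (n+1) b ∧ R n a b) :
    ∃ f : ℕ → α, (∀ n, P n (f n)) ∧ ∀ n, R n (f n) (f (n+1)) := by
  classical
  let g : (n : ℕ) → {a // P n a} := fun n =>
    Nat.rec ⟨Classical.choose h0, Classical.choose_spec h0⟩
      (fun n prev => ⟨Classical.choose (hstep n prev.1 prev.2),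
        (Classical.choose_spec (hstep n prev.1 prev.2)).1⟩) n
  refine ⟨fun n => (g n).1, fun n => (g n).2, fun n => ?_⟩
  exact (Classical.choose_spec (hstep n (g n).1 (g n).2)).2

section Scheme

variable {M : Type*} [MetricSpace M]

/-- smallness relative to a graded relation. -/
def Small (F : ℕ → Set (M × M)) (S : Set M) : Prop :=
  ∃ D : ℕ → M, ∀ x ∈ S, ∃ i n, (x, D i) ∈ F n

lemma Small.mono {F : ℕ → Set (M × M)} {S T : Set M} (hT : Small F T) (h : S ⊆ T) :
    Small F S := by
  obtain ⟨D, hD⟩ := hT; exact ⟨D, fun x hx => hD x (h hx)⟩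

lemma small_empty [Nonempty M] (F : ℕ → Set (M × M)) : Small F (∅ : Set M) :=
  ⟨fun _ => Classical.arbitrary M, fun x hx => absurd hx (Set.notMem_empty x)⟩

lemma small_iUnion [Nonempty M] {F : ℕ → Set (M × M)} {S : ℕ → Set M}
    (h : ∀ n, Small F (S n)) : Small F (⋃ n, S n) := by
  choose D hD using h
  refine ⟨fun m => D (Nat.unpair m).1 (Nat.unpair m).2, fun x hx => ?_⟩
  obtain ⟨n, hn⟩ := Set.mem_iUnion.mp hx
  obtain ⟨i, k, hik⟩ := hD n x hn
  exact ⟨Nat.pair n i, k, by simpa [Nat.unpair_pair] using hik⟩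

lemma small_iUnion_countable [Nonempty M] {F : ℕ → Set (M × M)} {ι : Type*} [Countable ι]
    [Nonempty ι] {S : ι → Set M} (h : ∀ p, Small F (S p)) : Small F (⋃ p, S p) := by
  obtain ⟨g, hg⟩ := exists_surjective_nat ι
  have : (⋃ p, S p) = ⋃ n, S (g n) := by
    ext x; simp only [Set.mem_iUnion]
    exact ⟨fun ⟨p, hp⟩ => by obtain ⟨n, rfl⟩ := hg p; exact ⟨n, hp⟩, fun ⟨n, hn⟩ => ⟨g n, hn⟩⟩
  rw [this]
  exact small_iUnion fun n => h (g n)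

set_option maxHeartbeats 1000000 in
theorem scheme_core {M : Type*} [MetricSpace M] [CompleteSpace M] [SeparableSpace M] [Nonempty M]
    (W : Set M) (hW : IsClosed W)
    (F : ℕ → Set (M × M)) (hFc : ∀ n, IsClosed (F n)) (hmono : Monotone F) :
    (∃ G : (ℕ → Bool) → M, (∀ b, G b ∈ W) ∧
      ∀ b b' : ℕ → Bool, b ≠ b' → ∀ n, (G b, G b') ∉ F n) ∨
    (∃ D : ℕ → M, ∀ w ∈ W, ∃ i n, (w, D i) ∈ F n) := by
  classical
  by_cases hsm : Small F W
  · right; exact hsm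
  left
  obtain ⟨u, hu⟩ := exists_dense_seq M
  set U : Set M := ⋃ (i : ℕ) (q : ℚ) (_ : Small F (ball (u i) q ∩ W)), ball (u i) q with hU
  have hUopen : IsOpen U :=
    isOpen_iUnion fun i => isOpen_iUnion fun q => isOpen_iUnion fun _ => isOpen_ball
  set V : Set M := W \ U with hVdef
  have hVclosed : IsClosed V := hW.sdiff hUopen
  have hVW : V ⊆ W := Set.diff_subset
  -- U ∩ W is small
  have hUW : Small F (U ∩ W) := by
    have : Small F (⋃ p : ℕ × ℚ,
        if Small F (ball (u p.1) p.2 ∩ W) then ball (u p.1) p.2 ∩ W else ∅) := by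
      refine small_iUnion_countable fun p => ?_
      by_cases hp : Small F (ball (u p.1) p.2 ∩ W)
      · simpa [hp] using hp
      · simp only [hp, if_false]; exact small_empty F
    refine this.mono ?_
    rintro x ⟨hxU, hxW⟩
    simp only [hU, Set.mem_iUnion] at hxU
    obtain ⟨i, q, hq, hxq⟩ := hxU
    refine Set.mem_iUnion.mpr ⟨(i, q), ?_⟩
    simp only [hq, if_true]
    exact ⟨hxq, hxW⟩
  -- star property
  have hstar : ∀ x ∈ V, ∀ r : ℝ, 0 < r → ¬ Small F (ball x r ∩ V) := by
    rintro x ⟨hxW, hxU⟩ r hr hsmall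
    have hball : Small F (ball x r ∩ W) := by
      have hsub : ball x r ∩ W ⊆ (ball x r ∩ V) ∪ (U ∩ W) := by
        rintro y ⟨hy1, hy2⟩
        by_cases hyU : y ∈ U
        · exact Or.inr ⟨hyU, hy2⟩
        · exact Or.inl ⟨hy1, hy2, hyU⟩
      obtain ⟨D1, hD1⟩ := hsmall
      obtain ⟨D2, hD2⟩ := hUW
      refine Small.mono ⟨fun m => if (Nat.unpair m).1 = 0 then D1 (Nat.unpair m).2
        else D2 (Nat.unpair m).2, ?_⟩ hsub
      rintro y (hy | hy)
      · obtain ⟨i, n, hin⟩ := hD1 y hy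
        exact ⟨Nat.pair 0 i, n, by simpa [Nat.unpair_pair] using hin⟩
      · obtain ⟨i, n, hin⟩ := hD2 y hy
        exact ⟨Nat.pair 1 i, n, by simpa [Nat.unpair_pair] using hin⟩
    -- find a basic ball around x inside ball x r
    obtain ⟨i, hi⟩ := (Metric.denseRange_iff.mp hu) x (r/2) (by linarith)
    obtain ⟨q, hq1, hq2⟩ := exists_rat_btwn hi
    have hq0 : (0:ℝ) < q := lt_of_le_of_lt dist_nonneg hq1
    have hxball : x ∈ ball (u i) q := mem_ball.mpr hq1
    have hsubr : ball (u i) q ⊆ ball x r := by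
      intro y hy
      rw [mem_ball] at hy ⊢
      have h1 : dist y x ≤ dist y (u i) + dist x (u i) := by
        calc dist y x ≤ dist y (u i) + dist (u i) x := dist_triangle _ _ _
        _ = dist y (u i) + dist x (u i) := by rw [dist_comm (u i) x]
      linarith
    have hsmall' : Small F (ball (u i) q ∩ W) :=
      hball.mono (Set.inter_subset_inter_left _ hsubr)
    exact hxU (Set.mem_iUnion.mpr ⟨i, Set.mem_iUnion.mpr ⟨q, Set.mem_iUnion.mpr ⟨hsmall', hxball⟩⟩⟩)
  -- V nonempty
  have hVne : V.Nonempty := by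
    rw [Set.nonempty_iff_ne_empty]
    intro hVe
    apply hsm
    refine hUW.mono fun x hx => ⟨?_, hx⟩
    by_contra hxU
    have : x ∈ V := ⟨hx, hxU⟩
    simp [hVe] at this
  obtain ⟨x₀, hx₀⟩ := hVne
  -- two point separation lemma
  have two_point : ∀ (n : ℕ) (c₁ c₂ : M) (r₁ r₂ : ℝ), c₁ ∈ V → c₂ ∈ V → 0 < r₁ → 0 < r₂ →
      ∃ (p₁ p₂ : M) (s₁ s₂ : ℝ), p₁ ∈ V ∧ p₂ ∈ V ∧ 0 < s₁ ∧ 0 < s₂ ∧ s₁ ≤ r₁ ∧ s₂ ≤ r₂ ∧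
        closedBall p₁ s₁ ⊆ ball c₁ r₁ ∧ closedBall p₂ s₂ ⊆ ball c₂ r₂ ∧
        ∀ y ∈ closedBall p₁ s₁, ∀ z ∈ closedBall p₂ s₂, (y, z) ∉ F n := by
    intro n c₁ c₂ r₁ r₂ hc₁ hc₂ hr₁ hr₂
    -- find two points not related by F n
    have hnotall : ¬ ∀ p₁ ∈ ball c₁ r₁ ∩ V, ∀ p₂ ∈ ball c₂ r₂ ∩ V, (p₁, p₂) ∈ F n := by
      intro hall
      refine hstar c₁ hc₁ r₁ hr₁ ⟨fun _ => c₂, fun x hx => ⟨0, n, ?_⟩⟩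
      exact hall x hx c₂ ⟨mem_ball_self hr₂, hc₂⟩
    push_neg at hnotall
    obtain ⟨p₁, hp₁, p₂, hp₂, hF⟩ := hnotall
    -- openness of complement
    have hop : IsOpen ((F n)ᶜ) := (hFc n).isOpen_compl
    obtain ⟨ε, hε, hball⟩ := Metric.isOpen_iff.mp hop (p₁, p₂) hF
    have hεball : ball p₁ ε ×ˢ ball p₂ ε ⊆ (F n)ᶜ := by
      rw [ball_prod_same]; exact hball
    set s₁ : ℝ := min (ε/2) (min ((r₁ - dist p₁ c₁)/2) r₁) with hs₁
    set s₂ : ℝ := min (ε/2) (min ((r₂ - dist p₂ c₂)/2) r₂) with hs₂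
    have hd₁ : dist p₁ c₁ < r₁ := mem_ball.mp hp₁.1
    have hd₂ : dist p₂ c₂ < r₂ := mem_ball.mp hp₂.1
    have hs₁pos : 0 < s₁ := by
      apply lt_min (by linarith) (lt_min (by linarith) hr₁)
    have hs₂pos : 0 < s₂ := by
      apply lt_min (by linarith) (lt_min (by linarith) hr₂)
    refine ⟨p₁, p₂, s₁, s₂, hp₁.2, hp₂.2, hs₁pos, hs₂pos,
      (min_le_right _ _).trans (min_le_right _ _), (min_le_right _ _).trans (min_le_right _ _),
      ?_, ?_, ?_⟩
    · intro y hy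
      rw [mem_closedBall] at hy
      rw [mem_ball]
      have h1 : s₁ ≤ (r₁ - dist p₁ c₁)/2 := (min_le_right _ _).trans (min_le_left _ _)
      calc dist y c₁ ≤ dist y p₁ + dist p₁ c₁ := dist_triangle _ _ _
        _ ≤ (r₁ - dist p₁ c₁)/2 + dist p₁ c₁ := by linarith
        _ < r₁ := by linarith
    · intro y hy
      rw [mem_closedBall] at hy
      rw [mem_ball]
      have h1 : s₂ ≤ (r₂ - dist p₂ c₂)/2 := (min_le_right _ _).trans (min_le_left _ _)
      calc dist y c₂ ≤ dist y p₂ + dist p₂ c₂ := dist_triangle _ _ _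
        _ ≤ (r₂ - dist p₂ c₂)/2 + dist p₂ c₂ := by linarith
        _ < r₂ := by linarith
    · intro y hy z hz hyz
      apply hεball (a := (y, z)) ⟨?_, ?_⟩ hyz
      · rw [mem_ball]
        exact lt_of_le_of_lt (mem_closedBall.mp hy) (lt_of_le_of_lt (min_le_left _ _) (by linarith))
      · rw [mem_ball]
        exact lt_of_le_of_lt (mem_closedBall.mp hz) (lt_of_le_of_lt (min_le_left _ _) (by linarith))
  -- iterated separation over a list of pairs
  have sep_iter : ∀ (n : ℕ) {ι : Type} (L : List (ι × ι)) (fam₀ : ι → M × ℝ),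
      (∀ s, (fam₀ s).1 ∈ V ∧ 0 < (fam₀ s).2) →
      ∃ fam : ι → M × ℝ, (∀ s, (fam s).1 ∈ V ∧ 0 < (fam s).2) ∧
        (∀ s, (fam s).2 ≤ (fam₀ s).2) ∧
        (∀ s, closedBall (fam s).1 (fam s).2 ⊆ closedBall (fam₀ s).1 (fam₀ s).2) ∧
        (∀ p ∈ L, p.1 ≠ p.2 → ∀ y ∈ closedBall (fam p.1).1 (fam p.1).2,
           ∀ z ∈ closedBall (fam p.2).1 (fam p.2).2, (y, z) ∉ F n) := by
    intro n ι L fam₀ hfam₀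
    induction L with
    | nil => exact ⟨fam₀, hfam₀, fun s => le_refl _, fun s => subset_rfl, by simp⟩
    | cons p L ih =>
      obtain ⟨fam₁, h1, h2, h3, h4⟩ := ih
      by_cases hpq : p.1 = p.2
      · refine ⟨fam₁, h1, h2, h3, ?_⟩
        intro q hq hqne
        rcases List.mem_cons.mp hq with rfl | hq'
        · exact absurd hpq hqne
        · exact h4 q hq' hqne
      · obtain ⟨p₁, p₂, s₁, s₂, hp₁V, hp₂V, hs₁, hs₂, hs₁le, hs₂le, hsub₁, hsub₂, hsep⟩ :=
          two_point n (fam₁ p.1).1 (fam₁ p.2).1 (fam₁ p.1).2 (fam₁ p.2).2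
            (h1 p.1).1 (h1 p.2).1 (h1 p.1).2 (h1 p.2).2
        set fam₂ : ι → M × ℝ :=
          Function.update (Function.update fam₁ p.1 (p₁, s₁)) p.2 (p₂, s₂) with hfam₂
        have hf2 : fam₂ p.2 = (p₂, s₂) := Function.update_self _ _ _
        have hf1 : fam₂ p.1 = (p₁, s₁) := by
          rw [hfam₂, Function.update_of_ne hpq, Function.update_self]
        have key : ∀ s, ((fam₂ s).1 ∈ V ∧ 0 < (fam₂ s).2) ∧ (fam₂ s).2 ≤ (fam₁ s).2 ∧
            closedBall (fam₂ s).1 (fam₂ s).2 ⊆ closedBall (fam₁ s).1 (fam₁ s).2 := by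
          intro s
          by_cases hsp2 : s = p.2
          · subst hsp2
            rw [hf2]
            exact ⟨⟨hp₂V, hs₂⟩, hs₂le, hsub₂.trans ball_subset_closedBall⟩
          · by_cases hsp1 : s = p.1
            · subst hsp1
              rw [hf1]
              exact ⟨⟨hp₁V, hs₁⟩, hs₁le, hsub₁.trans ball_subset_closedBall⟩
            · have heq : fam₂ s = fam₁ s := by
                rw [hfam₂, Function.update_of_ne hsp2, Function.update_of_ne hsp1]
              rw [heq]
              exact ⟨h1 s, le_refl _, subset_rfl⟩
        refine ⟨fam₂, fun s => (key s).1, fun s => le_trans (key s).2.1 (h2 s),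
          fun s => (key s).2.2.trans (h3 s), ?_⟩
        intro q hq hqne
        rcases List.mem_cons.mp hq with rfl | hq'
        · intro y hy z hz
          rw [hf1] at hy
          rw [hf2] at hz
          exact hsep y hy z hz
        · intro y hy z hz
          exact h4 q hq' hqne y ((key q.1).2.2 hy) z ((key q.2).2.2 hz)
  -- the level-step construction
  have step : ∀ (n : ℕ) (g : (ℕ → Bool) → M × ℝ),
      ((∀ b, (g b).1 ∈ V ∧ 0 < (g b).2 ∧ (g b).2 ≤ (1/2:ℝ)^n) ∧
       (∀ b b', (∀ i < n, b i = b' i) → g b = g b')) →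
      ∃ g' : (ℕ → Bool) → M × ℝ,
        (((∀ b, (g' b).1 ∈ V ∧ 0 < (g' b).2 ∧ (g' b).2 ≤ (1/2:ℝ)^(n+1)) ∧
          (∀ b b', (∀ i < n+1, b i = b' i) → g' b = g' b')) ∧
         (∀ b b', ¬(∀ i < n+1, b i = b' i) → ∀ y ∈ closedBall (g' b).1 (g' b).2,
            ∀ z ∈ closedBall (g' b').1 (g' b').2, (y, z) ∉ F (n+1))) ∧
        (∀ b, closedBall (g' b).1 (g' b).2 ⊆ ball (g b).1 (g b).2) := by
    intro n g ⟨hg1, hg2⟩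
    set σ := (Fin (n+1) → Bool)
    set ext : σ → (ℕ → Bool) := fun s i => if h : i < n+1 then s ⟨i, h⟩ else false with hext
    set fam₀ : σ → M × ℝ :=
      fun s => ((g (ext s)).1, min ((g (ext s)).2 / 2) ((1/2:ℝ)^(n+1))) with hfam₀
    have hfam₀v : ∀ s, (fam₀ s).1 ∈ V ∧ 0 < (fam₀ s).2 := by
      intro s
      refine ⟨(hg1 (ext s)).1, lt_min (by linarith [(hg1 (ext s)).2.1]) (by positivity)⟩
    obtain ⟨fam, hfv, hfr, hfsub, hfsep⟩ :=
      sep_iter (n+1) ((Finset.univ : Finset (σ × σ)).toList) fam₀ hfam₀v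
    have hfam₀sub : ∀ s, closedBall (fam₀ s).1 (fam₀ s).2 ⊆ ball (g (ext s)).1 (g (ext s)).2 := by
      intro s y hy
      rw [mem_closedBall] at hy
      rw [mem_ball]
      have h2 : (fam₀ s).2 ≤ (g (ext s)).2 / 2 := min_le_left _ _
      have h3 : 0 < (g (ext s)).2 := (hg1 (ext s)).2.1
      have : dist y (fam₀ s).1 ≤ (g (ext s)).2/2 := le_trans hy h2
      calc dist y (g (ext s)).1 = dist y (fam₀ s).1 := rfl
        _ ≤ (g (ext s)).2/2 := this
        _ < (g (ext s)).2 := by linarith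
    set g' : (ℕ → Bool) → M × ℝ := fun b => fam (fun i : Fin (n+1) => b i) with hg'
    have hgext : ∀ b : ℕ → Bool, g (ext (fun i : Fin (n+1) => b i)) = g b := by
      intro b
      apply hg2
      intro i hi
      simp only [hext]
      rw [dif_pos (by omega : i < n+1)]
    refine ⟨g', ⟨⟨?_, ?_⟩, ?_⟩, ?_⟩
    · intro b
      refine ⟨(hfv _).1, (hfv _).2, ?_⟩
      calc (g' b).2 ≤ (fam₀ (fun i : Fin (n+1) => b i)).2 := hfr _
        _ ≤ (1/2:ℝ)^(n+1) := min_le_right _ _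
    · intro b b' hbb'
      have : (fun i : Fin (n+1) => b i) = (fun i : Fin (n+1) => b' i) := by
        funext i; exact hbb' i i.2
      simp only [hg', this]
    · intro b b' hbb' y hy z hz
      have hne : (fun i : Fin (n+1) => b i) ≠ (fun i : Fin (n+1) => b' i) := by
        intro heq
        apply hbb'
        intro i hi
        have := congrFun heq ⟨i, hi⟩
        simpa using this
      exact hfsep ((fun i : Fin (n+1) => b i), (fun i : Fin (n+1) => b' i))
        (by simp [Finset.mem_toList]) hne y hy z hz
    · intro b
      refine (hfsub (fun i : Fin (n+1) => b i)).trans ?_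
      refine Set.Subset.trans (hfam₀sub (fun i : Fin (n+1) => b i)) ?_
      rw [hgext b]
  -- build the infinite scheme by dependent choice
  obtain ⟨T, hTinv, hTstep⟩ := dchoice
    (fun n g => ((∀ b, (g b).1 ∈ V ∧ 0 < (g b).2 ∧ (g b).2 ≤ (1/2:ℝ)^n) ∧
       (∀ b b' : ℕ → Bool, (∀ i < n, b i = b' i) → g b = g b')) ∧
       (∀ b b' : ℕ → Bool, ¬(∀ i < n, b i = b' i) → ∀ y ∈ closedBall (g b).1 (g b).2,
          ∀ z ∈ closedBall (g b').1 (g b').2, (y, z) ∉ F n))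
    (fun n g g' => ∀ b, closedBall (g' b).1 (g' b).2 ⊆ ball (g b).1 (g b).2)
    ⟨fun _ => (x₀, 1), ⟨⟨fun b => ⟨hx₀, by norm_num⟩, fun b b' _ => rfl⟩,
      fun b b' hb => absurd (fun i hi => absurd hi (Nat.not_lt_zero i)) hb⟩⟩
    (fun n g hg => by
      obtain ⟨g', hg'⟩ := step n g hg.1
      exact ⟨g', ⟨hg'.1.1, hg'.1.2⟩, hg'.2⟩)
  -- nested balls
  -- nested balls
  have nest : ∀ (b : ℕ → Bool) (n m : ℕ), n ≤ m →
      closedBall (T m b).1 (T m b).2 ⊆ closedBall (T n b).1 (T n b).2 := by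
    intro b n
    refine Nat.le_induction subset_rfl ?_
    intro m hnm ih
    exact ((hTstep m b).trans ball_subset_closedBall).trans ih
  have hrpos : ∀ n b, 0 < (T n b).2 := fun n b => ((hTinv n).1.1 b).2.1
  have hrle : ∀ n b, (T n b).2 ≤ (1/2:ℝ)^n := fun n b => ((hTinv n).1.1 b).2.2
  have hcV : ∀ n b, (T n b).1 ∈ V := fun n b => ((hTinv n).1.1 b).1
  have hmem : ∀ (b : ℕ → Bool) (n m : ℕ), n ≤ m → (T m b).1 ∈ closedBall (T n b).1 (T n b).2 := by
    intro b n m hnm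
    exact nest b n m hnm (mem_closedBall_self (le_of_lt (hrpos m b)))
  -- Cauchy sequences of centers
  have hcauchy : ∀ b : ℕ → Bool, CauchySeq (fun n => (T n b).1) := by
    intro b
    apply cauchySeq_of_le_geometric (1/2 : ℝ) 1 (by norm_num)
    intro n
    have := hmem b n (n+1) (Nat.le_succ n)
    rw [mem_closedBall] at this
    rw [dist_comm]
    calc dist (T (n+1) b).1 (T n b).1 ≤ (T n b).2 := this
      _ ≤ (1/2:ℝ)^n := hrle n b
      _ = 1 * (1/2:ℝ)^n := (one_mul _).symm
  have hlim : ∀ b : ℕ → Bool, ∃ z : M, Tendsto (fun n => (T n b).1) atTop (nhds z) :=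
    fun b => cauchySeq_tendsto_of_complete (hcauchy b)
  choose G hG using hlim
  have hGmem : ∀ (b : ℕ → Bool) (n : ℕ), G b ∈ closedBall (T n b).1 (T n b).2 := by
    intro b n
    refine isClosed_closedBall.mem_of_tendsto (hG b) ?_
    filter_upwards [eventually_ge_atTop n] with m hm
    exact hmem b n m hm
  have hGV : ∀ b, G b ∈ V := by
    intro b
    refine hVclosed.mem_of_tendsto (hG b) ?_
    filter_upwards with n
    exact hcV n b
  refine ⟨G, fun b => hVW (hGV b), ?_⟩
  intro b b' hbb' n
  obtain ⟨j, hj⟩ : ∃ j, b j ≠ b' j := by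
    by_contra h
    push_neg at h
    exact hbb' (funext h)
  set N := max (j+1) (n+1) with hN
  have hnotagree : ¬ (∀ i < N, b i = b' i) := by
    intro h
    exact hj (h j (lt_of_lt_of_le (Nat.lt_succ_self j) (le_max_left _ _)))
  have hsep := (hTinv N).2 b b' hnotagree (G b) (hGmem b N) (G b') (hGmem b' N)
  intro hF
  exact hsep (hmono (le_trans (Nat.le_succ n) (le_max_right (j+1) (n+1))) hF)

end Scheme
end St13

namespace St13

theorem scheme {M : Type*} [TopologicalSpace M] [PolishSpace M] [Nonempty M]
    (W : Set M) (hW : IsClosed W)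
    (F : ℕ → Set (M × M)) (hFc : ∀ n, IsClosed (F n)) (hmono : Monotone F) :
    (∃ G : (ℕ → Bool) → M, (∀ b, G b ∈ W) ∧
      ∀ b b' : ℕ → Bool, b ≠ b' → ∀ n, (G b, G b') ∉ F n) ∨
    (∃ D : ℕ → M, ∀ w ∈ W, ∃ i n, (w, D i) ∈ F n) := by
  letI := TopologicalSpace.upgradeIsCompletelyMetrizable M
  exact scheme_core W hW F hFc hmono

end St13

namespace St13

open Finset Filter

variable {X : Type*} [NormedAddCommGroup X] [NormedSpace ℝ X]

/-- norm of a finite spread combination. -/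
noncomputable def fval (x : ℕ → X) (k : ℕ) (r : ℕ → ℝ) (l : ℕ → ℕ) : ℝ :=
  ‖∑ i ∈ Finset.range (k+1), r i • x (l i)‖

lemma fval_nonneg (x : ℕ → X) (k : ℕ) (r : ℕ → ℝ) (l : ℕ → ℕ) : 0 ≤ fval x k r l :=
  norm_nonneg _

lemma fval_smul (x : ℕ → X) (k : ℕ) (r : ℕ → ℝ) (l : ℕ → ℕ) (t : ℝ) :
    fval x k (fun i => t * r i) l = |t| * fval x k r l := by
  unfold fval
  rw [← Real.norm_eq_abs, ← norm_smul]
  congr 1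
  rw [Finset.smul_sum]
  exact Finset.sum_congr rfl fun i _ => by rw [smul_smul]

lemma fval_lip {x : ℕ → X} {Cb : ℝ} (hb : ∀ i, ‖x i‖ ≤ Cb)
    (k : ℕ) (r r' : ℕ → ℝ) (l : ℕ → ℕ) :
    |fval x k r l - fval x k r' l| ≤ ∑ i ∈ Finset.range (k+1), |r i - r' i| * Cb := by
  unfold fval
  refine le_trans (abs_norm_sub_norm_le _ _) ?_
  rw [← Finset.sum_sub_distrib]
  refine le_trans (norm_sum_le _ _) (Finset.sum_le_sum fun i _ => ?_)
  rw [← sub_smul, norm_smul, Real.norm_eq_abs]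
  exact mul_le_mul_of_nonneg_left (hb (l i)) (abs_nonneg _)

/-- rewriting a spread sum as a partial sum of a coefficient sequence. -/
lemma spread_sum_eq {x : ℕ → X} (k : ℕ) (r : ℕ → ℝ) (l : ℕ → ℕ) (P : ℕ) :
    ∑ p ∈ Finset.range P,
        (∑ i ∈ (Finset.range (k+1)).filter (fun i => l i = p), r i) • x p
      = ∑ i ∈ (Finset.range (k+1)).filter (fun i => l i < P), r i • x (l i) := by
  have h1 : ∀ p ∈ Finset.range P,
      (∑ i ∈ (Finset.range (k+1)).filter (fun i => l i = p), r i) • x p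
        = ∑ i ∈ (Finset.range (k+1)).filter (fun i => l i = p), r i • x (l i) := by
    intro p _
    rw [Finset.sum_smul]
    refine Finset.sum_congr rfl fun i hi => ?_
    rw [(Finset.mem_filter.mp hi).2]
  rw [Finset.sum_congr rfl h1]
  rw [← Finset.sum_biUnion]
  · congr 1
    ext i
    simp only [Finset.mem_biUnion, Finset.mem_filter, Finset.mem_range]
    constructor
    · rintro ⟨p, hp, hik, rfl⟩
      exact ⟨hik, hp⟩
    · rintro ⟨hik, hp⟩
      exact ⟨l i, hp, hik, rfl⟩
  · intro p _ q _ hpq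
    simp only [Function.onFun, Finset.disjoint_left, Finset.mem_filter]
    rintro i ⟨_, rfl⟩ ⟨_, h⟩
    exact hpq h

/-- coefficient bound from the basic sequence constant, for spread sums. -/
lemma spread_coeff {x : ℕ → X} {K : ℝ}
    (hbasic : ∀ (a : ℕ → ℝ) (m n : ℕ), m ≤ n →
      ‖∑ i ∈ Finset.range m, a i • x i‖ ≤ K * ‖∑ i ∈ Finset.range n, a i • x i‖)
    (k : ℕ) (r : ℕ → ℝ) (l : ℕ → ℕ) (hl : StrictMono l) {j : ℕ} (hj : j < k+1) :
    |r j| * ‖x (l j)‖ ≤ 2 * K * fval x k r l := by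
  set a : ℕ → ℝ := fun p => ∑ i ∈ (Finset.range (k+1)).filter (fun i => l i = p), r i with ha
  have hfull : ∑ p ∈ Finset.range (l k + 1), a p • x p
      = ∑ i ∈ Finset.range (k+1), r i • x (l i) := by
    rw [spread_sum_eq]
    congr 1
    ext i
    simp only [Finset.mem_filter, Finset.mem_range, Nat.lt_succ_iff]
    exact ⟨fun h => h.1, fun h => ⟨h, (hl.le_iff_le).mpr h⟩⟩
  have hfilter : (Finset.range (k+1)).filter (fun i => l i = l j) = {j} := by
    ext i
    simp only [Finset.mem_filter, Finset.mem_range, Finset.mem_singleton]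
    constructor
    · rintro ⟨_, h⟩; exact hl.injective h
    · rintro rfl; exact ⟨hj, rfl⟩
  have haj : a (l j) = r j := by
    show (∑ i ∈ (Finset.range (k+1)).filter (fun i => l i = l j), r i) = r j
    rw [hfilter, Finset.sum_singleton]
  have hdiff : a (l j) • x (l j) = (∑ p ∈ Finset.range (l j + 1), a p • x p)
      - ∑ p ∈ Finset.range (l j), a p • x p := by
    rw [Finset.sum_range_succ]
    abel
  have hjk : l j + 1 ≤ l k + 1 := Nat.succ_le_succ (hl.le_iff_le.mpr (Nat.lt_succ_iff.mp hj))
  have h1 : ‖∑ p ∈ Finset.range (l j + 1), a p • x p‖ ≤ K * fval x k r l := by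
    have := hbasic a (l j + 1) (l k + 1) hjk
    rwa [hfull] at this
  have h2 : ‖∑ p ∈ Finset.range (l j), a p • x p‖ ≤ K * fval x k r l := by
    have := hbasic a (l j) (l k + 1) (le_trans (Nat.le_succ _) hjk)
    rwa [hfull] at this
  calc |r j| * ‖x (l j)‖ = ‖a (l j) • x (l j)‖ := by
        rw [norm_smul, Real.norm_eq_abs, haj]
    _ ≤ ‖∑ p ∈ Finset.range (l j + 1), a p • x p‖ + ‖∑ p ∈ Finset.range (l j), a p • x p‖ := by
        rw [hdiff]; exact norm_sub_le _ _
    _ ≤ 2 * K * fval x k r l := by linarith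

/-- the real sequence attached to a list of rationals. -/
noncomputable def rQ (L : List ℚ) : ℕ → ℝ := fun i => ((L.getD i 0 : ℚ) : ℝ)

lemma rQ_ofFn {n : ℕ} (f : Fin n → ℚ) {i : ℕ} (hi : i < n) :
    rQ (List.ofFn f) i = (f ⟨i, hi⟩ : ℝ) := by
  unfold rQ
  congr 1
  simp [List.getD_eq_getElem?_getD, List.getElem?_ofFn, hi]

/-- existence of close rational lists. -/
lemma exists_ratlist (k : ℕ) (r : ℕ → ℝ) {δ : ℝ} (hδ : 0 < δ) :
    ∃ L : List ℚ, ∀ i, i < k+1 → |r i - rQ L i| ≤ δ := by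
  have h : ∀ i : Fin (k+1), ∃ q : ℚ, |r i.1 - (q:ℝ)| ≤ δ := by
    intro i
    obtain ⟨q, hq1, hq2⟩ := exists_rat_btwn (lt_add_of_pos_right (r i.1) hδ)
    exact ⟨q, by rw [abs_sub_comm, abs_of_pos (by linarith)]; linarith⟩
  choose f hf using h
  refine ⟨List.ofFn f, fun i hi => ?_⟩
  rw [rQ_ofFn f hi]
  exact hf ⟨i, hi⟩

/-- a Cauchy modulus for spread sums with rational coefficients. -/
def CMod (x : ℕ → X) (N : ℕ → List ℚ → ℕ → ℕ) : Prop :=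
  ∀ (k : ℕ) (L : List ℚ) (m : ℕ) (l l' : ℕ → ℕ), StrictMono l → StrictMono l' →
    N k L m < l 0 → N k L m < l' 0 →
    |fval x k (rQ L) l - fval x k (rQ L) l'| ≤ (1/2:ℝ)^m

lemma shift_strictMono (N : ℕ) : StrictMono (fun i => N + 1 + i) := by
  intro a b h
  simp only []
  omega

lemma exists_cmod_of_generates {x : ℕ → X} (hg : GeneratesASpreadingModel x) :
    ∃ N : ℕ → List ℚ → ℕ → ℕ, CMod x N := by
  have h2 : ∀ (k : ℕ) (L : List ℚ) (m : ℕ), ∃ N : ℕ, ∀ (l l' : ℕ → ℕ),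
      StrictMono l → StrictMono l' → N < l 0 → N < l' 0 →
      |fval x k (rQ L) l - fval x k (rQ L) l'| ≤ (1/2:ℝ)^m := by
    intro k L m
    obtain ⟨t, ht⟩ := hg k (rQ L)
    obtain ⟨N, hN⟩ := ht ((1/2:ℝ)^m / 2) (by positivity)
    refine ⟨N, fun l l' hl hl' h0 h0' => ?_⟩
    have e1 := abs_sub_lt_iff.mp (hN l hl h0)
    have e2 := abs_sub_lt_iff.mp (hN l' hl' h0')
    refine le_of_lt ?_
    unfold fval
    rw [abs_sub_lt_iff]
    constructor <;> linarith [e1.1, e1.2, e2.1, e2.2]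
  choose N hN using h2
  exact ⟨N, fun k L m => hN k L m⟩

lemma generates_of_cmod {x : ℕ → X} {Cb : ℝ} (hb : ∀ i, ‖x i‖ ≤ Cb)
    {N : ℕ → List ℚ → ℕ → ℕ} (hcm : CMod x N) : GeneratesASpreadingModel x := by
  intro k r
  have hCb0 : 0 ≤ Cb := le_trans (norm_nonneg _) (hb 0)
  have lip : ∀ (L : List ℚ) (δ : ℝ), 0 < δ → (∀ i, i < k+1 → |r i - rQ L i| ≤ δ) →
      ∀ l : ℕ → ℕ, |fval x k r l - fval x k (rQ L) l| ≤ (k+1) * δ * Cb := by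
    intro L δ hδ hL l
    refine le_trans (fval_lip hb k r (rQ L) l) ?_
    calc ∑ i ∈ Finset.range (k+1), |r i - rQ L i| * Cb
        ≤ ∑ _i ∈ Finset.range (k+1), δ * Cb := by
          refine Finset.sum_le_sum fun i hi => ?_
          exact mul_le_mul_of_nonneg_right (hL i (Finset.mem_range.mp hi)) hCb0
      _ = (k+1) * δ * Cb := by
          rw [Finset.sum_const, Finset.card_range, nsmul_eq_mul]
          push_cast
          ring
  have key : ∀ ε : ℝ, 0 < ε → ∃ Nε : ℕ, ∀ l l' : ℕ → ℕ, StrictMono l → StrictMono l' →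
      Nε < l 0 → Nε < l' 0 → |fval x k r l - fval x k r l'| < ε := by
    intro ε hε
    obtain ⟨m, hm⟩ : ∃ m : ℕ, (1/2:ℝ)^m < ε/2 :=
      exists_pow_lt_of_lt_one (by linarith) (by norm_num)
    set δ := ε / (8 * (k+1) * (Cb+1)) with hδdef
    have hδ : 0 < δ := by positivity
    obtain ⟨L, hL⟩ := exists_ratlist k r hδ
    refine ⟨N k L m, fun l l' hl hl' h0 h0' => ?_⟩
    have b1 := lip L δ hδ hL l
    have b2 := lip L δ hδ hL l'
    have b3 := hcm k L m l l' hl hl' h0 h0'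
    have heq : (k+1:ℝ) * δ * (Cb+1) = ε/8 := by
      rw [hδdef]
      field_simp
    have hbound : (k+1:ℝ) * δ * Cb ≤ ε/8 := by
      rw [← heq]
      have : (0:ℝ) ≤ (k+1:ℝ) * δ := by positivity
      nlinarith
    have habs1 : |fval x k r l - fval x k r l'| ≤
        |fval x k r l - fval x k (rQ L) l| + |fval x k (rQ L) l - fval x k r l'| :=
      abs_sub_le _ _ _
    have habs2 : |fval x k (rQ L) l - fval x k r l'| ≤
        |fval x k (rQ L) l - fval x k (rQ L) l'| + |fval x k (rQ L) l' - fval x k r l'| :=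
      abs_sub_le _ _ _
    have hcomm : |fval x k (rQ L) l' - fval x k r l'| = |fval x k r l' - fval x k (rQ L) l'| :=
      abs_sub_comm _ _
    linarith
  -- Cauchy sequence along shifted tuples
  set g : ℕ → ℝ := fun n => fval x k r (fun i => n + 1 + i) with hgdef
  have hgc : CauchySeq g := by
    rw [Metric.cauchySeq_iff]
    intro ε hε
    obtain ⟨Nε, hNε⟩ := key ε hε
    refine ⟨Nε + 1, fun m hm n hn => ?_⟩
    rw [Real.dist_eq]
    exact hNε _ _ (shift_strictMono m) (shift_strictMono n) (by omega) (by omega)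
  obtain ⟨t, ht⟩ := cauchySeq_tendsto_of_complete hgc
  refine ⟨t, fun ε hε => ?_⟩
  obtain ⟨Nε, hNε⟩ := key (ε/2) (by linarith)
  have hev : ∀ᶠ n in atTop, |g n - t| < ε/2 := by
    have := Metric.tendsto_atTop.mp ht (ε/2) (by linarith)
    obtain ⟨N₀, hN₀⟩ := this
    filter_upwards [eventually_ge_atTop N₀] with n hn
    rw [← Real.dist_eq]
    exact hN₀ n hn
  obtain ⟨n₀, hn₀gt, hn₀⟩ := ((eventually_gt_atTop Nε).and hev).exists
  refine ⟨Nε, fun l hl h0 => ?_⟩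
  show |fval x k r l - t| < ε
  have h1 := hNε l (fun i => n₀ + 1 + i) hl (shift_strictMono n₀) h0
    (by show Nε < n₀ + 1 + 0; omega)
  have habs : |fval x k r l - t| ≤ |fval x k r l - g n₀| + |g n₀ - t| := abs_sub_le _ _ _
  have : |fval x k r l - g n₀| < ε/2 := h1
  linarith

lemma weaklyNull_of_dense {x : ℕ → X} {Cb : ℝ} (hb : ∀ i, ‖x i‖ ≤ Cb)
    (φ : ℕ → StrongDual ℝ X) (hφ : DenseRange φ)
    (N : ℕ → ℕ → ℕ) (hN : ∀ j m i, N j m < i → |φ j (x i)| ≤ (1/2:ℝ)^m) :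
    WeaklyNull x := by
  intro ψ
  rw [Metric.tendsto_atTop]
  intro ε hε
  have hCb0 : 0 ≤ Cb := le_trans (norm_nonneg _) (hb 0)
  obtain ⟨j, hj⟩ := Metric.denseRange_iff.mp hφ ψ (ε / (2 * (Cb + 1))) (by positivity)
  obtain ⟨m, hm⟩ : ∃ m : ℕ, (1/2:ℝ)^m < ε/2 :=
    exists_pow_lt_of_lt_one (by linarith) (by norm_num)
  refine ⟨N j m + 1, fun n hn => ?_⟩
  rw [Real.dist_eq, sub_zero]
  have h1 : |ψ (x n) - φ j (x n)| ≤ ‖ψ - φ j‖ * ‖x n‖ := by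
    have := (ψ - φ j).le_opNorm (x n)
    rwa [ContinuousLinearMap.sub_apply, Real.norm_eq_abs] at this
  have h2 : ‖ψ - φ j‖ * ‖x n‖ < ε/2 := by
    have hd : ‖ψ - φ j‖ < ε / (2 * (Cb + 1)) := by
      rw [← dist_eq_norm]
      exact hj
    have hx : ‖x n‖ ≤ Cb := hb n
    have step1 : ‖ψ - φ j‖ * ‖x n‖ ≤ ε / (2 * (Cb + 1)) * Cb := by
      have := mul_le_mul (le_of_lt hd) hx (norm_nonneg _) (by positivity)
      linarith
    have step2 : ε / (2 * (Cb + 1)) * Cb < ε/2 := by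
      rw [div_mul_eq_mul_div, div_lt_div_iff₀ (by positivity) (by norm_num)]
      nlinarith
    linarith
  have h3 : |φ j (x n)| ≤ (1/2:ℝ)^m := hN j m n (by omega)
  calc |ψ (x n)| ≤ |ψ (x n) - φ j (x n)| + |φ j (x n)| := by
        have := abs_sub_le (ψ (x n)) (φ j (x n)) 0
        simpa using this
    _ < ε/2 + ε/2 := by
        have := lt_of_le_of_lt h1 h2
        have h4 : |φ j (x n)| < ε/2 := lt_of_le_of_lt h3 hm
        linarith
    _ = ε := by ring

end St13

namespace St13

open Finset Filter

section TopHelpers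

variable {α : Type*} [TopologicalSpace α]

lemma isClosed_setOf_imp {A B : Set α} (hA : IsOpen A) (hB : IsClosed B) :
    IsClosed {x | x ∈ A → x ∈ B} := by
  have h : {x | x ∈ A → x ∈ B} = Aᶜ ∪ B := by
    ext x
    by_cases hx : x ∈ A <;> simp [hx]
  rw [h]
  exact hA.isClosed_compl.union hB

lemma isClosed_coordP {f : α → ℕ} (hf : Continuous f) (P : ℕ → Prop) :
    IsClosed {x | P (f x)} :=
  (isClosed_discrete {n | P n}).preimage hf

lemma isOpen_coordP {f : α → ℕ} (hf : Continuous f) (P : ℕ → Prop) :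
    IsOpen {x | P (f x)} :=
  (isOpen_discrete {n | P n}).preimage hf

/-- localization along a discrete-valued continuous function. -/
lemma isClosed_local {f : α → ℕ} (hf : Continuous f) (C : ℕ → Set α)
    (hC : ∀ v, IsClosed (C v)) : IsClosed {x | x ∈ C (f x)} := by
  rw [← isOpen_compl_iff, isOpen_iff_mem_nhds]
  intro x hx
  have h1 : {y | f y = f x} ∈ nhds x := by
    have : IsOpen {y | f y = f x} := isOpen_coordP hf (fun n => n = f x)
    exact this.mem_nhds rfl
  have h2 : (C (f x))ᶜ ∈ nhds x := (hC (f x)).isOpen_compl.mem_nhds hx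
  filter_upwards [h1, h2] with y hy1 hy2
  simp only [Set.mem_compl_iff, Set.mem_setOf_eq]
  rw [hy1]
  exact hy2

end TopHelpers

/-- the witness space. -/
abbrev MM (X : Type*) := (ℕ → X) × (ℕ → ℕ)

variable {X : Type*} [NormedAddCommGroup X] [NormedSpace ℝ X]

lemma cont_mm_snd (j : ℕ) : Continuous (fun w : MM X => w.2 j) :=
  (continuous_apply j).comp continuous_snd

lemma cont_mm_fst (i : ℕ) : Continuous (fun w : MM X => w.1 i) :=
  (continuous_apply i).comp continuous_fst

lemma cont_psum (m : ℕ) (a : ℕ → ℝ) :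
    Continuous (fun w : MM X => ‖∑ i ∈ Finset.range m, a i • w.1 i‖) := by
  apply Continuous.norm
  exact continuous_finset_sum _ fun i _ => (cont_mm_fst i).const_smul (a i)

lemma cont_fval (k : ℕ) (r : ℕ → ℝ) (l : ℕ → ℕ) :
    Continuous (fun x : ℕ → X => fval x k r l) := by
  apply Continuous.norm
  exact continuous_finset_sum _ fun i _ => (continuous_apply (l i)).const_smul (r i)

/-- coordinate codes -/
def c3 (j m : ℕ) : ℕ := 1 + 2 * Nat.pair j m
def c4 (k : ℕ) (L : List ℚ) (m : ℕ) : ℕ := 2 + 2 * Nat.pair (Encodable.encode (k, L)) m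

/-- decoder for the constants coordinate. -/
def decQ (v : ℕ) : ℚ × ℚ × ℚ := ((Encodable.decode v : Option (ℚ × ℚ × ℚ)).getD (1, 2, 1))

/-- decoded constants `(c, C, K)`. -/
def qc (w : MM X) : ℚ × ℚ × ℚ := decQ (w.2 0)

/-- Cauchy-modulus property of a witness. -/
def WCauchy (w : MM X) : Prop :=
  ∀ (k : ℕ) (L : List ℚ) (m : ℕ) (l l' : ℕ → ℕ), StrictMono l → StrictMono l' →
    w.2 (c4 k L m) < l 0 → w.2 (c4 k L m) < l' 0 →
    |fval w.1 k (rQ L) l - fval w.1 k (rQ L) l'| ≤ (1/2:ℝ)^m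

lemma isClosed_WCauchy : IsClosed {w : MM X | WCauchy w} := by
  unfold WCauchy
  simp only [Set.setOf_forall]
  refine isClosed_iInter fun k => isClosed_iInter fun L => isClosed_iInter fun m =>
    isClosed_iInter fun l => isClosed_iInter fun l' => isClosed_iInter fun _ =>
    isClosed_iInter fun _ => ?_
  have h1 : IsOpen {w : MM X | w.2 (c4 k L m) < l 0} :=
    isOpen_coordP (cont_mm_snd _) (fun v => v < l 0)
  have h2 : IsOpen {w : MM X | w.2 (c4 k L m) < l' 0} :=
    isOpen_coordP (cont_mm_snd _) (fun v => v < l' 0)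
  have h3 : IsClosed {w : MM X | |fval w.1 k (rQ L) l - fval w.1 k (rQ L) l'| ≤ (1/2:ℝ)^m} := by
    refine isClosed_le ?_ continuous_const
    exact (((cont_fval k (rQ L) l).comp continuous_fst).sub
      ((cont_fval k (rQ L) l').comp continuous_fst)).abs
  exact isClosed_setOf_imp h1 (isClosed_setOf_imp h2 h3)

/-- witness set for Part 1 (weakly null seminormalized basic sequences). -/
def Wit1 (φ : ℕ → StrongDual ℝ X) : Set (MM X) :=
  {w | 0 < (qc w).1 ∧ (qc w).1 < (qc w).2.1 ∧ 1 ≤ (qc w).2.2 ∧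
    (∀ i, ((qc w).1 : ℝ) ≤ ‖w.1 i‖ ∧ ‖w.1 i‖ ≤ ((qc w).2.1 : ℝ)) ∧
    (∀ (a : ℕ → ℝ) (m n : ℕ), m ≤ n →
      ‖∑ i ∈ Finset.range m, a i • w.1 i‖ ≤
        ((qc w).2.2 : ℝ) * ‖∑ i ∈ Finset.range n, a i • w.1 i‖) ∧
    (∀ j m i, w.2 (c3 j m) < i → |(φ j) (w.1 i)| ≤ (1/2:ℝ)^m) ∧
    WCauchy w}

lemma isClosed_Wit1 (φ : ℕ → StrongDual ℝ X) : IsClosed (Wit1 φ) := by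
  have hqc : Continuous (fun w : MM X => w.2 0) := cont_mm_snd 0
  apply IsClosed.inter
  · exact isClosed_coordP hqc (fun v => 0 < (decQ v).1)
  apply IsClosed.inter
  · exact isClosed_coordP hqc (fun v => (decQ v).1 < (decQ v).2.1)
  apply IsClosed.inter
  · exact isClosed_coordP hqc (fun v => 1 ≤ (decQ v).2.2)
  apply IsClosed.inter
  · -- seminormalization bounds
    have h : {w : MM X | ∀ i, ((qc w).1 : ℝ) ≤ ‖w.1 i‖ ∧ ‖w.1 i‖ ≤ ((qc w).2.1 : ℝ)} =
        ⋂ i, {w : MM X |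
          w ∈ {u : MM X | (((decQ (w.2 0)).1 : ℝ) ≤ ‖u.1 i‖ ∧ ‖u.1 i‖ ≤ ((decQ (w.2 0)).2.1 : ℝ))}} := by
      ext w
      simp only [Set.mem_setOf_eq, Set.mem_iInter, qc]
    show IsClosed {w : MM X | ∀ i, ((qc w).1 : ℝ) ≤ ‖w.1 i‖ ∧ ‖w.1 i‖ ≤ ((qc w).2.1 : ℝ)}
    rw [h]
    refine isClosed_iInter fun i => ?_
    refine isClosed_local hqc
      (fun v => {u : MM X | ((decQ v).1 : ℝ) ≤ ‖u.1 i‖ ∧ ‖u.1 i‖ ≤ ((decQ v).2.1 : ℝ)})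
      (fun v => ?_)
    exact (isClosed_le continuous_const (cont_mm_fst i).norm).inter
      (isClosed_le (cont_mm_fst i).norm continuous_const)
  apply IsClosed.inter
  · -- basic sequence inequality
    have h : {w : MM X | ∀ (a : ℕ → ℝ) (m n : ℕ), m ≤ n →
        ‖∑ i ∈ Finset.range m, a i • w.1 i‖ ≤
          ((qc w).2.2 : ℝ) * ‖∑ i ∈ Finset.range n, a i • w.1 i‖} =
        ⋂ (a : ℕ → ℝ), ⋂ (m : ℕ), ⋂ (n : ℕ), ⋂ (_ : m ≤ n),
          {w : MM X | w ∈ {u : MM X | ‖∑ i ∈ Finset.range m, a i • u.1 i‖ ≤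
            ((decQ (w.2 0)).2.2 : ℝ) * ‖∑ i ∈ Finset.range n, a i • u.1 i‖}} := by
      ext w
      simp only [Set.mem_setOf_eq, Set.mem_iInter, qc]
    show IsClosed {w : MM X | ∀ (a : ℕ → ℝ) (m n : ℕ), m ≤ n →
        ‖∑ i ∈ Finset.range m, a i • w.1 i‖ ≤
          ((qc w).2.2 : ℝ) * ‖∑ i ∈ Finset.range n, a i • w.1 i‖}
    rw [h]
    refine isClosed_iInter fun a => isClosed_iInter fun m => isClosed_iInter fun n =>
      isClosed_iInter fun _ => ?_
    refine isClosed_local hqc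
      (fun v => {u : MM X | ‖∑ i ∈ Finset.range m, a i • u.1 i‖ ≤
        ((decQ v).2.2 : ℝ) * ‖∑ i ∈ Finset.range n, a i • u.1 i‖}) (fun v => ?_)
    exact isClosed_le (cont_psum m a) (continuous_const.mul (cont_psum n a))
  apply IsClosed.inter
  · -- weak-null moduli
    show IsClosed {w : MM X | ∀ j m i, w.2 (c3 j m) < i → |(φ j) (w.1 i)| ≤ (1/2:ℝ)^m}
    simp only [Set.setOf_forall]
    refine isClosed_iInter fun j => isClosed_iInter fun m => isClosed_iInter fun i => ?_
    have h1 : IsOpen {w : MM X | w.2 (c3 j m) < i} :=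
      isOpen_coordP (cont_mm_snd _) (fun v => v < i)
    have h2 : IsClosed {w : MM X | |(φ j) (w.1 i)| ≤ (1/2:ℝ)^m} := by
      refine isClosed_le ?_ continuous_const
      exact ((φ j).continuous.comp (cont_mm_fst i)).abs
    exact isClosed_setOf_imp h1 h2
  · show IsClosed {w : MM X | WCauchy w}
    exact isClosed_WCauchy

/-- grid mesh. -/
def gridδ (k n : ℕ) : ℚ := 1 / ((k+1) * 2^n)
/-- grid extent. -/
def gridT (k n : ℕ) : ℤ := (k+1) * 2^n

lemma gridδ_pos (k n : ℕ) : 0 < gridδ k n := by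
  unfold gridδ
  positivity

/-- the finite grid of rational coefficient lists. -/
noncomputable def Grid (k n : ℕ) : Finset (List ℚ) :=
  Finset.image
    (fun v : Fin (k+1) → (Finset.Icc (-(gridT k n)) (gridT k n)) =>
      List.ofFn (fun i => gridδ k n * ((v i : ℤ) : ℚ)))
    Finset.univ

/-- uniform modulus extracted from a pair of witnesses. -/
noncomputable def NN (w w' : MM X) (k n : ℕ) : ℕ :=
  Finset.univ.sup (fun L : {L // L ∈ Grid k n} =>
    max (w.2 (c4 k L.1 n)) (w'.2 (c4 k L.1 n)))

lemma NN_ge₁ {w w' : MM X} {k n : ℕ} {L : List ℚ} (h : L ∈ Grid k n) :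
    w.2 (c4 k L n) ≤ NN w w' k n := by
  have h2 := Finset.le_sup (f := fun L : {L // L ∈ Grid k n} =>
    max (w.2 (c4 k L.1 n)) (w'.2 (c4 k L.1 n))) (Finset.mem_univ ⟨L, h⟩)
  exact le_trans (le_max_left _ _) h2

lemma NN_ge₂ {w w' : MM X} {k n : ℕ} {L : List ℚ} (h : L ∈ Grid k n) :
    w'.2 (c4 k L n) ≤ NN w w' k n := by
  have h2 := Finset.le_sup (f := fun L : {L // L ∈ Grid k n} =>
    max (w.2 (c4 k L.1 n)) (w'.2 (c4 k L.1 n))) (Finset.mem_univ ⟨L, h⟩)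
  exact le_trans (le_max_right _ _) h2

lemma cont_NN (k n : ℕ) : Continuous (fun p : MM X × MM X => NN p.1 p.2 k n) := by
  have h1 : Continuous (fun p : MM X × MM X =>
      (fun L : {L // L ∈ Grid k n} => (p.1.2 (c4 k L.1 n), p.2.2 (c4 k L.1 n)))) :=
    continuous_pi fun L => ((cont_mm_snd _).comp continuous_fst).prodMk
      ((cont_mm_snd _).comp continuous_snd)
  have h2 : Continuous (fun f : {L // L ∈ Grid k n} → ℕ × ℕ =>
      Finset.univ.sup (fun L => max (f L).1 (f L).2)) := continuous_of_discreteTopology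
  exact h2.comp h1

/-- the graded equivalence relation between witnesses. -/
def Erel (W : Set (MM X)) (n : ℕ) : Set (MM X × MM X) :=
  {p | p.1 ∈ W ∧ p.2 ∈ W ∧ ∀ (k : ℕ) (l : ℕ → ℕ), StrictMono l → NN p.1 p.2 k n < l 0 →
    ∀ a : ℕ → ℝ,
      fval p.2.1 k a l ≤ (n+1 : ℝ) * fval p.1.1 k a l ∧
      fval p.1.1 k a l ≤ (n+1 : ℝ) * fval p.2.1 k a l}

lemma isClosed_Erel (W : Set (MM X)) (hW : IsClosed W) (n : ℕ) : IsClosed (Erel W n) := by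
  apply IsClosed.inter (hW.preimage continuous_fst)
  apply IsClosed.inter (hW.preimage continuous_snd)
  show IsClosed {p : MM X × MM X | ∀ (k : ℕ) (l : ℕ → ℕ), StrictMono l →
    NN p.1 p.2 k n < l 0 → ∀ a : ℕ → ℝ,
      fval p.2.1 k a l ≤ (n+1 : ℝ) * fval p.1.1 k a l ∧
      fval p.1.1 k a l ≤ (n+1 : ℝ) * fval p.2.1 k a l}
  simp only [Set.setOf_forall]
  refine isClosed_iInter fun k => isClosed_iInter fun l => isClosed_iInter fun _ => ?_
  have h1 : IsOpen {p : MM X × MM X | NN p.1 p.2 k n < l 0} :=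
    (isOpen_discrete {v : ℕ | v < l 0}).preimage (cont_NN k n)
  have h2 : IsClosed {p : MM X × MM X | ∀ a : ℕ → ℝ,
      fval p.2.1 k a l ≤ (n+1 : ℝ) * fval p.1.1 k a l ∧
      fval p.1.1 k a l ≤ (n+1 : ℝ) * fval p.2.1 k a l} := by
    simp only [Set.setOf_forall]
    refine isClosed_iInter fun a => ?_
    have c1 : Continuous (fun p : MM X × MM X => fval p.1.1 k a l) :=
      (cont_fval k a l).comp (continuous_fst.comp continuous_fst)
    have c2 : Continuous (fun p : MM X × MM X => fval p.2.1 k a l) :=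
      (cont_fval k a l).comp (continuous_fst.comp continuous_snd)
    exact (isClosed_le c2 (continuous_const.mul c1)).inter
      (isClosed_le c1 (continuous_const.mul c2))
  exact isClosed_setOf_imp h1 h2

/-- accumulated (monotone) version of `Erel`. -/
def Fc (W : Set (MM X)) (n : ℕ) : Set (MM X × MM X) := ⋃ i ∈ Set.Iic n, Erel W i

lemma isClosed_Fc (W : Set (MM X)) (hW : IsClosed W) (n : ℕ) : IsClosed (Fc W n) :=
  (Set.finite_Iic n).isClosed_biUnion fun i _ => isClosed_Erel W hW i

lemma Fc_mono (W : Set (MM X)) : Monotone (Fc W) := by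
  intro m n hmn
  exact Set.biUnion_subset_biUnion_left (fun i hi => le_trans hi hmn)

lemma Erel_subset_Fc (W : Set (MM X)) {i n : ℕ} (h : i ≤ n) : Erel W i ⊆ Fc W n :=
  Set.subset_biUnion_of_mem (u := fun i => Erel W i) h

lemma mem_Fc_iff (W : Set (MM X)) (n : ℕ) (p : MM X × MM X) :
    p ∈ Fc W n ↔ ∃ i ≤ n, p ∈ Erel W i := by
  simp [Fc]

end St13

namespace St13

open Finset Filter

variable {X : Type*} [NormedAddCommGroup X] [NormedSpace ℝ X]

lemma gridδ_mul_T (k n : ℕ) : ((gridδ k n : ℚ) : ℝ) * ((gridT k n : ℤ) : ℝ) = 1 := by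
  unfold gridδ gridT
  push_cast
  have h1 : ((k:ℝ) + 1) * 2^n ≠ 0 := by positivity
  field_simp

lemma gridδ_sum (k n : ℕ) : ((k:ℝ)+1) * ((gridδ k n : ℚ) : ℝ) = (1/2:ℝ)^n := by
  unfold gridδ
  push_cast
  have h1 : ((k:ℝ) + 1) ≠ 0 := by positivity
  have h2 : (2:ℝ)^n ≠ 0 := by positivity
  field_simp
  rw [← mul_pow]; norm_num

lemma grid_cover (k n : ℕ) (b : ℕ → ℝ) (hb : ∀ i, i < k+1 → |b i| ≤ 1) :
    ∃ L ∈ Grid k n, ∀ i, i < k+1 → |b i - rQ L i| ≤ ((gridδ k n : ℚ) : ℝ) := by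
  set δ : ℝ := ((gridδ k n : ℚ) : ℝ) with hδdef
  have hδpos : 0 < δ := by
    rw [hδdef]
    exact_mod_cast gridδ_pos k n
  have hδT := gridδ_mul_T k n
  set T : ℤ := gridT k n with hTdef
  have hTpos : (0:ℝ) < (T:ℝ) := by
    nlinarith
  have hbound : ∀ i : Fin (k+1), ⌊b i.1 / δ⌋ ∈ Finset.Icc (-T) T := by
    intro i
    have hb1 : |b i.1| ≤ 1 := hb i.1 i.2
    have h1 : b i.1 / δ ≤ (T:ℝ) := by
      rw [div_le_iff₀ hδpos]
      have : |b i.1| ≤ δ * T := by rw [mul_comm] at hδT ⊢; nlinarith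
      have := abs_le.mp hb1
      nlinarith [abs_le.mp (hb i.1 i.2)]
    have h2 : (-T : ℝ) ≤ b i.1 / δ := by
      rw [le_div_iff₀ hδpos]
      nlinarith [abs_le.mp (hb i.1 i.2)]
    rw [Finset.mem_Icc]
    constructor
    · exact Int.le_floor.mpr (by exact_mod_cast h2)
    · calc ⌊b i.1 / δ⌋ ≤ ⌊(T:ℝ)⌋ := Int.floor_le_floor h1
        _ = T := Int.floor_intCast T
  set v : Fin (k+1) → (Finset.Icc (-(gridT k n)) (gridT k n)) :=
    fun i => ⟨⌊b i.1 / δ⌋, hbound i⟩ with hvdef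
  refine ⟨List.ofFn (fun i => gridδ k n * ((v i : ℤ) : ℚ)), ?_, ?_⟩
  · exact Finset.mem_image.mpr ⟨v, Finset.mem_univ v, rfl⟩
  · intro i hi
    rw [rQ_ofFn _ hi]
    have hval : ((gridδ k n * ((v ⟨i, hi⟩ : ℤ) : ℚ) : ℚ) : ℝ) = δ * (⌊b i / δ⌋ : ℝ) := by
      push_cast
      rfl
    rw [hval]
    have hf1 : (⌊b i / δ⌋ : ℝ) ≤ b i / δ := Int.floor_le _
    have hf2 : b i / δ < (⌊b i / δ⌋ : ℝ) + 1 := Int.lt_floor_add_one _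
    have e1 : δ * (b i / δ) < δ * ((⌊b i / δ⌋ : ℝ) + 1) := mul_lt_mul_of_pos_left hf2 hδpos
    have e2 : δ * (⌊b i / δ⌋ : ℝ) ≤ δ * (b i / δ) := mul_le_mul_of_nonneg_left hf1 (le_of_lt hδpos)
    rw [mul_div_cancel₀ _ (ne_of_gt hδpos)] at e1 e2
    rw [abs_le]
    constructor
    · linarith
    · nlinarith

lemma fval_lip' {x : ℕ → X} {Cb : ℝ} (hb : ∀ i, ‖x i‖ ≤ Cb)
    (k : ℕ) {r r' : ℕ → ℝ} {δ : ℝ} (hδ : ∀ i, i < k+1 → |r i - r' i| ≤ δ) (l : ℕ → ℕ) :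
    |fval x k r l - fval x k r' l| ≤ ((k:ℝ)+1) * δ * Cb := by
  have hCb0 : 0 ≤ Cb := le_trans (norm_nonneg _) (hb 0)
  refine le_trans (fval_lip hb k r r' l) ?_
  calc ∑ i ∈ Finset.range (k+1), |r i - r' i| * Cb
      ≤ ∑ _i ∈ Finset.range (k+1), δ * Cb := by
        refine Finset.sum_le_sum fun i hi => ?_
        exact mul_le_mul_of_nonneg_right (hδ i (Finset.mem_range.mp hi)) hCb0
    _ = ((k:ℝ)+1) * δ * Cb := by
        rw [Finset.sum_const, Finset.card_range, nsmul_eq_mul]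
        push_cast
        ring

lemma NN_comm (w w' : MM X) (k n : ℕ) : NN w w' k n = NN w' w k n := by
  unfold NN
  congr 1
  funext L
  exact max_comm _ _

set_option maxHeartbeats 1000000 in
/-- one-sided transfer of domination from far tuples to all tuples beyond the
uniform modulus. -/
lemma dom_side {w w' : MM X} {cx Cx Cy K C : ℝ}
    (hcx : 0 < cx) (hK : 1 ≤ K) (hC : 1 ≤ C)
    (hxlow : ∀ i, cx ≤ ‖w.1 i‖) (hxhigh : ∀ i, ‖w.1 i‖ ≤ Cx) (hyhigh : ∀ i, ‖w'.1 i‖ ≤ Cy)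
    (hbasic : ∀ (a : ℕ → ℝ) (m n' : ℕ), m ≤ n' →
      ‖∑ i ∈ Finset.range m, a i • w.1 i‖ ≤ K * ‖∑ i ∈ Finset.range n', a i • w.1 i‖)
    (hwc : WCauchy w) (hwc' : WCauchy w')
    {n : ℕ}
    (hQ : (2*C*Cx + C + 2*Cy + 1) * (1/2:ℝ)^n ≤ cx / (2*K))
    (hCn : C + 1 ≤ (n:ℝ) + 1)
    {k : ℕ} {Nk : ℕ}
    (hdom : ∀ l : ℕ → ℕ, StrictMono l → Nk < l 0 → ∀ a : ℕ → ℝ,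
      fval w'.1 k a l ≤ C * fval w.1 k a l)
    {l : ℕ → ℕ} (hl : StrictMono l) (hl0 : NN w w' k n < l 0)
    (a : ℕ → ℝ) :
    fval w'.1 k a l ≤ ((n:ℝ)+1) * fval w.1 k a l := by
  by_cases hz : ∀ i ∈ Finset.range (k+1), a i = 0
  · have h1 : fval w'.1 k a l = 0 := by
      unfold fval
      rw [Finset.sum_eq_zero fun i hi => by rw [hz i hi, zero_smul]]
      exact norm_zero
    rw [h1]
    have h2 : 0 ≤ fval w.1 k a l := fval_nonneg _ _ _ _
    positivity
  push_neg at hz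
  obtain ⟨i₀, hi₀, ha₀⟩ := hz
  have hne : (Finset.range (k+1)).Nonempty := ⟨i₀, hi₀⟩
  set M₀ := (Finset.range (k+1)).sup' hne (fun i => |a i|) with hM₀def
  have hM₀pos : 0 < M₀ :=
    lt_of_lt_of_le (abs_pos.mpr ha₀) (Finset.le_sup' (fun i => |a i|) hi₀)
  obtain ⟨j, hjmem, hjeq⟩ := Finset.exists_mem_eq_sup' hne (fun i => |a i|)
  set b : ℕ → ℝ := fun i => a i / M₀ with hbdef
  have hfa : ∀ (z : ℕ → X) (l' : ℕ → ℕ), fval z k a l' = M₀ * fval z k b l' := by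
    intro z l'
    have h1 : fval z k (fun i => M₀ * b i) l' = |M₀| * fval z k b l' := fval_smul z k b l' M₀
    have h2 : (fun i => M₀ * b i) = a := by
      funext i
      rw [hbdef]
      field_simp
    rw [h2] at h1
    rw [h1, abs_of_pos hM₀pos]
  have hb1 : ∀ i, i < k+1 → |b i| ≤ 1 := by
    intro i hi
    rw [hbdef]
    rw [abs_div, abs_of_pos hM₀pos, div_le_one hM₀pos]
    exact Finset.le_sup' (fun i => |a i|) (Finset.mem_range.mpr hi)
  have hbj : |b j| = 1 := by
    rw [hbdef]
    rw [abs_div, abs_of_pos hM₀pos, ← hjeq, div_self (ne_of_gt hM₀pos)]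
  obtain ⟨L, hLmem, hLc⟩ := grid_cover k n b hb1
  set l'' : ℕ → ℕ := fun i => max Nk (NN w w' k n) + 1 + i with hl''def
  have hl''sm : StrictMono l'' := shift_strictMono _
  have hl''e : l'' 0 = max Nk (NN w w' k n) + 1 := by simp [hl''def]
  have hl''Nk : Nk < l'' 0 := by
    rw [hl''e]
    exact Nat.lt_succ_of_le (le_max_left _ _)
  have hl''NN : NN w w' k n < l'' 0 := by
    rw [hl''e]
    exact Nat.lt_succ_of_le (le_max_right _ _)
  have hμx : w.2 (c4 k L n) ≤ NN w w' k n := NN_ge₁ hLmem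
  have hμy : w'.2 (c4 k L n) ≤ NN w w' k n := NN_ge₂ hLmem
  have cx1 : |fval w.1 k (rQ L) l - fval w.1 k (rQ L) l''| ≤ (1/2:ℝ)^n :=
    hwc k L n l l'' hl hl''sm (lt_of_le_of_lt hμx hl0) (lt_of_le_of_lt hμx hl''NN)
  have cy1 : |fval w'.1 k (rQ L) l - fval w'.1 k (rQ L) l''| ≤ (1/2:ℝ)^n :=
    hwc' k L n l l'' hl hl''sm (lt_of_le_of_lt hμy hl0) (lt_of_le_of_lt hμy hl''NN)
  have hδsum : ((k:ℝ)+1) * ((gridδ k n : ℚ) : ℝ) = (1/2:ℝ)^n := gridδ_sum k n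
  have hCy0 : 0 ≤ Cy := le_trans (norm_nonneg _) (hyhigh 0)
  have hCx0 : 0 ≤ Cx := le_trans (norm_nonneg _) (hxhigh 0)
  have lipx : ∀ l' : ℕ → ℕ, |fval w.1 k b l' - fval w.1 k (rQ L) l'| ≤ (1/2:ℝ)^n * Cx := by
    intro l'
    have h := fval_lip' hxhigh k (r := b) (r' := rQ L) hLc l'
    rwa [hδsum] at h
  have lipy : ∀ l' : ℕ → ℕ, |fval w'.1 k b l' - fval w'.1 k (rQ L) l'| ≤ (1/2:ℝ)^n * Cy := by
    intro l'
    have h := fval_lip' hyhigh k (r := b) (r' := rQ L) hLc l'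
    rwa [hδsum] at h
  -- domination at the far tuple
  have hd : fval w'.1 k b l'' ≤ C * fval w.1 k b l'' := hdom l'' hl''sm hl''Nk b
  -- lower bound for fval w.1 k b l
  have hlow : cx / (2*K) ≤ fval w.1 k b l := by
    have h1 := spread_coeff hbasic k b l hl (Finset.mem_range.mp hjmem)
    rw [hbj, one_mul] at h1
    have h2 : cx ≤ 2 * K * fval w.1 k b l := le_trans (hxlow (l j)) h1
    rw [div_le_iff₀ (by linarith : (0:ℝ) < 2*K)]
    linarith
  -- the chain
  have A1 := abs_sub_le_iff.mp (lipy l)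
  have A2 := abs_sub_le_iff.mp cy1
  have A3 := abs_sub_le_iff.mp (lipy l'')
  have A5 := abs_sub_le_iff.mp (lipx l'')
  have A6 := abs_sub_le_iff.mp cx1
  have A7 := abs_sub_le_iff.mp (lipx l)
  have hpow : (0:ℝ) < (1/2:ℝ)^n := by positivity
  have key : fval w'.1 k b l ≤ C * fval w.1 k b l + (2*C*Cx + C + 2*Cy + 1) * (1/2:ℝ)^n := by
    have e1 : fval w'.1 k b l ≤ fval w'.1 k b l'' + 2*((1/2:ℝ)^n * Cy) + (1/2:ℝ)^n := by
      linarith [A1.1, A2.1, A3.2]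
    have e2 : fval w.1 k b l'' ≤ fval w.1 k b l + (1/2:ℝ)^n + 2*((1/2:ℝ)^n * Cx) := by
      linarith [A5.1, A6.1, A7.2]
    have e3 : C * fval w.1 k b l'' ≤ C * (fval w.1 k b l + (1/2:ℝ)^n + 2*((1/2:ℝ)^n * Cx)) :=
      mul_le_mul_of_nonneg_left e2 (by linarith)
    nlinarith [hd, e1, e3]
  have final : fval w'.1 k b l ≤ ((n:ℝ)+1) * fval w.1 k b l := by
    have h1 : fval w'.1 k b l ≤ C * fval w.1 k b l + cx/(2*K) := by linarith
    have h2 : fval w'.1 k b l ≤ (C+1) * fval w.1 k b l := by nlinarith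
    have h3 : (C+1) * fval w.1 k b l ≤ ((n:ℝ)+1) * fval w.1 k b l :=
      mul_le_mul_of_nonneg_right hCn (fval_nonneg _ _ _ _)
    linarith
  rw [hfa w'.1 l, hfa w.1 l]
  calc M₀ * fval w'.1 k b l ≤ M₀ * (((n:ℝ)+1) * fval w.1 k b l) :=
        mul_le_mul_of_nonneg_left final (le_of_lt hM₀pos)
    _ = ((n:ℝ)+1) * (M₀ * fval w.1 k b l) := by ring


lemma one_le_cast_succ (n : ℕ) : (1:ℝ) ≤ (n:ℝ) + 1 := by
  have : (0:ℝ) ≤ (n:ℝ) := Nat.cast_nonneg n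
  linarith

/-- membership in `Erel` yields equivalence of spreading models. -/
lemma smequiv_of_Erel {W : Set (MM X)} {w w' : MM X} {n : ℕ} (h : (w, w') ∈ Erel W n) :
    SpreadingModelsEquiv w.1 w'.1 := by
  refine ⟨(n:ℝ)+1, one_le_cast_succ n, fun k => ⟨NN w w' k n, fun l hl hl0 a => ?_⟩⟩
  exact h.2.2 k l hl hl0 a

/-- spreading-model-equivalent witnesses are `Erel`-related at some level. -/
lemma exists_Erel {W : Set (MM X)} {w w' : MM X} (hwW : w ∈ W) (hw'W : w' ∈ W)
    {cx cy Cx Cy Kx Ky : ℝ}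
    (hcx : 0 < cx) (hcy : 0 < cy) (hKx : 1 ≤ Kx) (hKy : 1 ≤ Ky)
    (hxlow : ∀ i, cx ≤ ‖w.1 i‖) (hxhigh : ∀ i, ‖w.1 i‖ ≤ Cx)
    (hylow : ∀ i, cy ≤ ‖w'.1 i‖) (hyhigh : ∀ i, ‖w'.1 i‖ ≤ Cy)
    (hbx : ∀ (a : ℕ → ℝ) (m n' : ℕ), m ≤ n' →
      ‖∑ i ∈ Finset.range m, a i • w.1 i‖ ≤ Kx * ‖∑ i ∈ Finset.range n', a i • w.1 i‖)
    (hby : ∀ (a : ℕ → ℝ) (m n' : ℕ), m ≤ n' →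
      ‖∑ i ∈ Finset.range m, a i • w'.1 i‖ ≤ Ky * ‖∑ i ∈ Finset.range n', a i • w'.1 i‖)
    (hwc : WCauchy w) (hwc' : WCauchy w')
    (hsm : SpreadingModelsEquiv w.1 w'.1) :
    ∃ n, (w, w') ∈ Erel W n := by
  obtain ⟨C, hC1, hCk⟩ := hsm
  have hCx0 : 0 ≤ Cx := le_trans (norm_nonneg _) (hxhigh 0)
  have hCy0 : 0 ≤ Cy := le_trans (norm_nonneg _) (hyhigh 0)
  set Q : ℝ := max ((2*C*Cx + C + 2*Cy + 1)) ((2*C*Cy + C + 2*Cx + 1)) with hQdef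
  have hQpos : 0 < Q := by
    have : (1:ℝ) ≤ 2*C*Cx + C + 2*Cy + 1 := by nlinarith
    have h2 : (1:ℝ) ≤ Q := le_trans this (le_max_left _ _)
    linarith
  set t : ℝ := min (cx / (2*Kx)) (cy / (2*Ky)) with htdef
  have ht : 0 < t := lt_min (by positivity) (by positivity)
  obtain ⟨n₀, hn₀⟩ : ∃ n₀ : ℕ, (1/2:ℝ)^n₀ < t / Q :=
    exists_pow_lt_of_lt_one (by positivity) (by norm_num)
  set n : ℕ := max n₀ ⌈C⌉₊ with hndef
  have hpowle : (1/2:ℝ)^n ≤ (1/2:ℝ)^n₀ :=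
    pow_le_pow_of_le_one (by norm_num) (by norm_num) (le_max_left _ _)
  have hQn : Q * (1/2:ℝ)^n ≤ t := by
    have h1 : Q * (1/2:ℝ)^n ≤ Q * (1/2:ℝ)^n₀ := mul_le_mul_of_nonneg_left hpowle (le_of_lt hQpos)
    have h2 : Q * (1/2:ℝ)^n₀ < Q * (t/Q) := mul_lt_mul_of_pos_left hn₀ hQpos
    rw [mul_div_cancel₀ _ (ne_of_gt hQpos)] at h2
    linarith
  have hCn : C + 1 ≤ (n:ℝ) + 1 := by
    have h1 : C ≤ (⌈C⌉₊ : ℝ) := Nat.le_ceil C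
    have h2 : (⌈C⌉₊ : ℝ) ≤ (n:ℝ) := by exact_mod_cast le_max_right n₀ ⌈C⌉₊
    linarith
  have hQx : (2*C*Cx + C + 2*Cy + 1) * (1/2:ℝ)^n ≤ cx / (2*Kx) := by
    have h1 : (2*C*Cx + C + 2*Cy + 1) * (1/2:ℝ)^n ≤ Q * (1/2:ℝ)^n := by
      have : (2*C*Cx + C + 2*Cy + 1) ≤ Q := le_max_left _ _
      have hp : (0:ℝ) ≤ (1/2:ℝ)^n := by positivity
      nlinarith
    exact le_trans h1 (le_trans hQn (min_le_left _ _))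
  have hQy : (2*C*Cy + C + 2*Cx + 1) * (1/2:ℝ)^n ≤ cy / (2*Ky) := by
    have h1 : (2*C*Cy + C + 2*Cx + 1) * (1/2:ℝ)^n ≤ Q * (1/2:ℝ)^n := by
      have : (2*C*Cy + C + 2*Cx + 1) ≤ Q := le_max_right _ _
      have hp : (0:ℝ) ≤ (1/2:ℝ)^n := by positivity
      nlinarith
    exact le_trans h1 (le_trans hQn (min_le_right _ _))
  refine ⟨n, hwW, hw'W, fun k l hl hl0 a => ?_⟩
  obtain ⟨Nk, hNk⟩ := hCk k
  constructor
  · refine dom_side hcx hKx hC1 hxlow hxhigh hyhigh hbx hwc hwc' hQx hCn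
      (Nk := Nk) (fun l' hl' h0 a' => ?_) hl hl0 a
    exact (hNk l' hl' h0 a').1
  · refine dom_side hcy hKy hC1 hylow hyhigh hxhigh hby hwc' hwc hQy hCn
      (Nk := Nk) (fun l' hl' h0 a' => ?_) hl ?_ a
    · exact (hNk l' hl' h0 a').2
    · rw [NN_comm]
      exact hl0

end St13

namespace St13

open Finset Filter

variable {X : Type*} [NormedAddCommGroup X] [NormedSpace ℝ X]

/-- consequences of `Wit1` membership: the first component is a qualifying sequence. -/
lemma wit1_spec (φ : ℕ → StrongDual ℝ X) (hφ : DenseRange φ) {w : MM X}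
    (hw : w ∈ Wit1 φ) :
    Seminormalized w.1 ∧ IsBasicSeq w.1 ∧ WeaklyNull w.1 ∧ GeneratesASpreadingModel w.1 := by
  obtain ⟨h1, h2, h3, h4, h5, h6, h7⟩ := hw
  have hc0 : (0:ℝ) < ((qc w).1 : ℝ) := by exact_mod_cast h1
  have hcC : ((qc w).1 : ℝ) < ((qc w).2.1 : ℝ) := by exact_mod_cast h2
  have hK1 : (1:ℝ) ≤ ((qc w).2.2 : ℝ) := by exact_mod_cast h3
  refine ⟨⟨((qc w).1 : ℝ)/2, ((qc w).2.1 : ℝ)+1, by linarith, by linarith, fun i => ?_⟩, ?_, ?_, ?_⟩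
  · exact ⟨lt_of_lt_of_le (by linarith) (h4 i).1, lt_of_le_of_lt (h4 i).2 (lt_add_one _)⟩
  · refine ⟨fun i h0 => ?_, ⟨((qc w).2.2 : ℝ), hK1, h5⟩⟩
    have := (h4 i).1
    rw [h0, norm_zero] at this
    linarith
  · exact weaklyNull_of_dense (fun i => (h4 i).2) φ hφ (fun j m => w.2 (c3 j m)) h6
  · exact generates_of_cmod (fun i => (h4 i).2) (N := fun k L m => w.2 (c4 k L m)) h7

/-- construction of a witness from a qualifying sequence (Part 1). -/
lemma exists_wit1 (φ : ℕ → StrongDual ℝ X) {x : ℕ → X} (hsn : Seminormalized x)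
    (hb : IsBasicSeq x) (hwn : WeaklyNull x) (hg : GeneratesASpreadingModel x) :
    ∃ μ : ℕ → ℕ, (x, μ) ∈ Wit1 φ := by
  classical
  obtain ⟨c₀, C₀, hc₀, hcC₀, hbounds⟩ := hsn
  obtain ⟨hne, K₀, hK₀, hbasic⟩ := hb
  obtain ⟨cq, hcq1, hcq2⟩ := exists_rat_btwn hc₀
  obtain ⟨Cq, hCq⟩ := exists_rat_gt C₀
  obtain ⟨Kq, hKq⟩ := exists_rat_gt K₀
  have hwn' : ∀ j m : ℕ, ∃ N : ℕ, ∀ i, N < i → |(φ j) (x i)| ≤ (1/2:ℝ)^m := by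
    intro j m
    have := Metric.tendsto_atTop.mp (hwn (φ j)) ((1/2:ℝ)^m) (by positivity)
    obtain ⟨N, hN⟩ := this
    refine ⟨N, fun i hi => ?_⟩
    have := hN i (le_of_lt hi)
    rw [Real.dist_eq, sub_zero] at this
    exact le_of_lt this
  choose N3 hN3 using hwn'
  obtain ⟨N4, hN4⟩ := exists_cmod_of_generates hg
  set μ : ℕ → ℕ := fun p =>
    if p = 0 then Encodable.encode ((cq, Cq, Kq) : ℚ × ℚ × ℚ)
    else if p % 2 = 1 then N3 (Nat.unpair ((p-1)/2)).1 (Nat.unpair ((p-1)/2)).2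
    else match (Encodable.decode ((Nat.unpair ((p-2)/2)).1) : Option (ℕ × List ℚ)) with
      | some (k, L) => N4 k L (Nat.unpair ((p-2)/2)).2
      | none => 0
    with hμdef
  have hμ0 : μ 0 = Encodable.encode ((cq, Cq, Kq) : ℚ × ℚ × ℚ) := by simp [hμdef]
  have hμ3 : ∀ j m, μ (c3 j m) = N3 j m := by
    intro j m
    have e1 : ¬ (c3 j m = 0) := by show ¬ (1 + 2 * Nat.pair j m = 0); omega
    have e2 : (c3 j m) % 2 = 1 := by show (1 + 2 * Nat.pair j m) % 2 = 1; omega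
    have e3 : (c3 j m - 1)/2 = Nat.pair j m := by
      show (1 + 2 * Nat.pair j m - 1)/2 = Nat.pair j m
      omega
    simp only [hμdef, if_neg e1, if_pos e2, e3, Nat.unpair_pair]
  have hμ4 : ∀ k L m, μ (c4 k L m) = N4 k L m := by
    intro k L m
    have e1 : ¬ (c4 k L m = 0) := by
      show ¬ (2 + 2 * Nat.pair (Encodable.encode (k, L)) m = 0); omega
    have e2 : ¬ ((c4 k L m) % 2 = 1) := by
      show ¬ ((2 + 2 * Nat.pair (Encodable.encode (k, L)) m) % 2 = 1); omega
    have e3 : (c4 k L m - 2)/2 = Nat.pair (Encodable.encode (k, L)) m := by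
      show (2 + 2 * Nat.pair (Encodable.encode (k, L)) m - 2)/2 = _
      omega
    simp only [hμdef, if_neg e1, if_neg e2, e3, Nat.unpair_pair, Encodable.encodek]
  have hqc : qc (x, μ) = (cq, Cq, Kq) := by
    unfold qc decQ
    simp only [hμ0, Encodable.encodek, Option.getD_some]
  refine ⟨μ, ?_, ?_, ?_, ?_, ?_, ?_, ?_⟩
  · rw [hqc]
    exact_mod_cast hcq1
  · rw [hqc]
    have : (cq:ℝ) < Cq := by linarith [hbounds 0]
    exact_mod_cast (by linarith [hcq2, hcC₀, hCq] : (cq:ℝ) < (Cq:ℝ))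
  · rw [hqc]
    exact_mod_cast (by linarith : (1:ℝ) ≤ (Kq:ℝ))
  · intro i
    rw [hqc]
    exact ⟨le_of_lt (lt_trans hcq2 (hbounds i).1), le_of_lt (lt_trans (hbounds i).2 hCq)⟩
  · intro a m n hmn
    rw [hqc]
    refine le_trans (hbasic a m n hmn) ?_
    have hn0 : 0 ≤ ‖∑ i ∈ Finset.range n, a i • x i‖ := norm_nonneg _
    nlinarith
  · intro j m i hi
    exact hN3 j m i (lt_of_le_of_lt (le_of_eq (hμ3 j m).symm) hi)
  · intro k L m l l' hl hl' h0 h0'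
    exact hN4 k L m l l' hl hl'
      (lt_of_le_of_lt (le_of_eq (hμ4 k L m).symm) h0)
      (lt_of_le_of_lt (le_of_eq (hμ4 k L m).symm) h0')

end St13

namespace St13

open Finset Filter

variable {X : Type*} [NormedAddCommGroup X] [NormedSpace ℝ X]

section Windows

variable {A B : ℕ → ℕ} (hAB : ∀ n, A n < B n) (hBA : ∀ n, B n ≤ A (n+1))

include hAB hBA

lemma winA_mono : StrictMono A :=
  strictMono_nat_of_lt_succ fun n => lt_of_lt_of_le (hAB n) (hBA n)

lemma winBA_le : ∀ {m n : ℕ}, m < n → B m ≤ A n := by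
  intro m n hmn
  calc B m ≤ A (m+1) := hBA m
    _ ≤ A n := (winA_mono hAB hBA).le_iff_le.mpr hmn

lemma window_unique {p n₀ n : ℕ} (h1 : A n₀ ≤ p) (h2 : p < B n₀)
    (h1' : A n ≤ p) (h2' : p < B n) : n = n₀ := by
  by_contra hne
  rcases Nat.lt_or_ge n n₀ with h | h
  · exact absurd (winBA_le hAB hBA h) (by omega)
  · have : n₀ < n := lt_of_le_of_ne h (Ne.symm hne)
    exact absurd (winBA_le hAB hBA this) (by omega)

lemma window_filter_eq {p n₀ : ℕ} (h1 : A n₀ ≤ p) (h2 : p < B n₀) :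
    (Finset.range (p+1)).filter (fun n => A n ≤ p ∧ p < B n) = {n₀} := by
  ext n
  simp only [Finset.mem_filter, Finset.mem_range, Finset.mem_singleton]
  constructor
  · rintro ⟨_, hA, hB⟩
    exact window_unique hAB hBA h1 h2 hA hB
  · rintro rfl
    refine ⟨?_, h1, h2⟩
    have : n ≤ A n := (winA_mono hAB hBA).le_apply
    omega

lemma window_filter_empty {p : ℕ} (h : ∀ n, ¬(A n ≤ p ∧ p < B n)) :
    (Finset.range (p+1)).filter (fun n => A n ≤ p ∧ p < B n) = ∅ := by
  ext n
  simp only [Finset.mem_filter, Finset.mem_range, Finset.notMem_empty, iff_false, not_and]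
  exact fun _ h1 h2 => h n ⟨h1, h2⟩

end Windows

/-- representation of a span member as an indexed combination. -/
lemma span_Ico_repr {e : ℕ → X} {A B : ℕ} {y : X}
    (hy : y ∈ Submodule.span ℝ (e '' Set.Ico A B)) :
    ∃ γ : ℕ → ℝ, y = ∑ i ∈ Finset.Ico A B, γ i • e i := by
  classical
  obtain ⟨n, f, g, hsum⟩ := Submodule.mem_span_set'.mp hy
  have hg : ∀ i : Fin n, ∃ p : ℕ, p ∈ Finset.Ico A B ∧ e p = (g i : X) := by
    intro i
    obtain ⟨p, hp, hep⟩ := (g i).2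
    exact ⟨p, Finset.mem_Ico.mpr (Set.mem_Ico.mp hp), hep⟩
  choose p hp hep using hg
  refine ⟨fun q => ∑ i ∈ Finset.univ.filter (fun i => p i = q), f i, ?_⟩
  have h1 : ∀ q ∈ Finset.Ico A B,
      (∑ i ∈ Finset.univ.filter (fun i => p i = q), f i) • e q
        = ∑ i ∈ Finset.univ.filter (fun i => p i = q), f i • (g i : X) := by
    intro q _
    rw [Finset.sum_smul]
    refine Finset.sum_congr rfl fun i hi => ?_
    rw [← hep i, (Finset.mem_filter.mp hi).2]
  rw [Finset.sum_congr rfl h1, Finset.sum_fiberwise_of_maps_to (fun i _ => hp i)]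
  exact hsum.symm

set_option maxHeartbeats 800000 in
/-- a block sequence of a basic sequence satisfies the same partial-sum bounds. -/
lemma block_basic {e x : ℕ → X} {K : ℝ}
    (hbe : ∀ (d : ℕ → ℝ) (m n : ℕ), m ≤ n →
      ‖∑ p ∈ Finset.range m, d p • e p‖ ≤ K * ‖∑ p ∈ Finset.range n, d p • e p‖)
    {A B : ℕ → ℕ} (hAB : ∀ n, A n < B n) (hBA : ∀ n, B n ≤ A (n+1))
    {γ : ℕ → ℕ → ℝ} (hx : ∀ n, x n = ∑ i ∈ Finset.Ico (A n) (B n), γ n i • e i) :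
    ∀ (a : ℕ → ℝ) (m n : ℕ), m ≤ n →
      ‖∑ i ∈ Finset.range m, a i • x i‖ ≤ K * ‖∑ i ∈ Finset.range n, a i • x i‖ := by
  intro a m n hmn
  set d : ℕ → ℝ :=
    fun p => ∑ n' ∈ (Finset.range (p+1)).filter (fun n' => A n' ≤ p ∧ p < B n'), a n' * γ n' p
    with hddef
  have key : ∀ m', ∑ p ∈ Finset.range (A m'), d p • e p = ∑ i ∈ Finset.range m', a i • x i := by
    intro m'
    induction m' with
    | zero =>
      simp only [Finset.range_zero, Finset.sum_empty]
      refine Finset.sum_eq_zero fun p hp => ?_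
      have hpA : p < A 0 := Finset.mem_range.mp hp
      have hd0 : d p = 0 := by
        show (∑ n' ∈ (Finset.range (p+1)).filter (fun n' => A n' ≤ p ∧ p < B n'),
          a n' * γ n' p) = 0
        rw [window_filter_empty hAB hBA ?_, Finset.sum_empty]
        intro n' hn'
        have : A 0 ≤ A n' := (winA_mono hAB hBA).le_iff_le.mpr (Nat.zero_le n')
        omega
      rw [hd0, zero_smul]
    | succ m' ih =>
      have hle : A m' ≤ A (m'+1) := le_of_lt ((winA_mono hAB hBA) (Nat.lt_succ_self m'))
      rw [Finset.range_eq_Ico, ← Finset.sum_Ico_consecutive _ (Nat.zero_le (A m')) hle,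
        ← Finset.range_eq_Ico, ih, Finset.sum_range_succ]
      congr 1
      -- middle block
      have hsplit : Finset.Ico (A m') (A (m'+1)) =
          Finset.Ico (A m') (B m') ∪ Finset.Ico (B m') (A (m'+1)) := by
        rw [Finset.Ico_union_Ico_eq_Ico (le_of_lt (hAB m')) (hBA m')]
      rw [hsplit, Finset.sum_union (Finset.Ico_disjoint_Ico_consecutive _ _ _)]
      have hzero : ∑ p ∈ Finset.Ico (B m') (A (m'+1)), d p • e p = 0 := by
        refine Finset.sum_eq_zero fun p hp => ?_
        obtain ⟨hp1, hp2⟩ := Finset.mem_Ico.mp hp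
        have hd0 : d p = 0 := by
          show (∑ n' ∈ (Finset.range (p+1)).filter (fun n' => A n' ≤ p ∧ p < B n'),
            a n' * γ n' p) = 0
          rw [window_filter_empty hAB hBA ?_, Finset.sum_empty]
          intro n'
          rintro ⟨hA', hB'⟩
          rcases Nat.lt_or_ge n' (m'+1) with h | h
          · rcases Nat.lt_or_ge n' m' with h2 | h2
            · have hBB : B n' ≤ A m' := winBA_le hAB hBA h2
              have := hAB m'
              omega
            · have hnm : n' = m' := by omega
              subst hnm
              omega
          · have : A (m'+1) ≤ A n' := (winA_mono hAB hBA).le_iff_le.mpr h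
            omega
        rw [hd0, zero_smul]
      rw [hzero, add_zero]
      have hval : ∀ p ∈ Finset.Ico (A m') (B m'), d p • e p = (a m' * γ m' p) • e p := by
        intro p hp
        obtain ⟨hp1, hp2⟩ := Finset.mem_Ico.mp hp
        congr 1
        show (∑ n' ∈ (Finset.range (p+1)).filter (fun n' => A n' ≤ p ∧ p < B n'),
          a n' * γ n' p) = a m' * γ m' p
        rw [window_filter_eq hAB hBA hp1 hp2, Finset.sum_singleton]
      rw [Finset.sum_congr rfl hval, hx m', Finset.smul_sum]
      refine Finset.sum_congr rfl fun p _ => ?_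
      rw [smul_smul]
  have e1 := hbe d (A m) (A n) ((winA_mono hAB hBA).le_iff_le.mpr hmn)
  rwa [key m, key n] at e1

end St13

namespace St13

open Finset Filter

variable {X : Type*} [NormedAddCommGroup X] [NormedSpace ℝ X]

def c5 (n : ℕ) : ℕ := 1 + 2 * n
def decQ2 (v : ℕ) : ℚ × ℚ := ((Encodable.decode v : Option (ℚ × ℚ)).getD (1, 2))
def qc2 (w : MM X) : ℚ × ℚ := decQ2 (w.2 0)
def decAB (v : ℕ) : ℕ × ℕ := ((Encodable.decode v : Option (ℕ × ℕ)).getD (0, 1))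
def An (w : MM X) (n : ℕ) : ℕ := (decAB (w.2 (c5 n))).1
def Bn (w : MM X) (n : ℕ) : ℕ := (decAB (w.2 (c5 n))).2

/-- witness set for Part 2 (seminormalized block sequences of `e`). -/
def Wit2 (e : ℕ → X) : Set (MM X) :=
  {w | 0 < (qc2 w).1 ∧ (qc2 w).1 < (qc2 w).2 ∧
    (∀ i, ((qc2 w).1 : ℝ) ≤ ‖w.1 i‖ ∧ ‖w.1 i‖ ≤ ((qc2 w).2 : ℝ)) ∧
    (∀ n, An w n < Bn w n) ∧ (∀ n, Bn w n ≤ An w (n+1)) ∧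
    (∀ n, w.1 n ∈ Submodule.span ℝ (e '' Set.Ico (An w n) (Bn w n))) ∧
    WCauchy w}

lemma isClosed_coordP2 {α : Type*} [TopologicalSpace α] {f g : α → ℕ}
    (hf : Continuous f) (hg : Continuous g) (P : ℕ → ℕ → Prop) :
    IsClosed {x | P (f x) (g x)} :=
  (isClosed_discrete {q : ℕ × ℕ | P q.1 q.2}).preimage (hf.prodMk hg)

lemma isClosed_Wit2 [CompleteSpace X] (e : ℕ → X) : IsClosed (Wit2 e) := by
  have hqc : Continuous (fun w : MM X => w.2 0) := cont_mm_snd 0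
  apply IsClosed.inter
  · exact isClosed_coordP hqc (fun v => 0 < (decQ2 v).1)
  apply IsClosed.inter
  · exact isClosed_coordP hqc (fun v => (decQ2 v).1 < (decQ2 v).2)
  apply IsClosed.inter
  · have h : {w : MM X | ∀ i, ((qc2 w).1 : ℝ) ≤ ‖w.1 i‖ ∧ ‖w.1 i‖ ≤ ((qc2 w).2 : ℝ)} =
        ⋂ i, {w : MM X |
          w ∈ {u : MM X | (((decQ2 (w.2 0)).1 : ℝ) ≤ ‖u.1 i‖ ∧ ‖u.1 i‖ ≤ ((decQ2 (w.2 0)).2 : ℝ))}} := by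
      ext w
      simp only [Set.mem_setOf_eq, Set.mem_iInter, qc2]
    show IsClosed {w : MM X | ∀ i, ((qc2 w).1 : ℝ) ≤ ‖w.1 i‖ ∧ ‖w.1 i‖ ≤ ((qc2 w).2 : ℝ)}
    rw [h]
    refine isClosed_iInter fun i => ?_
    refine isClosed_local hqc
      (fun v => {u : MM X | ((decQ2 v).1 : ℝ) ≤ ‖u.1 i‖ ∧ ‖u.1 i‖ ≤ ((decQ2 v).2 : ℝ)})
      (fun v => ?_)
    exact (isClosed_le continuous_const (cont_mm_fst i).norm).inter
      (isClosed_le (cont_mm_fst i).norm continuous_const)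
  apply IsClosed.inter
  · show IsClosed {w : MM X | ∀ n, An w n < Bn w n}
    simp only [Set.setOf_forall]
    refine isClosed_iInter fun n => ?_
    exact isClosed_coordP (cont_mm_snd (c5 n)) (fun v => (decAB v).1 < (decAB v).2)
  apply IsClosed.inter
  · show IsClosed {w : MM X | ∀ n, Bn w n ≤ An w (n+1)}
    simp only [Set.setOf_forall]
    refine isClosed_iInter fun n => ?_
    exact isClosed_coordP2 (cont_mm_snd (c5 n)) (cont_mm_snd (c5 (n+1)))
      (fun v v' => (decAB v).2 ≤ (decAB v').1)
  apply IsClosed.inter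
  · show IsClosed {w : MM X | ∀ n, w.1 n ∈ Submodule.span ℝ (e '' Set.Ico (An w n) (Bn w n))}
    simp only [Set.setOf_forall]
    refine isClosed_iInter fun n => ?_
    have h : {w : MM X | w.1 n ∈ Submodule.span ℝ (e '' Set.Ico (An w n) (Bn w n))} =
        {w : MM X | w ∈ {u : MM X |
          u.1 n ∈ Submodule.span ℝ (e '' Set.Ico (decAB (w.2 (c5 n))).1 (decAB (w.2 (c5 n))).2)}} := by
      ext w
      simp only [Set.mem_setOf_eq, An, Bn]
    rw [h]
    refine isClosed_local (cont_mm_snd (c5 n))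
      (fun v => {u : MM X |
        u.1 n ∈ Submodule.span ℝ (e '' Set.Ico (decAB v).1 (decAB v).2)}) (fun v => ?_)
    haveI : FiniteDimensional ℝ
        (Submodule.span ℝ (e '' Set.Ico (decAB v).1 (decAB v).2)) :=
      FiniteDimensional.span_of_finite ℝ ((Set.finite_Ico _ _).image e)
    exact (Submodule.closed_of_finiteDimensional _).preimage (cont_mm_fst n)
  · show IsClosed {w : MM X | WCauchy w}
    exact isClosed_WCauchy

/-- consequences of `Wit2` membership. -/
lemma wit2_spec {e : ℕ → X} {Ke : ℝ}
    (hbe : ∀ (d : ℕ → ℝ) (m n : ℕ), m ≤ n →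
      ‖∑ p ∈ Finset.range m, d p • e p‖ ≤ Ke * ‖∑ p ∈ Finset.range n, d p • e p‖)
    {w : MM X} (hw : w ∈ Wit2 e) :
    IsBlockSeq e w.1 ∧ Seminormalized w.1 ∧ GeneratesASpreadingModel w.1 ∧
    (∀ (a : ℕ → ℝ) (m n : ℕ), m ≤ n →
      ‖∑ i ∈ Finset.range m, a i • w.1 i‖ ≤ Ke * ‖∑ i ∈ Finset.range n, a i • w.1 i‖) := by
  classical
  obtain ⟨h1, h2, h3, h4, h5, h6, h7⟩ := hw
  have hc0 : (0:ℝ) < ((qc2 w).1 : ℝ) := by exact_mod_cast h1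
  have hcC : ((qc2 w).1 : ℝ) < ((qc2 w).2 : ℝ) := by exact_mod_cast h2
  have hγ : ∀ n, ∃ γ : ℕ → ℝ, w.1 n = ∑ i ∈ Finset.Ico (An w n) (Bn w n), γ i • e i :=
    fun n => span_Ico_repr (h6 n)
  choose γ hγ using hγ
  have hxrep : ∀ n, w.1 n = ∑ i ∈ Finset.Ico (An w n) (Bn w n), (fun n => γ n) n i • e i :=
    fun n => hγ n
  refine ⟨?_, ?_, ?_, ?_⟩
  · -- block sequence
    set c : ℕ → ℝ := fun i =>
      ∑ n' ∈ (Finset.range (i+1)).filter (fun n' => An w n' ≤ i ∧ i < Bn w n'), γ n' i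
      with hcdef
    refine ⟨An w, Bn w, c, h4, h5, fun n => ?_⟩
    rw [hγ n]
    refine Finset.sum_congr rfl fun i hi => ?_
    obtain ⟨hi1, hi2⟩ := Finset.mem_Ico.mp hi
    have hc : c i = γ n i := by
      show (∑ n' ∈ (Finset.range (i+1)).filter (fun n' => An w n' ≤ i ∧ i < Bn w n'), γ n' i)
        = γ n i
      rw [window_filter_eq h4 h5 hi1 hi2, Finset.sum_singleton]
    rw [hc]
  · exact ⟨((qc2 w).1 : ℝ)/2, ((qc2 w).2 : ℝ)+1, by linarith, by linarith, fun i =>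
      ⟨lt_of_lt_of_le (by linarith) (h3 i).1, lt_of_le_of_lt (h3 i).2 (lt_add_one _)⟩⟩
  · exact generates_of_cmod (fun i => (h3 i).2) (N := fun k L m => w.2 (c4 k L m)) h7
  · exact block_basic hbe h4 h5 hγ

/-- construction of a witness from a qualifying block sequence (Part 2). -/
lemma exists_wit2 {e x : ℕ → X} (hbl : IsBlockSeq e x) (hsn : Seminormalized x)
    (hg : GeneratesASpreadingModel x) : ∃ μ : ℕ → ℕ, (x, μ) ∈ Wit2 e := by
  classical
  obtain ⟨A, B, cc, hAB, hBA, hrep⟩ := hbl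
  obtain ⟨c₀, C₀, hc₀, hcC₀, hbounds⟩ := hsn
  obtain ⟨cq, hcq1, hcq2⟩ := exists_rat_btwn hc₀
  obtain ⟨Cq, hCq⟩ := exists_rat_gt C₀
  obtain ⟨N4, hN4⟩ := exists_cmod_of_generates hg
  set μ : ℕ → ℕ := fun p =>
    if p = 0 then Encodable.encode ((cq, Cq) : ℚ × ℚ)
    else if p % 2 = 1 then Encodable.encode ((A ((p-1)/2), B ((p-1)/2)) : ℕ × ℕ)
    else match (Encodable.decode ((Nat.unpair ((p-2)/2)).1) : Option (ℕ × List ℚ)) with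
      | some (k, L) => N4 k L (Nat.unpair ((p-2)/2)).2
      | none => 0
    with hμdef
  have hμ0 : μ 0 = Encodable.encode ((cq, Cq) : ℚ × ℚ) := by simp [hμdef]
  have hμ5 : ∀ n, μ (c5 n) = Encodable.encode ((A n, B n) : ℕ × ℕ) := by
    intro n
    have e1 : ¬ (c5 n = 0) := by show ¬ (1 + 2*n = 0); omega
    have e2 : (c5 n) % 2 = 1 := by show (1 + 2*n) % 2 = 1; omega
    have e3 : (c5 n - 1)/2 = n := by show (1 + 2*n - 1)/2 = n; omega
    simp only [hμdef, if_neg e1, if_pos e2, e3]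
  have hμ4 : ∀ k L m, μ (c4 k L m) = N4 k L m := by
    intro k L m
    have e1 : ¬ (c4 k L m = 0) := by
      show ¬ (2 + 2 * Nat.pair (Encodable.encode (k, L)) m = 0); omega
    have e2 : ¬ ((c4 k L m) % 2 = 1) := by
      show ¬ ((2 + 2 * Nat.pair (Encodable.encode (k, L)) m) % 2 = 1); omega
    have e3 : (c4 k L m - 2)/2 = Nat.pair (Encodable.encode (k, L)) m := by
      show (2 + 2 * Nat.pair (Encodable.encode (k, L)) m - 2)/2 = _
      omega
    simp only [hμdef, if_neg e1, if_neg e2, e3, Nat.unpair_pair, Encodable.encodek]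
  have hqc : qc2 (x, μ) = (cq, Cq) := by
    unfold qc2 decQ2
    simp only [hμ0, Encodable.encodek, Option.getD_some]
  have hAn : ∀ n, An (x, μ) n = A n := by
    intro n
    unfold An decAB
    simp only [hμ5, Encodable.encodek, Option.getD_some]
  have hBn : ∀ n, Bn (x, μ) n = B n := by
    intro n
    unfold Bn decAB
    simp only [hμ5, Encodable.encodek, Option.getD_some]
  refine ⟨μ, ?_, ?_, ?_, ?_, ?_, ?_, ?_⟩
  · rw [hqc]
    exact_mod_cast hcq1
  · rw [hqc]
    exact_mod_cast (by linarith : (cq:ℝ) < (Cq:ℝ))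
  · intro i
    rw [hqc]
    exact ⟨le_of_lt (lt_trans hcq2 (hbounds i).1), le_of_lt (lt_trans (hbounds i).2 hCq)⟩
  · intro n
    rw [hAn, hBn]
    exact hAB n
  · intro n
    rw [hAn, hBn]
    exact hBA n
  · intro n
    rw [hAn, hBn]
    show x n ∈ _
    rw [hrep n]
    refine Submodule.sum_mem _ fun i hi => ?_
    exact Submodule.smul_mem _ _ (Submodule.subset_span
      (Set.mem_image_of_mem e (Set.mem_Ico.mpr (Finset.mem_Ico.mp hi))))
  · intro k L m l l' hl hl' h0 h0'
    exact hN4 k L m l l' hl hl'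
      (lt_of_le_of_lt (le_of_eq (hμ4 k L m).symm) h0)
      (lt_of_le_of_lt (le_of_eq (hμ4 k L m).symm) h0')

end St13

namespace St13

open Finset Filter

noncomputable def realEmb : ℝ ↪ (ℕ → Bool) := by
  have h : Cardinal.mk ℝ ≤ Cardinal.mk (ℕ → Bool) := by
    rw [Cardinal.mk_real, Cardinal.mk_arrow]
    simp [Cardinal.two_power_aleph0]
  exact Classical.choice (Cardinal.le_def _ _ |>.mp h)

variable {X : Type*} [NormedAddCommGroup X] [NormedSpace ℝ X]

lemma wit1_raw (φ : ℕ → StrongDual ℝ X) {w : MM X} (hw : w ∈ Wit1 φ) :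
    (0:ℝ) < ((qc w).1 : ℝ) ∧ (1:ℝ) ≤ ((qc w).2.2 : ℝ) ∧
    (∀ i, ((qc w).1 : ℝ) ≤ ‖w.1 i‖) ∧ (∀ i, ‖w.1 i‖ ≤ ((qc w).2.1 : ℝ)) ∧
    (∀ (a : ℕ → ℝ) (m n' : ℕ), m ≤ n' →
      ‖∑ i ∈ Finset.range m, a i • w.1 i‖ ≤
        ((qc w).2.2 : ℝ) * ‖∑ i ∈ Finset.range n', a i • w.1 i‖) ∧
    WCauchy w := by
  obtain ⟨h1, h2, h3, h4, h5, h6, h7⟩ := hw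
  exact ⟨by exact_mod_cast h1, by exact_mod_cast h3, fun i => (h4 i).1, fun i => (h4 i).2, h5, h7⟩

theorem part1 [CompleteSpace X] [TopologicalSpace.SeparableSpace X]
    (hd : TopologicalSpace.SeparableSpace (StrongDual ℝ X)) :
    (∃ F : ℝ → (ℕ → X),
      (∀ t, Seminormalized (F t) ∧ IsBasicSeq (F t) ∧ WeaklyNull (F t) ∧
        GeneratesASpreadingModel (F t)) ∧
      ∀ s t : ℝ, s ≠ t → ¬ SpreadingModelsEquiv (F s) (F t)) ∨
    (∃ D : ℕ → (ℕ → X),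
      ∀ x : ℕ → X, Seminormalized x → IsBasicSeq x → WeaklyNull x →
        GeneratesASpreadingModel x →
        ∃ n : ℕ, Seminormalized (D n) ∧ IsBasicSeq (D n) ∧ WeaklyNull (D n) ∧
          GeneratesASpreadingModel (D n) ∧ SpreadingModelsEquiv x (D n)) := by
  classical
  haveI := hd
  haveI : Nonempty (StrongDual ℝ X) := ⟨0⟩
  obtain ⟨φ, hφ⟩ := TopologicalSpace.exists_dense_seq (StrongDual ℝ X)
  haveI : Nonempty (MM X) := ⟨(fun _ => 0, fun _ => 0)⟩
  have hscheme := scheme (M := MM X) (Wit1 φ) (isClosed_Wit1 φ) (Fc (Wit1 φ))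
    (isClosed_Fc _ (isClosed_Wit1 φ)) (Fc_mono _)
  rcases hscheme with ⟨G, hGW, hGsep⟩ | ⟨D, hD⟩
  · left
    refine ⟨fun t => (G (realEmb t)).1, fun t => wit1_spec φ hφ (hGW (realEmb t)), ?_⟩
    intro s t hst hsm
    have hw := hGW (realEmb s)
    have hw' := hGW (realEmb t)
    obtain ⟨h1, h2, h3, h4, h5, h6⟩ := wit1_raw φ hw
    obtain ⟨h1', h2', h3', h4', h5', h6'⟩ := wit1_raw φ hw'
    obtain ⟨n, hn⟩ := exists_Erel hw hw' h1 h1' h2 h2' h3 h4 h3' h4' h5 h5' h6 h6' hsm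
    exact hGsep (realEmb s) (realEmb t) (fun h => hst (realEmb.injective h)) n
      (Erel_subset_Fc _ (le_refl n) hn)
  · right
    refine ⟨fun i => if h : D i ∈ Wit1 φ then (D i).1 else (fun _ => 0), ?_⟩
    intro x hsn hb hwn hg
    obtain ⟨μ, hμ⟩ := exists_wit1 φ hsn hb hwn hg
    obtain ⟨i, n, hin⟩ := hD (x, μ) hμ
    obtain ⟨n', _, hn'⟩ := (mem_Fc_iff _ _ _).mp hin
    have hDiW : D i ∈ Wit1 φ := hn'.2.1
    have hspec := wit1_spec φ hφ hDiW
    have hsmeq : SpreadingModelsEquiv x (D i).1 := smequiv_of_Erel hn'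
    refine ⟨i, ?_, ?_, ?_, ?_, ?_⟩
    · simp only [dif_pos hDiW]; exact hspec.1
    · simp only [dif_pos hDiW]; exact hspec.2.1
    · simp only [dif_pos hDiW]; exact hspec.2.2.1
    · simp only [dif_pos hDiW]; exact hspec.2.2.2
    · simp only [dif_pos hDiW]; exact hsmeq

end St13

namespace St13

open Finset Filter

variable {X : Type*} [NormedAddCommGroup X] [NormedSpace ℝ X]

theorem part2 [CompleteSpace X] [TopologicalSpace.SeparableSpace X]
    (e : ℕ → X) (hbe : IsBasicSeq e) :
    (∃ F : ℝ → (ℕ → X),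
      (∀ t, IsBlockSeq e (F t) ∧ Seminormalized (F t) ∧
        GeneratesASpreadingModel (F t)) ∧
      ∀ s t : ℝ, s ≠ t → ¬ SpreadingModelsEquiv (F s) (F t)) ∨
    (∃ D : ℕ → (ℕ → X),
      ∀ x : ℕ → X, IsBlockSeq e x → Seminormalized x → GeneratesASpreadingModel x →
        ∃ n : ℕ, IsBlockSeq e (D n) ∧ Seminormalized (D n) ∧
          GeneratesASpreadingModel (D n) ∧ SpreadingModelsEquiv x (D n)) := by
  classical
  obtain ⟨hne, Ke, hKe1, hbasicE⟩ := hbe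
  haveI : Nonempty (MM X) := ⟨(fun _ => 0, fun _ => 0)⟩
  have hscheme := scheme (M := MM X) (Wit2 e) (isClosed_Wit2 e) (Fc (Wit2 e))
    (isClosed_Fc _ (isClosed_Wit2 e)) (Fc_mono _)
  rcases hscheme with ⟨G, hGW, hGsep⟩ | ⟨D, hD⟩
  · left
    refine ⟨fun t => (G (realEmb t)).1, fun t => ?_, ?_⟩
    · have hspec := wit2_spec hbasicE (hGW (realEmb t))
      exact ⟨hspec.1, hspec.2.1, hspec.2.2.1⟩
    intro s t hst hsm
    have hw := hGW (realEmb s)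
    have hw' := hGW (realEmb t)
    have hspec := wit2_spec hbasicE hw
    have hspec' := wit2_spec hbasicE hw'
    obtain ⟨h1, h2, h3, h4, h5, h6, h7⟩ := hw
    obtain ⟨h1', h2', h3', h4', h5', h6', h7'⟩ := hw'
    obtain ⟨n, hn⟩ := exists_Erel (hGW (realEmb s)) (hGW (realEmb t))
      (by exact_mod_cast h1) (by exact_mod_cast h1') hKe1 hKe1
      (fun i => (h3 i).1) (fun i => (h3 i).2) (fun i => (h3' i).1) (fun i => (h3' i).2)
      hspec.2.2.2 hspec'.2.2.2 h7 h7' hsm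
    exact hGsep (realEmb s) (realEmb t) (fun h => hst (realEmb.injective h)) n
      (Erel_subset_Fc _ (le_refl n) hn)
  · right
    refine ⟨fun i => if h : D i ∈ Wit2 e then (D i).1 else (fun _ => 0), ?_⟩
    intro x hbl hsn hg
    obtain ⟨μ, hμ⟩ := exists_wit2 hbl hsn hg
    obtain ⟨i, n, hin⟩ := hD (x, μ) hμ
    obtain ⟨n', _, hn'⟩ := (mem_Fc_iff _ _ _).mp hin
    have hDiW : D i ∈ Wit2 e := hn'.2.1
    have hspec := wit2_spec hbasicE hDiW
    have hsmeq : SpreadingModelsEquiv x (D i).1 := smequiv_of_Erel hn'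
    refine ⟨i, ?_, ?_, ?_, ?_⟩
    · simp only [dif_pos hDiW]; exact hspec.1
    · simp only [dif_pos hDiW]; exact hspec.2.1
    · simp only [dif_pos hDiW]; exact hspec.2.2.1
    · simp only [dif_pos hDiW]; exact hsmeq

end St13

/-- Let `X` be a separable Banach space. If `X*` is separable, the
Silver dichotomy holds for spreading models generated by weakly null seminormalized
basic sequences; if `X` has a Schauder basis, it holds for spreading models generated
by (seminormalized) block basic sequences of the basis. -/
theorem statement13 {X : Type*} [NormedAddCommGroup X] [NormedSpace ℝ X] [CompleteSpace X]
    [TopologicalSpace.SeparableSpace X] :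
    (TopologicalSpace.SeparableSpace (StrongDual ℝ X) →
      ((∃ F : ℝ → (ℕ → X),
        (∀ t, Seminormalized (F t) ∧ IsBasicSeq (F t) ∧ WeaklyNull (F t) ∧
          GeneratesASpreadingModel (F t)) ∧
        ∀ s t : ℝ, s ≠ t → ¬ SpreadingModelsEquiv (F s) (F t)) ∨
      (∃ D : ℕ → (ℕ → X),
        ∀ x : ℕ → X, Seminormalized x → IsBasicSeq x → WeaklyNull x →
          GeneratesASpreadingModel x →
          ∃ n : ℕ, Seminormalized (D n) ∧ IsBasicSeq (D n) ∧ WeaklyNull (D n) ∧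
            GeneratesASpreadingModel (D n) ∧ SpreadingModelsEquiv x (D n)))) ∧
    (∀ e : ℕ → X, IsBasicSeq e →
      Dense (Submodule.span ℝ (Set.range e) : Set X) →
      ((∃ F : ℝ → (ℕ → X),
        (∀ t, IsBlockSeq e (F t) ∧ Seminormalized (F t) ∧
          GeneratesASpreadingModel (F t)) ∧
        ∀ s t : ℝ, s ≠ t → ¬ SpreadingModelsEquiv (F s) (F t)) ∨
      (∃ D : ℕ → (ℕ → X),
        ∀ x : ℕ → X, IsBlockSeq e x → Seminormalized x → GeneratesASpreadingModel x →
          ∃ n : ℕ, IsBlockSeq e (D n) ∧ Seminormalized (D n) ∧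
            GeneratesASpreadingModel (D n) ∧ SpreadingModelsEquiv x (D n)))) := by
  constructor
  · intro hd
    exact St13.part1 hd
  · intro e hbe _
    exact St13.part2 e hbe
end
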